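/- arXiv:2403.06971 — 9 statements merged into one kernel-verified Lean document; each statement's English description precedes it below -/
import Mathlib

section
/- The pure minimax regret in the linear MSE setting equals the (r+1)-th eigenvalue of Σ^{1/2} S Σ^{1/2}: the infimum over all R ∈ ℝ^{d×r} with Rᵀ Σ R invertible of the supremum over f ∈ F_S of regret(R, f) equals λ_{r+1}(Σ^{1/2} S Σ^{1/2}). -/
open Matrix

lemma quad_conj {n m : Type*} [Fintype n] [Fintype m] (W : Matrix n m ℝ) (A : Matrix n n ℝ)
    (x : m → ℝ) : (W *ᵥ x) ⬝ᵥ (A *ᵥ (W *ᵥ x)) = x ⬝ᵥ ((Wᵀ * A * W) *ᵥ x) := by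
  rw [← mulVec_mulVec, ← vecMul_transpose, dotProduct_mulVec, dotProduct_mulVec,
    vecMul_vecMul]

lemma quad_smul {n : Type*} [Fintype n] (A : Matrix n n ℝ) (c : ℝ) (v : n → ℝ) :
    (c • v) ⬝ᵥ (A *ᵥ (c • v)) = c ^ 2 * (v ⬝ᵥ (A *ᵥ v)) := by
  rw [mulVec_smul, smul_dotProduct, dotProduct_smul, smul_eq_mul, smul_eq_mul]
  ring

lemma psd_nonneg {n : Type*} [Fintype n] {A : Matrix n n ℝ} (h : A.PosSemidef) (x : n → ℝ) :
    0 ≤ x ⬝ᵥ (A *ᵥ x) := by simpa using h.dotProduct_mulVec_nonneg x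

lemma psd_quad_le {n : Type*} [Fintype n] {X Y : Matrix n n ℝ} (h : (X - Y).PosSemidef)
    (f : n → ℝ) : f ⬝ᵥ (Y *ᵥ f) ≤ f ⬝ᵥ (X *ᵥ f) := by
  have := psd_nonneg h f
  rw [sub_mulVec, dotProduct_sub] at this
  linarith

lemma psd_conj {n m : Type*} [Fintype n] [Fintype m] [DecidableEq n] [DecidableEq m]
    {A : Matrix n n ℝ} (h : A.PosSemidef) (B : Matrix m n ℝ) : (B * A * Bᵀ).PosSemidef := by
  simpa [conjTranspose_eq_transpose_of_trivial] using h.mul_mul_conjTranspose_same B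

/-- In the linear MSE setting, the pure minimax regret equals
`λ_{r+1}(Σ^{1/2} S Σ^{1/2})` (0-based: `lam r`), where `lam : ℕ → ℝ` lists the eigenvalues
of `Σ^{1/2} S Σ^{1/2}` in nonincreasing order (encoded via an orthogonal diagonalization),
`Sigh` denotes the symmetric positive definite square root `Σ^{1/2}`, the class `F_S` is
`{f : fᵀ S⁻¹ f ≤ 1}`, and `regret(R, f) = fᵀ (Σ − Σ R (Rᵀ Σ R)⁻¹ Rᵀ Σ) f`. -/
theorem stmt0 (d r : ℕ) (hr : 0 < r) (hrd : r < d)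
    (Sig S : Matrix (Fin d) (Fin d) ℝ)
    (hSig : Sig.PosDef) (hS : S.PosDef)
    (Sigh : Matrix (Fin d) (Fin d) ℝ)
    (hSigh : Sigh.PosDef) (hSighsq : Sigh * Sigh = Sig)
    (lam : ℕ → ℝ)
    (hmono : ∀ i j : ℕ, i ≤ j → j < d → lam j ≤ lam i)
    (V : Matrix (Fin d) (Fin d) ℝ) (hV : V * Vᵀ = 1)
    (hdiag : Sigh * S * Sigh = V * Matrix.diagonal (fun i : Fin d => lam i.val) * Vᵀ) :
    sInf { v : ℝ | ∃ R : Matrix (Fin d) (Fin r) ℝ,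
        IsUnit (Rᵀ * Sig * R).det ∧
        v = sSup { w : ℝ | ∃ f : Fin d → ℝ,
            f ⬝ᵥ (S⁻¹ *ᵥ f) ≤ 1 ∧
            w = f ⬝ᵥ ((Sig - Sig * R * (Rᵀ * Sig * R)⁻¹ * Rᵀ * Sig) *ᵥ f) } }
      = lam r := by
  classical
  have hSight : Sighᵀ = Sigh := by
    have := hSigh.isHermitian
    rwa [Matrix.IsHermitian, conjTranspose_eq_transpose_of_trivial] at this
  have hVtV : Vᵀ * V = 1 := mul_eq_one_comm.mp hV
  have hSighdet : IsUnit Sigh.det := hSigh.det_pos.ne'.isUnit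
  have hSS : Sigh * Sigh⁻¹ = 1 := mul_nonsing_inv _ hSighdet
  have hSS' : Sigh⁻¹ * Sigh = 1 := nonsing_inv_mul _ hSighdet
  -- cancellation simp lemmas
  have c1 : ∀ (m : Type) (Z : Matrix (Fin d) m ℝ), Sigh⁻¹ * (Sigh * Z) = Z := fun m Z => by
    rw [← Matrix.mul_assoc, hSS', Matrix.one_mul]
  have c2 : ∀ (m : Type) (Z : Matrix (Fin d) m ℝ), Sigh * (Sigh⁻¹ * Z) = Z := fun m Z => by
    rw [← Matrix.mul_assoc, hSS, Matrix.one_mul]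
  have c3 : ∀ (m : Type) (Z : Matrix (Fin d) m ℝ), Vᵀ * (V * Z) = Z := fun m Z => by
    rw [← Matrix.mul_assoc, hVtV, Matrix.one_mul]
  have c4 : ∀ (m : Type) (Z : Matrix (Fin d) m ℝ), V * (Vᵀ * Z) = Z := fun m Z => by
    rw [← Matrix.mul_assoc, hV, Matrix.one_mul]
  set W : Matrix (Fin d) (Fin d) ℝ := Sigh⁻¹ * V with hW
  have hWt : Wᵀ = Vᵀ * Sigh⁻¹ := by
    rw [hW, transpose_mul, transpose_nonsing_inv, hSight]
  set G : (Fin d → ℝ) → Matrix (Fin d) (Fin d) ℝ :=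
    fun c => Sigh * (V * diagonal c * Vᵀ) * Sigh with hGdef
  have hWGW : ∀ c, Wᵀ * G c * W = diagonal c := by
    intro c
    rw [hWt]
    simp only [hGdef, hW, hWt, Matrix.mul_assoc, c1, c2, c3, c4, hVtV, hV,
      Matrix.mul_one, Matrix.one_mul]
  -- positivity of eigenvalues
  have hSighinj : ∀ x : Fin d → ℝ, x ≠ 0 → Sigh *ᵥ x ≠ 0 := by
    intro x hx h
    apply hx
    have : Sigh⁻¹ *ᵥ (Sigh *ᵥ x) = Sigh⁻¹ *ᵥ 0 := by rw [h]
    rwa [mulVec_mulVec, hSS', one_mulVec, mulVec_zero] at this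
  have hVinj : ∀ x : Fin d → ℝ, x ≠ 0 → V *ᵥ x ≠ 0 := by
    intro x hx h
    apply hx
    have : Vᵀ *ᵥ (V *ᵥ x) = Vᵀ *ᵥ 0 := by rw [h]
    rwa [mulVec_mulVec, hVtV, one_mulVec, mulVec_zero] at this
  have hM : (Sigh * S * Sigh).PosDef := by
    refine Matrix.PosDef.of_dotProduct_mulVec_pos ?_ ?_
    · rw [Matrix.IsHermitian, conjTranspose_eq_transpose_of_trivial, transpose_mul,
        transpose_mul, hSight]
      rw [show Sᵀ = S from by
        have := hS.isHermitian
        rwa [Matrix.IsHermitian, conjTranspose_eq_transpose_of_trivial] at this]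
      rw [Matrix.mul_assoc]
    · intro x hx
      have h2 := hS.dotProduct_mulVec_pos (hSighinj x hx)
      simp only [star_trivial] at h2 ⊢
      rwa [quad_conj Sigh S x, hSight] at h2
  have hVMV : Vᵀ * (Sigh * S * Sigh) * V = diagonal (fun i : Fin d => lam i.val) := by
    rw [hdiag]
    simp only [Matrix.mul_assoc, c3, c4, hVtV, hV, Matrix.mul_one, Matrix.one_mul]
  have hsingle : ∀ (c : Fin d → ℝ) (i : Fin d),
      (Pi.single i 1 : Fin d → ℝ) ⬝ᵥ (diagonal c *ᵥ (Pi.single i 1)) = c i := by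
    intro c i
    simp [dotProduct, mulVec_diagonal, Pi.single_apply]
  have hlam_pos : ∀ i : Fin d, 0 < lam i.val := by
    intro i
    have hne : (Pi.single i 1 : Fin d → ℝ) ≠ 0 := by
      intro h
      have := congrFun h i
      simp at this
    have h2 := hM.dotProduct_mulVec_pos (hVinj _ hne)
    simp only [star_trivial] at h2
    rwa [quad_conj V (Sigh * S * Sigh) (Pi.single i 1), hVMV, hsingle] at h2
  -- S⁻¹ as a G matrix
  set linv : Fin d → ℝ := fun i => (lam i.val)⁻¹ with hlinv
  have hDD : ∀ Z : Matrix (Fin d) (Fin d) ℝ,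
      diagonal (fun i : Fin d => lam i.val) * (diagonal linv * Z) = Z := by
    intro Z
    rw [← Matrix.mul_assoc, diagonal_mul_diagonal]
    rw [show (fun i : Fin d => lam i.val * linv i) = fun _ => (1:ℝ) from
      funext fun i => mul_inv_cancel₀ (hlam_pos i).ne', diagonal_one, Matrix.one_mul]
  have hdiag' : ∀ Z : Matrix (Fin d) (Fin d) ℝ,
      Sigh * (S * (Sigh * Z)) = V * (diagonal (fun i : Fin d => lam i.val) * (Vᵀ * Z)) := by
    intro Z
    rw [← Matrix.mul_assoc, ← Matrix.mul_assoc, hdiag, Matrix.mul_assoc, Matrix.mul_assoc]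
  have hSinv : S⁻¹ = G linv := by
    apply inv_eq_right_inv
    have key : Sigh * (S * G linv) = Sigh * 1 := by
      simp only [hGdef, Matrix.mul_assoc, Matrix.mul_one, hdiag', hDD, c1, c2, c3, c4]
    have := congrArg (fun Z => Sigh⁻¹ * Z) key
    simpa only [c1] using this
  have hSig_eq : Sig = G (fun _ => 1) := by
    show Sig = Sigh * (V * diagonal (fun _ => (1:ℝ)) * Vᵀ) * Sigh
    rw [diagonal_one, Matrix.mul_one, hV, Matrix.mul_one, hSighsq]
  have hGsub : ∀ c c' : Fin d → ℝ, G c - G c' = G (c - c') := by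
    intro c c'
    simp only [hGdef, ← Matrix.sub_mul, ← Matrix.mul_sub, diagonal_sub]
    rfl
  have hGsmul : ∀ (a : ℝ) (c : Fin d → ℝ), a • G c = G (a • c) := by
    intro a c
    simp only [hGdef, diagonal_smul, Matrix.mul_smul, Matrix.smul_mul]
  have hGpsd : ∀ c : Fin d → ℝ, (∀ i, 0 ≤ c i) → (G c).PosSemidef := by
    intro c hc
    have h0 : (diagonal c).PosSemidef := PosSemidef.diagonal hc
    have h1 := psd_conj h0 (Sigh * V)
    rw [transpose_mul, hSight] at h1
    have : Sigh * V * diagonal c * (Vᵀ * Sigh) = G c := by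
      simp only [hGdef, Matrix.mul_assoc]
    rwa [this] at h1
  have hquadW : ∀ (c : Fin d → ℝ) (x : Fin d → ℝ),
      (W *ᵥ x) ⬝ᵥ (G c *ᵥ (W *ᵥ x)) = x ⬝ᵥ (diagonal c *ᵥ x) := by
    intro c x
    rw [quad_conj, hWGW]
  have hcomp : ∀ (a : ℝ) (c : Fin d → ℝ), (∀ i : Fin d, c i ≤ a * (lam i.val)⁻¹) →
      ∀ f : Fin d → ℝ, f ⬝ᵥ (G c *ᵥ f) ≤ a * (f ⬝ᵥ (S⁻¹ *ᵥ f)) := by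
    intro a c hc f
    have hpsd : (a • S⁻¹ - G c).PosSemidef := by
      rw [hSinv, hGsmul, hGsub]
      refine hGpsd _ fun i => ?_
      have := hc i
      simp only [Pi.sub_apply, Pi.smul_apply, smul_eq_mul, hlinv]
      linarith
    have h2 := psd_quad_le hpsd f
    rwa [smul_mulVec, dotProduct_smul, smul_eq_mul] at h2
  -- the selector matrix E
  set E : Matrix (Fin d) (Fin r) ℝ :=
    Matrix.of (fun i j => if i = Fin.castLE hrd.le j then 1 else 0) with hE
  have hEapp : ∀ i j, E i j = if i = Fin.castLE hrd.le j then 1 else 0 := fun i j => rfl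
  have hEtE : Eᵀ * E = 1 := by
    ext j k
    rw [Matrix.mul_apply, Matrix.one_apply]
    rw [Finset.sum_eq_single (Fin.castLE hrd.le j)]
    · simp [transpose_apply, hEapp, Fin.castLE_inj]
    · intro i _ hi
      simp [transpose_apply, hEapp, hi]
    · intro h; exact absurd (Finset.mem_univ _) h
  have hEEt : ∀ (m : Type) (Z : Matrix (Fin d) m ℝ),
      E * (Eᵀ * Z) = diagonal (fun i : Fin d => if (i : ℕ) < r then (1:ℝ) else 0) * Z := by
    have hEEt0 : E * Eᵀ = diagonal (fun i : Fin d => if (i : ℕ) < r then (1:ℝ) else 0) := by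
      ext i i'
      rw [Matrix.mul_apply]
      by_cases h : i = i'
      · subst h
        rw [diagonal_apply_eq]
        by_cases h2 : (i : ℕ) < r
        · rw [if_pos h2, Finset.sum_eq_single (⟨(i : ℕ), h2⟩ : Fin r)]
          · simp [hEapp, transpose_apply, Fin.ext_iff]
          · intro j _ hj
            have : ¬ i = Fin.castLE hrd.le j := by
              intro e; apply hj
              have e' := congrArg Fin.val e
              simp only [Fin.coe_castLE] at e'
              exact Fin.ext (by simp [e'])
            simp [hEapp, transpose_apply, this]
          · intro h; exact absurd (Finset.mem_univ _) h
        · rw [if_neg h2]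
          apply Finset.sum_eq_zero; intro j _
          have : ¬ i = Fin.castLE hrd.le j := by
            intro e; apply h2; rw [e]; simpa using j.isLt
          simp [hEapp, transpose_apply, this]
      · rw [diagonal_apply_ne _ h]
        apply Finset.sum_eq_zero; intro j _
        by_cases e1 : i = Fin.castLE hrd.le j
        · have e2 : ¬ i' = Fin.castLE hrd.le j := fun e2 => h (e1.trans e2.symm)
          simp [hEapp, transpose_apply, e2]
        · simp [hEapp, transpose_apply, e1]
    intro m Z
    rw [← Matrix.mul_assoc, hEEt0]
  -- the optimal R₀
  set ind : Fin d → ℝ := fun i => if (i : ℕ) < r then (1:ℝ) else 0 with hind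
  set c0 : Fin d → ℝ := fun i => if (i : ℕ) < r then (0:ℝ) else 1 with hc0
  set R0 : Matrix (Fin d) (Fin r) ℝ := Sigh⁻¹ * (V * E) with hR0
  have hR0t : R0ᵀ = Eᵀ * (Vᵀ * Sigh⁻¹) := by
    rw [hR0, transpose_mul, transpose_mul, transpose_nonsing_inv, hSight, Matrix.mul_assoc]
  have hR0SR0 : R0ᵀ * Sig * R0 = 1 := by
    rw [hR0t, hR0, ← hSighsq]
    simp only [Matrix.mul_assoc, c1, c2, c3, c4]
    exact hEtE
  have hA0 : Sig - Sig * R0 * (R0ᵀ * Sig * R0)⁻¹ * R0ᵀ * Sig = G c0 := by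
    have h1 : Sig * R0 * (R0ᵀ * Sig * R0)⁻¹ * R0ᵀ * Sig = G ind := by
      rw [hR0SR0, inv_one, Matrix.mul_one, hR0, hR0t]
      rw [show Sig * (Sigh⁻¹ * (V * E)) * (Eᵀ * (Vᵀ * Sigh⁻¹)) * Sig
          = Sigh * (V * (E * (Eᵀ * (Vᵀ * Sigh)))) from by
        rw [← hSighsq]; simp only [Matrix.mul_assoc, c1, c2, c3, c4]]
      rw [hEEt, hGdef]
      simp only [Matrix.mul_assoc]
    rw [h1, hSig_eq, hGsub]
    exact congrArg G (funext fun i => by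
      by_cases h : (i : ℕ) < r <;> simp [hind, hc0, h, Pi.sub_apply])
  have hjr : ((⟨r, hrd⟩ : Fin d) : ℕ) = r := rfl
  have hlamr_pos : 0 < lam r := hlam_pos ⟨r, hrd⟩
  set f0 : Fin d → ℝ := Real.sqrt (lam r) • (W *ᵥ Pi.single (⟨r, hrd⟩ : Fin d) 1) with hf0
  have hsq : Real.sqrt (lam r) ^ 2 = lam r := Real.sq_sqrt hlamr_pos.le
  have hf0S : f0 ⬝ᵥ (S⁻¹ *ᵥ f0) = 1 := by
    rw [hf0, hSinv, quad_smul, hquadW, hsingle, hsq, hlinv]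
    simp only [hjr]
    exact mul_inv_cancel₀ hlamr_pos.ne'
  have hf0A : f0 ⬝ᵥ (G c0 *ᵥ f0) = lam r := by
    rw [hf0, quad_smul, hquadW, hsingle, hsq, hc0]
    simp
  have hc0le : ∀ i : Fin d, c0 i ≤ lam r * (lam (i : ℕ))⁻¹ := by
    intro i
    by_cases h : (i : ℕ) < r
    · simp only [hc0, if_pos h]
      exact mul_nonneg hlamr_pos.le (inv_nonneg.2 (hlam_pos i).le)
    · simp only [hc0, if_neg h]
      have hle : lam (i : ℕ) ≤ lam r := hmono r (i : ℕ) (Nat.le_of_not_lt h) i.isLt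
      calc (1:ℝ) = lam (i : ℕ) * (lam (i : ℕ))⁻¹ := (mul_inv_cancel₀ (hlam_pos i).ne').symm
        _ ≤ lam r * (lam (i : ℕ))⁻¹ :=
          mul_le_mul_of_nonneg_right hle (inv_nonneg.2 (hlam_pos i).le)
  have hsSup0 : sSup { w : ℝ | ∃ f : Fin d → ℝ, f ⬝ᵥ (S⁻¹ *ᵥ f) ≤ 1 ∧
      w = f ⬝ᵥ ((Sig - Sig * R0 * (R0ᵀ * Sig * R0)⁻¹ * R0ᵀ * Sig) *ᵥ f) } = lam r := by
    apply IsGreatest.csSup_eq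
    constructor
    · exact ⟨f0, le_of_eq hf0S, by rw [hA0, hf0A]⟩
    · rintro w ⟨f, hf1, rfl⟩
      rw [hA0]
      calc f ⬝ᵥ (G c0 *ᵥ f) ≤ lam r * (f ⬝ᵥ (S⁻¹ *ᵥ f)) := hcomp (lam r) c0 hc0le f
        _ ≤ lam r * 1 := mul_le_mul_of_nonneg_left hf1 hlamr_pos.le
        _ = lam r := mul_one _
  -- general facts for an arbitrary admissible R
  have hSigt : Sigᵀ = Sig := by
    have := hSig.isHermitian
    rwa [Matrix.IsHermitian, conjTranspose_eq_transpose_of_trivial] at this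
  have hlam0_pos : 0 < lam 0 := hlam_pos ⟨0, hr.trans hrd⟩
  have hone_le : ∀ i : Fin d, (1:ℝ) ≤ lam 0 * (lam (i:ℕ))⁻¹ := by
    intro i
    have hle : lam (i : ℕ) ≤ lam 0 := hmono 0 (i : ℕ) (Nat.zero_le _) i.isLt
    calc (1:ℝ) = lam (i : ℕ) * (lam (i : ℕ))⁻¹ := (mul_inv_cancel₀ (hlam_pos i).ne').symm
      _ ≤ lam 0 * (lam (i : ℕ))⁻¹ :=
        mul_le_mul_of_nonneg_right hle (inv_nonneg.2 (hlam_pos i).le)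
  have hub : ∀ (R : Matrix (Fin d) (Fin r) ℝ), IsUnit (Rᵀ * Sig * R).det →
      ∀ f : Fin d → ℝ, f ⬝ᵥ (S⁻¹ *ᵥ f) ≤ 1 →
      f ⬝ᵥ ((Sig - Sig * R * (Rᵀ * Sig * R)⁻¹ * Rᵀ * Sig) *ᵥ f) ≤ lam 0 := by
    intro R hdet f hf
    have hK_psd : (Rᵀ * Sig * R).PosSemidef := by
      simpa [conjTranspose_eq_transpose_of_trivial] using
        hSig.posSemidef.conjTranspose_mul_mul_same R
    have hK_pd : (Rᵀ * Sig * R).PosDef := by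
      refine Matrix.PosDef.of_dotProduct_mulVec_pos hK_psd.1 fun x hx => ?_
      rcases lt_or_eq_of_le (hK_psd.dotProduct_mulVec_nonneg x) with h | h
      · exact h
      · exfalso
        apply hx
        have h0 : (Rᵀ * Sig * R) *ᵥ x = 0 := (hK_psd.dotProduct_mulVec_zero_iff x).mp h.symm
        have := congrArg (fun z => (Rᵀ * Sig * R)⁻¹ *ᵥ z) h0
        simpa [mulVec_mulVec, nonsing_inv_mul _ hdet] using this
    have hKinv_psd : ((Rᵀ * Sig * R)⁻¹).PosSemidef := hK_pd.inv.posSemidef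
    have hproj_psd : (Sig * R * (Rᵀ * Sig * R)⁻¹ * Rᵀ * Sig).PosSemidef := by
      have h1 := psd_conj hKinv_psd (Sig * R)
      rw [transpose_mul, hSigt] at h1
      have h2 : Sig * R * (Rᵀ * Sig * R)⁻¹ * (Rᵀ * Sig)
          = Sig * R * (Rᵀ * Sig * R)⁻¹ * Rᵀ * Sig := by
        simp only [Matrix.mul_assoc]
      rwa [h2] at h1
    have hstep : f ⬝ᵥ ((Sig - Sig * R * (Rᵀ * Sig * R)⁻¹ * Rᵀ * Sig) *ᵥ f) ≤ f ⬝ᵥ (Sig *ᵥ f) := by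
      apply psd_quad_le
      simpa [sub_sub_cancel] using hproj_psd
    calc f ⬝ᵥ ((Sig - Sig * R * (Rᵀ * Sig * R)⁻¹ * Rᵀ * Sig) *ᵥ f) ≤ f ⬝ᵥ (Sig *ᵥ f) := hstep
      _ ≤ lam 0 * (f ⬝ᵥ (S⁻¹ *ᵥ f)) := by
          rw [hSig_eq]; exact hcomp (lam 0) (fun _ => 1) (fun i => hone_le i) f
      _ ≤ lam 0 * 1 := mul_le_mul_of_nonneg_left hf hlam0_pos.le
      _ = lam 0 := mul_one _
  have hexists : ∀ (R : Matrix (Fin d) (Fin r) ℝ), IsUnit (Rᵀ * Sig * R).det →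
      ∃ f : Fin d → ℝ, f ⬝ᵥ (S⁻¹ *ᵥ f) ≤ 1 ∧
        lam r ≤ f ⬝ᵥ ((Sig - Sig * R * (Rᵀ * Sig * R)⁻¹ * Rᵀ * Sig) *ᵥ f) := by
    intro R hdet
    have hr1d : r + 1 ≤ d := hrd
    set E1 : Matrix (Fin d) (Fin (r+1)) ℝ :=
      Matrix.of (fun i j => if i = Fin.castLE hr1d j then 1 else 0) with hE1
    have hE1app : ∀ i j, E1 i j = if i = Fin.castLE hr1d j then 1 else 0 := fun i j => rfl
    set φ : (Fin (r+1) → ℝ) →ₗ[ℝ] (Fin r → ℝ) := ((Sigh * R)ᵀ * V * E1)ᵀᵀ.mulVecLin with hphi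
    have hker : LinearMap.ker φ ≠ ⊥ := by
      apply LinearMap.ker_ne_bot_of_finrank_lt
      rw [Module.finrank_fin_fun, Module.finrank_fin_fun]
      omega
    obtain ⟨y, hy_mem, hy_ne⟩ := (Submodule.ne_bot_iff _).mp hker
    set x : Fin d → ℝ := E1 *ᵥ y with hx
    have hx_eval : ∀ j : Fin (r+1), x (Fin.castLE hr1d j) = y j := by
      intro j
      rw [hx]
      simp only [mulVec, dotProduct, hE1app, Fin.castLE_inj, ite_mul, one_mul, zero_mul]
      rw [Finset.sum_ite_eq _ j y]
      simp
    have hx_zero : ∀ i : Fin d, r < (i : ℕ) → x i = 0 := by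
      intro i hi
      rw [hx]
      simp only [mulVec, dotProduct]
      apply Finset.sum_eq_zero
      intro j _
      have : ¬ i = Fin.castLE hr1d j := by
        intro e
        have e' := congrArg Fin.val e
        simp only [Fin.coe_castLE] at e'
        have := j.isLt
        omega
      simp [hE1app, this]
    have hx_ne : x ≠ 0 := by
      intro h
      apply hy_ne
      funext j
      have := congrFun h (Fin.castLE hr1d j)
      rw [hx_eval j] at this
      simpa using this
    have hxB : ((Sigh * R)ᵀ * V) *ᵥ x = 0 := by
      have hy0 : φ y = 0 := LinearMap.mem_ker.mp hy_mem
      rw [hphi] at hy0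
      simp only [transpose_transpose, Matrix.mulVecLin_apply] at hy0
      rw [hx, mulVec_mulVec]
      exact hy0
    -- the scalars
    set t : ℝ := x ⬝ᵥ (diagonal linv *ᵥ x) with ht
    set n2 : ℝ := x ⬝ᵥ x with hn2
    have hterm : ∀ i : Fin d, x i * (diagonal linv *ᵥ x) i = (lam (i:ℕ))⁻¹ * (x i)^2 := by
      intro i
      rw [mulVec_diagonal]
      simp only [hlinv]
      ring
    have ht_pos : 0 < t := by
      rw [ht]
      obtain ⟨i0, hi0⟩ := Function.ne_iff.mp hx_ne
      rw [dotProduct]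
      apply Finset.sum_pos'
      · intro i _
        rw [hterm i]
        have := hlam_pos i
        positivity
      · refine ⟨i0, Finset.mem_univ _, ?_⟩
        rw [hterm i0]
        have h1 := hlam_pos i0
        have h2 : (0:ℝ) < (x i0)^2 :=
          lt_of_le_of_ne (sq_nonneg _) (Ne.symm (pow_ne_zero 2 hi0))
        positivity
    have hlt : lam r * t ≤ n2 := by
      rw [ht, hn2, dotProduct, dotProduct, Finset.mul_sum]
      apply Finset.sum_le_sum
      intro i _
      rw [hterm i]
      by_cases hi : r < (i : ℕ)
      · rw [hx_zero i hi]
        simp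
      · have hle : lam r ≤ lam (i : ℕ) := hmono (i : ℕ) r (Nat.le_of_not_lt hi) hrd
        have hpos := hlam_pos i
        have key : lam r * ((lam (i:ℕ))⁻¹ * (x i)^2) ≤ lam (i:ℕ) * ((lam (i:ℕ))⁻¹ * (x i)^2) :=
          mul_le_mul_of_nonneg_right hle (by positivity)
        calc lam r * ((lam (i:ℕ))⁻¹ * (x i)^2) ≤ lam (i:ℕ) * ((lam (i:ℕ))⁻¹ * (x i)^2) := key
          _ = (x i)^2 := by field_simp
          _ = x i * x i := by ring
    set cn : ℝ := (Real.sqrt t)⁻¹ with hcn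
    have hcn2 : cn^2 = t⁻¹ := by
      rw [hcn, inv_pow, Real.sq_sqrt ht_pos.le]
    refine ⟨cn • (W *ᵥ x), ?_, ?_⟩
    · rw [hSinv, quad_smul, hquadW, ← ht, hcn2, inv_mul_cancel₀ ht_pos.ne']
    · have hterm1 : (W *ᵥ x) ⬝ᵥ (Sig *ᵥ (W *ᵥ x)) = n2 := by
        rw [hSig_eq, hquadW, diagonal_one, one_mulVec, hn2]
      have hmid : Wᵀ * (Sig * R * (Rᵀ * Sig * R)⁻¹ * Rᵀ * Sig) * W
          = (Vᵀ * (Sigh * R)) * (Rᵀ * Sig * R)⁻¹ * ((Sigh * R)ᵀ * V) := by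
        rw [hWt, hW, transpose_mul, hSight, ← hSighsq]
        simp only [Matrix.mul_assoc, c1, c2, c3, c4]
      have hterm2 : (W *ᵥ x) ⬝ᵥ ((Sig * R * (Rᵀ * Sig * R)⁻¹ * Rᵀ * Sig) *ᵥ (W *ᵥ x)) = 0 := by
        rw [quad_conj, hmid]
        have hsplit : (Vᵀ * (Sigh * R) * (Rᵀ * Sig * R)⁻¹ * ((Sigh * R)ᵀ * V)) *ᵥ x
            = (Vᵀ * (Sigh * R) * (Rᵀ * Sig * R)⁻¹) *ᵥ (((Sigh * R)ᵀ * V) *ᵥ x) := by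
          simp only [← mulVec_mulVec, Matrix.mul_assoc]
        rw [hsplit, hxB, mulVec_zero, dotProduct_zero]
        
      have hval : (cn • (W *ᵥ x)) ⬝ᵥ ((Sig - Sig * R * (Rᵀ * Sig * R)⁻¹ * Rᵀ * Sig) *ᵥ
          (cn • (W *ᵥ x))) = cn^2 * n2 := by
        rw [quad_smul, sub_mulVec, dotProduct_sub, hterm1, hterm2, sub_zero]
      rw [hval, hcn2, inv_mul_eq_div]
      exact (le_div_iff₀ ht_pos).mpr hlt
  -- assembling the inf/sup
  have hmem0 : ∀ (R : Matrix (Fin d) (Fin r) ℝ),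
      (0:ℝ) ∈ { w : ℝ | ∃ f : Fin d → ℝ, f ⬝ᵥ (S⁻¹ *ᵥ f) ≤ 1 ∧
        w = f ⬝ᵥ ((Sig - Sig * R * (Rᵀ * Sig * R)⁻¹ * Rᵀ * Sig) *ᵥ f) } := by
    intro R
    exact ⟨0, by simp, by simp⟩
  have hbdd : ∀ (R : Matrix (Fin d) (Fin r) ℝ), IsUnit (Rᵀ * Sig * R).det →
      BddAbove { w : ℝ | ∃ f : Fin d → ℝ, f ⬝ᵥ (S⁻¹ *ᵥ f) ≤ 1 ∧
        w = f ⬝ᵥ ((Sig - Sig * R * (Rᵀ * Sig * R)⁻¹ * Rᵀ * Sig) *ᵥ f) } := by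
    intro R hdet
    refine ⟨lam 0, ?_⟩
    rintro w ⟨f, hf1, rfl⟩
    exact hub R hdet f hf1
  have hR0unit : IsUnit (R0ᵀ * Sig * R0).det := by
    rw [hR0SR0, det_one]; exact isUnit_one
  apply le_antisymm
  · apply csInf_le
    · refine ⟨0, ?_⟩
      rintro v ⟨R, hdet, rfl⟩
      exact le_csSup (hbdd R hdet) (hmem0 R)
    · exact ⟨R0, hR0unit, hsSup0.symm⟩
  · apply le_csInf
    · exact ⟨lam r, R0, hR0unit, hsSup0.symm⟩
    · rintro v ⟨R, hdet, rfl⟩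
      obtain ⟨f, hf1, hf2⟩ := hexists R hdet
      exact hf2.trans (le_csSup (hbdd R hdet) ⟨f, hf1, rfl⟩)
end

section
/- For every symmetric positive semidefinite matrix M ∈ ℝ^{d×d}, the infimum over R ∈ ℝ^{d×r} with Rᵀ Σ R invertible of Tr[(Σ − Σ R (Rᵀ Σ R)⁻¹ Rᵀ Σ) M] equals Σ_{i=r+1}^{d} λ_i(Σ^{1/2} M Σ^{1/2}), and it is attained by taking Σ^{1/2} R to have as columns r orthonormal eigenvectors of Σ^{1/2} M Σ^{1/2} corresponding to its r largest eigenvalues. -/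
open Matrix

private lemma aux_sum (d r : ℕ) (hrd : r < d) (lam : ℕ → ℝ)
    (hmono : ∀ i j : ℕ, i ≤ j → j < d → lam j ≤ lam i)
    (t : Fin d → ℝ) (h0 : ∀ i, 0 ≤ t i) (h1 : ∀ i, t i ≤ 1)
    (hsum : ∑ i, t i = (r : ℝ)) :
    ∑ i : Fin d, lam i.val * t i ≤ ∑ i ∈ Finset.range r, lam i := by
  set c := lam r with hc
  have key : ∀ i : Fin d, lam i.val * t i ≤ c * t i + (if i.val < r then lam i.val - c else 0) := by
    intro i
    by_cases hi : i.val < r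
    · simp only [if_pos hi]
      have hlc : c ≤ lam i.val := hmono i.val r hi.le hrd
      nlinarith [h1 i, h0 i]
    · simp only [if_neg hi]
      have : lam i.val ≤ c := hmono r i.val (not_lt.mp hi) i.isLt
      nlinarith [h0 i]
  have hsplit : ∑ i ∈ Finset.range d, (if i < r then lam i - c else 0)
      = ∑ i ∈ Finset.range r, (lam i - c) := by
    rw [← Finset.sum_subset (Finset.range_subset_range.2 hrd.le)
      (fun x _ hnx => if_neg (fun h => hnx (Finset.mem_range.mpr h)))]
    exact Finset.sum_congr rfl (fun x hx => if_pos (Finset.mem_range.mp hx))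
  calc ∑ i : Fin d, lam i.val * t i
      ≤ ∑ i : Fin d, (c * t i + (if i.val < r then lam i.val - c else 0)) :=
        Finset.sum_le_sum (fun i _ => key i)
    _ = c * r + ∑ i ∈ Finset.range r, (lam i - c) := by
        rw [Finset.sum_add_distrib, ← Finset.mul_sum, hsum,
          Fin.sum_univ_eq_sum_range (fun i => if i < r then lam i - c else 0) d, hsplit]
    _ = ∑ i ∈ Finset.range r, lam i := by
        rw [Finset.sum_sub_distrib, Finset.sum_const, Finset.card_range, nsmul_eq_mul]
        ring

private lemma proj_le (d r : ℕ) (hrd : r < d) (lam : ℕ → ℝ)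
    (hmono : ∀ i j : ℕ, i ≤ j → j < d → lam j ≤ lam i)
    (V : Matrix (Fin d) (Fin d) ℝ) (hV : V * Vᵀ = 1)
    (P : Matrix (Fin d) (Fin d) ℝ) (hPt : Pᵀ = P) (hPP : P * P = P)
    (htr : P.trace = (r : ℝ)) :
    (P * (V * Matrix.diagonal (fun i : Fin d => lam i.val) * Vᵀ)).trace
      ≤ ∑ i ∈ Finset.range r, lam i := by
  have hVtV : Vᵀ * V = 1 := mul_eq_one_comm.mp hV
  set D := Matrix.diagonal (fun i : Fin d => lam i.val) with hD
  set Q := Vᵀ * P * V with hQ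
  have hQW : Q = (P * V)ᵀ * (P * V) := by
    calc Q = Vᵀ * (P * P) * V := by rw [hPP]
      _ = (P * V)ᵀ * (P * V) := by rw [Matrix.transpose_mul, hPt]; noncomm_ring
  have h0 : ∀ i, 0 ≤ Q i i := by
    intro i
    rw [hQW, Matrix.mul_apply]
    exact Finset.sum_nonneg fun k _ => by
      rw [Matrix.transpose_apply]; exact mul_self_nonneg _
  have hQ1 : (1 : Matrix (Fin d) (Fin d) ℝ) - Q = (V - P * V)ᵀ * (V - P * V) := by
    rw [Matrix.transpose_sub, Matrix.sub_mul, Matrix.mul_sub, Matrix.mul_sub,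
      Matrix.transpose_mul, hPt, hVtV]
    have e1 : Vᵀ * (P * V) = Q := by rw [hQ, Matrix.mul_assoc]
    have e3 : (Vᵀ * P) * (P * V) = Q := by
      rw [hQ]; conv_rhs => rw [← hPP]
      noncomm_ring
    rw [e1, e3, hQ]
    abel
  have h1 : ∀ i, Q i i ≤ 1 := by
    intro i
    have hnn : 0 ≤ ((1 : Matrix (Fin d) (Fin d) ℝ) - Q) i i := by
      rw [hQ1, Matrix.mul_apply]
      exact Finset.sum_nonneg fun k _ => by
        rw [Matrix.transpose_apply]; exact mul_self_nonneg _
    have h11 : ((1 : Matrix (Fin d) (Fin d) ℝ)) i i = 1 := Matrix.one_apply_eq i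
    simp only [Matrix.sub_apply, h11] at hnn
    linarith
  have hQtr : ∑ i, Q i i = (r : ℝ) := by
    have h2 : Q.trace = P.trace := by
      rw [hQ, Matrix.trace_mul_comm (Vᵀ * P) V, ← Matrix.mul_assoc, hV, Matrix.one_mul]
    have h3 : Q.trace = ∑ i, Q i i := rfl
    rw [← h3, h2, htr]
  have htrace : (P * (V * D * Vᵀ)).trace = ∑ i : Fin d, lam i.val * Q i i := by
    have e1 : P * (V * D * Vᵀ) = (P * V * D) * Vᵀ := by noncomm_ring
    have e2 : Vᵀ * (P * V * D) = Q * D := by rw [hQ]; noncomm_ring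
    rw [e1, Matrix.trace_mul_comm, e2]
    simp [Matrix.trace, Matrix.diag, Matrix.mul_diagonal, hD, mul_comm]
  rw [htrace]
  exact aux_sum d r hrd lam hmono (fun i => Q i i) h0 h1 hQtr

private lemma proj_props (d r : ℕ) (S : Matrix (Fin d) (Fin r) ℝ)
    (hdet : IsUnit (Sᵀ * S).det) :
    (S * (Sᵀ * S)⁻¹ * Sᵀ)ᵀ = S * (Sᵀ * S)⁻¹ * Sᵀ ∧
    (S * (Sᵀ * S)⁻¹ * Sᵀ) * (S * (Sᵀ * S)⁻¹ * Sᵀ) = S * (Sᵀ * S)⁻¹ * Sᵀ ∧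
    (S * (Sᵀ * S)⁻¹ * Sᵀ).trace = (r : ℝ) := by
  set N := (Sᵀ * S)⁻¹ with hN
  have hNt : Nᵀ = N := by
    rw [hN, Matrix.transpose_nonsing_inv, Matrix.transpose_mul, Matrix.transpose_transpose]
  have hinv : N * (Sᵀ * S) = 1 := Matrix.nonsing_inv_mul _ hdet
  have hinv' : (Sᵀ * S) * N = 1 := Matrix.mul_nonsing_inv _ hdet
  refine ⟨?_, ?_, ?_⟩
  · rw [Matrix.transpose_mul, Matrix.transpose_mul, Matrix.transpose_transpose, hNt]
    simp only [Matrix.mul_assoc]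
  · have e : (S * N * Sᵀ) * (S * N * Sᵀ) = S * ((N * (Sᵀ * S)) * N) * Sᵀ := by
      simp only [Matrix.mul_assoc]
    rw [e, hinv, Matrix.one_mul]
  · rw [Matrix.trace_mul_comm, ← Matrix.mul_assoc, hinv', Matrix.trace_one]
    simp

set_option maxHeartbeats 1000000 in
/-- For a symmetric positive semidefinite `M`, the infimum over
`R ∈ ℝ^{d×r}` with `Rᵀ Σ R` invertible of `Tr[(Σ − Σ R (Rᵀ Σ R)⁻¹ Rᵀ Σ) M]` equals
`Σ_{i=r+1}^{d} λ_i(Σ^{1/2} M Σ^{1/2})` (stated as `IsLeast`, so the infimum is attained),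
and it is attained at `R = Σ^{-1/2} V_{1:r}` where the columns of the orthogonal `V` are
eigenvectors of `Σ^{1/2} M Σ^{1/2}` ordered by nonincreasing eigenvalues `lam`
(so `Σ^{1/2} R` has as columns the top `r` orthonormal eigenvectors). -/
theorem stmt5 (d r : ℕ) (hr : 0 < r) (hrd : r < d)
    (Sig : Matrix (Fin d) (Fin d) ℝ) (hSig : Sig.PosDef)
    (Sigh : Matrix (Fin d) (Fin d) ℝ) (hSigh : Sigh.PosDef) (hSighsq : Sigh * Sigh = Sig)
    (M : Matrix (Fin d) (Fin d) ℝ) (hM : M.PosSemidef)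
    (lam : ℕ → ℝ) (hmono : ∀ i j : ℕ, i ≤ j → j < d → lam j ≤ lam i)
    (V : Matrix (Fin d) (Fin d) ℝ) (hV : V * Vᵀ = 1)
    (hdiag : Sigh * M * Sigh = V * Matrix.diagonal (fun i : Fin d => lam i.val) * Vᵀ) :
    IsLeast { v : ℝ | ∃ R : Matrix (Fin d) (Fin r) ℝ,
        IsUnit (Rᵀ * Sig * R).det ∧
        v = Matrix.trace ((Sig - Sig * R * (Rᵀ * Sig * R)⁻¹ * Rᵀ * Sig) * M) }
      (∑ i ∈ Finset.Ico r d, lam i)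
    ∧ (let R : Matrix (Fin d) (Fin r) ℝ := Sigh⁻¹ * V.submatrix id (Fin.castLE hrd.le)
       IsUnit (Rᵀ * Sig * R).det ∧
       Matrix.trace ((Sig - Sig * R * (Rᵀ * Sig * R)⁻¹ * Rᵀ * Sig) * M)
         = ∑ i ∈ Finset.Ico r d, lam i) := by
  have hSht : Sighᵀ = Sigh := hSigh.isHermitian.eq
  have hSighdet : IsUnit Sigh.det := isUnit_iff_ne_zero.2 hSigh.det_pos.ne'
  have hVtV : Vᵀ * V = 1 := mul_eq_one_comm.mp hV
  set D := Matrix.diagonal (fun i : Fin d => lam i.val) with hD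
  have traceA : (Sigh * M * Sigh).trace = ∑ i ∈ Finset.range d, lam i := by
    rw [hdiag, Matrix.trace_mul_comm, ← Matrix.mul_assoc, hVtV, Matrix.one_mul, hD,
      Matrix.trace_diagonal]
    exact Fin.sum_univ_eq_sum_range _ d
  have StS : ∀ R : Matrix (Fin d) (Fin r) ℝ, (Sigh * R)ᵀ * (Sigh * R) = Rᵀ * Sig * R := by
    intro R
    rw [Matrix.transpose_mul, hSht, ← hSighsq]
    simp only [Matrix.mul_assoc]
  have value_eq : ∀ R : Matrix (Fin d) (Fin r) ℝ,
      ((Sig - Sig * R * (Rᵀ * Sig * R)⁻¹ * Rᵀ * Sig) * M).trace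
        = (Sigh * M * Sigh).trace
          - ((Sigh * R * (Rᵀ * Sig * R)⁻¹ * Rᵀ * Sigh) * (Sigh * M * Sigh)).trace := by
    intro R
    have t1 : (Sig * M).trace = (Sigh * M * Sigh).trace := by
      rw [← hSighsq, Matrix.mul_assoc, Matrix.trace_mul_comm]
    have e : (Sig * R * (Rᵀ * Sig * R)⁻¹ * Rᵀ * Sig) * M
        = Sigh * ((Sigh * R * (Rᵀ * Sig * R)⁻¹ * Rᵀ * Sigh) * (Sigh * M)) := by
      rw [← hSighsq]; simp only [Matrix.mul_assoc]
    have e2 : ((Sigh * R * (Rᵀ * Sig * R)⁻¹ * Rᵀ * Sigh) * (Sigh * M)) * Sigh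
        = (Sigh * R * (Rᵀ * Sig * R)⁻¹ * Rᵀ * Sigh) * (Sigh * M * Sigh) := by
      simp only [Matrix.mul_assoc]
    have t2 : ((Sig * R * (Rᵀ * Sig * R)⁻¹ * Rᵀ * Sig) * M).trace
        = ((Sigh * R * (Rᵀ * Sig * R)⁻¹ * Rᵀ * Sigh) * (Sigh * M * Sigh)).trace := by
      rw [e, Matrix.trace_mul_comm, e2]
    rw [Matrix.sub_mul, Matrix.trace_sub, t1, t2]
  have Pform : ∀ R : Matrix (Fin d) (Fin r) ℝ,
      Sigh * R * (Rᵀ * Sig * R)⁻¹ * Rᵀ * Sigh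
        = (Sigh * R) * ((Sigh * R)ᵀ * (Sigh * R))⁻¹ * (Sigh * R)ᵀ := by
    intro R
    rw [StS R, Matrix.transpose_mul, hSht]
    simp only [Matrix.mul_assoc]
  set V₁ := V.submatrix id (Fin.castLE hrd.le) with hV₁
  set R₀ := Sigh⁻¹ * V₁ with hR₀
  have hSR : Sigh * R₀ = V₁ := by
    rw [hR₀, ← Matrix.mul_assoc, Matrix.mul_nonsing_inv _ hSighdet, Matrix.one_mul]
  have hV1t : V₁ᵀ = Vᵀ.submatrix (Fin.castLE hrd.le) id := by
    rw [hV₁, Matrix.transpose_submatrix]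
  have hV1tV1 : V₁ᵀ * V₁ = 1 := by
    rw [hV1t, hV₁,
      ← Matrix.submatrix_mul Vᵀ V (Fin.castLE hrd.le) id (Fin.castLE hrd.le) Function.bijective_id,
      hVtV, Matrix.submatrix_one _ (Fin.castLE_injective hrd.le)]
  have hRtSR : R₀ᵀ * Sig * R₀ = 1 := by rw [← StS R₀, hSR, hV1tV1]
  have hdet0 : IsUnit (R₀ᵀ * Sig * R₀).det := by rw [hRtSR]; simp
  have hval : ((Sig - Sig * R₀ * (R₀ᵀ * Sig * R₀)⁻¹ * R₀ᵀ * Sig) * M).trace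
      = ∑ i ∈ Finset.Ico r d, lam i := by
    have hi1 : (1 : Matrix (Fin r) (Fin r) ℝ)⁻¹ = 1 := by simp
    rw [value_eq R₀, traceA, Pform R₀, hSR, hV1tV1, hi1, Matrix.mul_one, hdiag]
    have e1 : V₁ * V₁ᵀ * (V * D * Vᵀ) = V₁ * (V₁ᵀ * (V * D * Vᵀ)) := by
      simp only [Matrix.mul_assoc]
    have tr1 : (V₁ * (V₁ᵀ * (V * D * Vᵀ))).trace = ((V₁ᵀ * (V * D * Vᵀ)) * V₁).trace :=
      Matrix.trace_mul_comm _ _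
    have e2 : V₁ᵀ * (V * D * Vᵀ) = (Vᵀ * (V * D * Vᵀ)).submatrix (Fin.castLE hrd.le) id := by
      rw [Matrix.submatrix_mul Vᵀ (V * D * Vᵀ) (Fin.castLE hrd.le) id id Function.bijective_id,
        Matrix.submatrix_id_id, hV1t]
    have e3 : Vᵀ * (V * D * Vᵀ) = D * Vᵀ := by
      rw [← Matrix.mul_assoc, ← Matrix.mul_assoc, hVtV, Matrix.one_mul]
    have e4 : (D * Vᵀ).submatrix (Fin.castLE hrd.le) id * V₁
        = ((D * Vᵀ) * V).submatrix (Fin.castLE hrd.le) (Fin.castLE hrd.le) := by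
      rw [hV₁]
      exact (Matrix.submatrix_mul (D * Vᵀ) V (Fin.castLE hrd.le) id (Fin.castLE hrd.le)
        Function.bijective_id).symm
    have e5 : (D * Vᵀ) * V = D := by rw [Matrix.mul_assoc, hVtV, Matrix.mul_one]
    have e6 : (D.submatrix (Fin.castLE hrd.le) (Fin.castLE hrd.le)).trace
        = ∑ i ∈ Finset.range r, lam i := by
      rw [hD]
      have h7 : ((Matrix.diagonal fun i : Fin d => lam i.val).submatrix
          (Fin.castLE hrd.le) (Fin.castLE hrd.le)).trace = ∑ i : Fin r, lam i.val := by
        simp [Matrix.trace, Matrix.diag, Matrix.submatrix_apply]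
      rw [h7]
      exact Fin.sum_univ_eq_sum_range _ r
    rw [e1, tr1, e2, e3, e4, e5, e6, Finset.sum_Ico_eq_sub lam hrd.le]
  constructor
  · constructor
    · -- membership: the explicit R attains the value
      exact ⟨R₀, hdet0, hval.symm⟩
    · -- lower bound
      rintro v ⟨R, hdet, rfl⟩
      have hdetS : IsUnit ((Sigh * R)ᵀ * (Sigh * R)).det := by rw [StS R]; exact hdet
      obtain ⟨hPt, hPP, htr⟩ := proj_props d r (Sigh * R) hdetS
      have hb := proj_le d r hrd lam hmono V hV _ hPt hPP htr
      rw [value_eq R, traceA, Pform R, hdiag]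
      rw [Finset.sum_Ico_eq_sub lam hrd.le]
      rw [← hD] at hb
      linarith
  · exact ⟨hdet0, hval⟩
end

section
/- The trace-constrained maximization of the sum of the d − r smallest eigenvalues has value: sup over symmetric positive semidefinite Σ̃ ∈ ℝ^{d×d} with Tr[Σ̃] ≤ 1 of Σ_{i=r+1}^{d} λ_i(Σ^{1/2} Σ̃ Σ^{1/2}) = max over ℓ ∈ {r+1, …, d} of (ℓ − r) / Σ_{i=1}^{ℓ} (1/λ_i(Σ)). -/
open Matrix

/-- The eigenvalues of a real symmetric matrix listed in nonincreasing order (0-based);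
junk value `0` for non-Hermitian matrices and out-of-range indices. -/
noncomputable def eigsDesc {d : ℕ} (A : Matrix (Fin d) (Fin d) ℝ) : ℕ → ℝ :=
  fun i =>
    (List.insertionSort (· ≥ ·)
      (List.ofFn (fun j : Fin d =>
        if hA : A.IsHermitian then hA.eigenvalues j else 0))).getD i 0

section Aux
open Finset

/-- Abel summation: nonincreasing `f` with `f (n-1) ≥ 0`, all partial sums of `g` nonneg. -/
lemma abel_nonneg : ∀ (n : ℕ) (f : ℕ → ℝ), ∀ (g : ℕ → ℝ),
    (∀ i j, i ≤ j → j < n → f j ≤ f i) → (0 ≤ f (n-1)) →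
    (∀ m, m ≤ n → 0 ≤ ∑ i ∈ range m, g i) → 0 ≤ ∑ i ∈ range n, f i * g i := by
  intro n
  induction n with
  | zero => simp
  | succ n ih =>
    intro f g hf hfn hg
    have key : ∑ i ∈ range (n+1), f i * g i
        = (∑ i ∈ range n, (f i - f n) * g i) + f n * ∑ i ∈ range (n+1), g i := by
      have h1 : ∑ i ∈ range n, (f i - f n) * g i
          = ∑ i ∈ range n, f i * g i - f n * ∑ i ∈ range n, g i := by
        rw [Finset.mul_sum, ← Finset.sum_sub_distrib]
        exact Finset.sum_congr rfl (fun x _ => by ring)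
      rw [h1, Finset.sum_range_succ (f := fun i => f i * g i), Finset.sum_range_succ (f := g)]
      ring
    rw [key]
    have h2 : 0 ≤ ∑ i ∈ range n, (f i - f n) * g i := by
      apply ih
      · intro i j hij hj
        have := hf i j hij (by omega)
        linarith
      · rcases Nat.eq_zero_or_pos n with h | h
        · simp [h]
        · have := hf (n-1) n (by omega) (by omega)
          linarith
      · intro m hm; exact hg m (by omega)
    have h3 : 0 ≤ f n := by simpa using hfn
    have h4 : 0 ≤ f n * ∑ i ∈ range (n+1), g i :=
      mul_nonneg h3 (hg (n+1) le_rfl)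
    linarith

lemma sum_reflect_Ico (n m : ℕ) (hm : m ≤ n) (g : ℕ → ℝ) :
    ∑ i ∈ range m, g (n - 1 - i) = ∑ i ∈ Ico (n - m) n, g i := by
  apply Finset.sum_bij' (i := fun (i : ℕ) _ => n - 1 - i) (j := fun (i : ℕ) _ => n - 1 - i)
  all_goals intros
  all_goals simp_all [Finset.mem_range, Finset.mem_Ico]
  all_goals omega

/-- Abel for nondecreasing nonneg weights and nonneg tail sums. -/
lemma abel_tail (n : ℕ) (w g : ℕ → ℝ) (hw : ∀ i j, i ≤ j → j < n → w i ≤ w j)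
    (hw0 : 0 ≤ w 0) (hg : ∀ m, m ≤ n → 0 ≤ ∑ i ∈ Ico m n, g i) :
    0 ≤ ∑ i ∈ range n, w i * g i := by
  rcases Nat.eq_zero_or_pos n with h | hn
  · simp [h]
  have key := abel_nonneg n (fun i => w (n - 1 - i)) (fun i => g (n - 1 - i))
    (fun i j hij hj => hw (n-1-j) (n-1-i) (by omega) (by omega))
    (by simpa [Nat.sub_sub_self (by omega : 1 ≤ n)] using hw0)
    (fun m hm => by rw [sum_reflect_Ico n m hm g]; exact hg (n - m) (by omega))
  calc (0:ℝ) ≤ ∑ i ∈ range n, w (n-1-i) * g (n-1-i) := key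
    _ = ∑ i ∈ range n, w i * g i := Finset.sum_range_reflect (fun i => w i * g i) n

lemma sum_range_indicator (m k : ℕ) :
    ∑ i ∈ range k, (if m ≤ i then (1:ℝ) else 0) = ((k - m : ℕ) : ℝ) := by
  induction k with
  | zero => simp
  | succ k ih =>
    rw [Finset.sum_range_succ, ih]
    rcases le_or_gt m k with h | h
    · rw [if_pos h]
      have : k + 1 - m = (k - m) + 1 := by omega
      rw [this]; push_cast; ring
    · rw [if_neg (by omega)]
      have : k + 1 - m = 0 := by omega
      have h2 : k - m = 0 := by omega
      rw [this, h2]; simp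

lemma sum_ico_eq_indicator (m d : ℕ) (hm : m ≤ d) (μ : ℕ → ℝ) :
    ∑ i ∈ Ico m d, μ i = ∑ i ∈ range d, (if m ≤ i then (1:ℝ) else 0) * μ i := by
  rw [range_eq_Ico, ← Finset.sum_Ico_consecutive _ (Nat.zero_le m) hm]
  have h1 : ∑ i ∈ Ico 0 m, (if m ≤ i then (1:ℝ) else 0) * μ i = 0 := by
    apply Finset.sum_eq_zero
    intro i hi
    rw [Finset.mem_Ico] at hi
    rw [if_neg (by omega)]; ring
  have h2 : ∑ i ∈ Ico m d, (if m ≤ i then (1:ℝ) else 0) * μ i = ∑ i ∈ Ico m d, μ i := by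
    apply Finset.sum_congr rfl
    intro i hi
    rw [Finset.mem_Ico] at hi
    rw [if_pos hi.1]; ring
  rw [h1, h2]; ring

/-- Core rearrangement inequality (Ruhe-type): doubly stochastic mixing only increases
the sum `∑ μᵢ/λᵢ` when `μ` and `λ` are similarly ordered. -/
lemma ruhe_scalar (d : ℕ) (lam μ : ℕ → ℝ) (S : ℕ → ℕ → ℝ)
    (hlam_pos : ∀ i, i < d → 0 < lam i)
    (hlam_mono : ∀ i j, i ≤ j → j < d → lam j ≤ lam i)
    (hμ_mono : ∀ i j, i ≤ j → j < d → μ j ≤ μ i)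
    (hμ0 : ∀ i, i < d → 0 ≤ μ i)
    (hS0 : ∀ j i, j < d → i < d → 0 ≤ S j i)
    (hrow : ∀ j, j < d → ∑ i ∈ range d, S j i = 1)
    (hcol : ∀ i, i < d → ∑ j ∈ range d, S j i = 1) :
    ∑ i ∈ range d, μ i * (lam i)⁻¹
      ≤ ∑ j ∈ range d, (∑ i ∈ range d, S j i * μ i) * (lam j)⁻¹ := by
  rcases Nat.eq_zero_or_pos d with hd | hd
  · simp [hd]
  set D : ℕ → ℝ := fun j => ∑ i ∈ range d, S j i * μ i with hD
  -- tail sums of D - μ are nonneg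
  have tail : ∀ m, m ≤ d → 0 ≤ ∑ j ∈ Ico m d, (D j - μ j) := by
    intro m hm
    set c : ℕ → ℝ := fun i => ∑ j ∈ Ico m d, S j i with hc
    have hDsum : ∑ j ∈ Ico m d, D j = ∑ i ∈ range d, c i * μ i := by
      rw [hD]
      rw [Finset.sum_comm]
      exact Finset.sum_congr rfl (fun i _ => by rw [hc, Finset.sum_mul])
    have hμsum : ∑ j ∈ Ico m d, μ j
        = ∑ i ∈ range d, (if m ≤ i then (1:ℝ) else 0) * μ i :=
      sum_ico_eq_indicator m d hm μ
    have hc0 : ∀ i, i < d → 0 ≤ c i := by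
      intro i hi
      apply Finset.sum_nonneg
      intro j hj
      rw [Finset.mem_Ico] at hj
      exact hS0 j i hj.2 hi
    have hc1 : ∀ i, i < d → c i ≤ 1 := by
      intro i hi
      rw [← hcol i hi, hc]
      apply Finset.sum_le_sum_of_subset_of_nonneg
      · intro j hj; rw [Finset.mem_Ico] at hj; rw [Finset.mem_range]; omega
      · intro j hj _; rw [Finset.mem_range] at hj; exact hS0 j i hj hi
    have hctot : ∑ i ∈ range d, c i = ((d - m : ℕ) : ℝ) := by
      rw [hc, Finset.sum_comm]
      have : ∀ j ∈ Ico m d, ∑ i ∈ range d, S j i = 1 := by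
        intro j hj; rw [Finset.mem_Ico] at hj; exact hrow j hj.2
      rw [Finset.sum_congr rfl this]
      simp [Nat.card_Ico]
    have key : 0 ≤ ∑ i ∈ range d, μ i * (c i - (if m ≤ i then (1:ℝ) else 0)) := by
      apply abel_nonneg d μ
      · exact hμ_mono
      · exact hμ0 (d-1) (by omega)
      · intro k hk
        have hesum := sum_range_indicator m k
        have hsplit : ∑ i ∈ range k, c i
            = ∑ i ∈ range d, c i - ∑ i ∈ Ico k d, c i := by
          rw [range_eq_Ico, range_eq_Ico, ← Finset.sum_Ico_consecutive _ (Nat.zero_le k) hk]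
          ring
        have hcub : ∑ i ∈ Ico k d, c i ≤ ((d - k : ℕ) : ℝ) := by
          calc ∑ i ∈ Ico k d, c i ≤ ∑ i ∈ Ico k d, (1:ℝ) := by
                apply Finset.sum_le_sum
                intro i hi; rw [Finset.mem_Ico] at hi; exact hc1 i hi.2
            _ = ((d - k : ℕ) : ℝ) := by simp [Nat.card_Ico]
        rw [Finset.sum_sub_distrib, hesum]
        have hlb : 0 ≤ ∑ i ∈ range k, c i :=
          Finset.sum_nonneg (fun i hi => hc0 i
            (by rw [Finset.mem_range] at hi; omega))
        rcases le_or_gt m k with h | h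
        · have h2 : ∑ i ∈ range k, c i = ((d - m:ℕ):ℝ) - ∑ i ∈ Ico k d, c i := by
            rw [hsplit, hctot]
          rw [Nat.cast_sub hk] at hcub
          rw [h2, Nat.cast_sub hm, Nat.cast_sub h]
          push_cast
          linarith
        · have h0 : k - m = 0 := by omega
          rw [h0, Nat.cast_zero]
          linarith
    have expand : ∑ j ∈ Ico m d, (D j - μ j)
        = ∑ i ∈ range d, μ i * (c i - (if m ≤ i then (1:ℝ) else 0)) := by
      rw [Finset.sum_sub_distrib, hDsum, hμsum, ← Finset.sum_sub_distrib]
      exact Finset.sum_congr rfl (fun i _ => by ring)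
    rw [expand]; exact key
  have main : 0 ≤ ∑ j ∈ range d, (lam j)⁻¹ * (D j - μ j) := by
    apply abel_tail d (fun j => (lam j)⁻¹) (fun j => D j - μ j)
    · intro i j hij hj
      exact inv_anti₀ (hlam_pos j hj) (hlam_mono i j hij hj)
    · exact le_of_lt (inv_pos.mpr (hlam_pos 0 hd))
    · exact tail
  have expand2 : ∑ j ∈ range d, (lam j)⁻¹ * (D j - μ j)
      = ∑ j ∈ range d, D j * (lam j)⁻¹ - ∑ i ∈ range d, μ i * (lam i)⁻¹ := by
    rw [← Finset.sum_sub_distrib]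
    exact Finset.sum_congr rfl (fun i _ => by ring)
  rw [expand2] at main
  linarith

/-- Core LP inequality. -/
lemma lp_scalar (d r : ℕ) (hrd : r < d) (lam μ : ℕ → ℝ) (t : ℝ)
    (hlam_pos : ∀ i, i < d → 0 < lam i)
    (hμ_mono : ∀ i j, i ≤ j → j < d → μ j ≤ μ i)
    (hμ0 : ∀ i, i < d → 0 ≤ μ i)
    (ht0 : 0 ≤ t)
    (ht : ∀ ℓ, r < ℓ → ℓ ≤ d → ((ℓ:ℝ) - r) ≤ t * ∑ i ∈ range ℓ, (lam i)⁻¹)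
    (hcon : ∑ i ∈ range d, μ i * (lam i)⁻¹ ≤ 1) :
    ∑ i ∈ Ico r d, μ i ≤ t := by
  have key : 0 ≤ ∑ i ∈ range d, μ i * (t * (lam i)⁻¹ - (if r ≤ i then (1:ℝ) else 0)) := by
    apply abel_nonneg d μ
    · exact hμ_mono
    · exact hμ0 (d-1) (by omega)
    · intro k hk
      rw [Finset.sum_sub_distrib, sum_range_indicator r k, ← Finset.mul_sum]
      rcases le_or_gt k r with h | h
      · have : k - r = 0 := by omega
        rw [this]
        simp only [Nat.cast_zero, sub_zero]
        apply mul_nonneg ht0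
        apply Finset.sum_nonneg
        intro i hi; rw [Finset.mem_range] at hi
        exact le_of_lt (inv_pos.mpr (hlam_pos i (by omega)))
      · have := ht k h hk
        rw [Nat.cast_sub (by omega)]
        linarith
  have expand : ∑ i ∈ range d, μ i * (t * (lam i)⁻¹ - (if r ≤ i then (1:ℝ) else 0))
      = t * ∑ i ∈ range d, μ i * (lam i)⁻¹ - ∑ i ∈ Ico r d, μ i := by
    rw [sum_ico_eq_indicator r d (le_of_lt hrd) μ, Finset.mul_sum, ← Finset.sum_sub_distrib]
    exact Finset.sum_congr rfl (fun i _ => by ring)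
  rw [expand] at key
  nlinarith

end Aux

section Aux2
open Matrix Finset

variable {d : ℕ}

lemma cdiagApply (U : Matrix (Fin d) (Fin d) ℝ) (w : Fin d → ℝ) (j k : Fin d) :
    (U * diagonal w * Uᵀ) j k = ∑ i, U j i * w i * U k i := by
  rw [Matrix.mul_apply]
  exact Finset.sum_congr rfl fun i _ => by
    rw [Matrix.mul_diagonal, Matrix.transpose_apply]

lemma orth_apply (U : Matrix (Fin d) (Fin d) ℝ) (j k : Fin d) :
    (U * Uᵀ) j k = ∑ i, U j i * U k i := by
  rw [Matrix.mul_apply]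
  exact Finset.sum_congr rfl fun i _ => by rw [Matrix.transpose_apply]

lemma cdiagMul (V : Matrix (Fin d) (Fin d) ℝ) (hV' : Vᵀ * V = 1) (a b : Fin d → ℝ) :
    (V * diagonal a * Vᵀ) * (V * diagonal b * Vᵀ)
      = V * diagonal (fun i => a i * b i) * Vᵀ := by
  have h : (V * diagonal a * Vᵀ) * (V * diagonal b * Vᵀ)
      = V * (diagonal a * (Vᵀ * V) * diagonal b) * Vᵀ := by
    simp only [Matrix.mul_assoc]
  rw [h, hV', Matrix.mul_one, Matrix.diagonal_mul_diagonal]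

lemma cdiagTrace (V : Matrix (Fin d) (Fin d) ℝ) (hV' : Vᵀ * V = 1) (a : Fin d → ℝ) :
    (V * diagonal a * Vᵀ).trace = ∑ i, a i := by
  rw [Matrix.trace_mul_comm, ← Matrix.mul_assoc, hV', Matrix.one_mul, Matrix.trace_diagonal]

lemma cdiagPsd (V : Matrix (Fin d) (Fin d) ℝ) (a : Fin d → ℝ) (ha : ∀ i, 0 ≤ a i) :
    (V * diagonal a * Vᵀ).PosSemidef := by
  have := (Matrix.posSemidef_diagonal_iff.mpr ha).mul_mul_conjTranspose_same V
  simpa [Matrix.conjTranspose_eq_transpose_of_trivial] using this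

lemma cdiagDet (A : Matrix (Fin d) (Fin d) ℝ) (hA : A * Aᵀ = 1) (v : Fin d → ℝ) (x : ℝ) :
    Matrix.det (x • (1 : Matrix (Fin d) (Fin d) ℝ) - A * diagonal v * Aᵀ)
      = ∏ i, (x - v i) := by
  have h1 : x • (1 : Matrix (Fin d) (Fin d) ℝ) - A * diagonal v * Aᵀ
      = A * (x • (1 : Matrix (Fin d) (Fin d) ℝ) - diagonal v) * Aᵀ := by
    rw [Matrix.mul_sub, Matrix.sub_mul]
    congr 1
    rw [Matrix.mul_smul, Matrix.mul_one, Matrix.smul_mul, hA]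
  rw [h1, Matrix.det_mul, Matrix.det_mul, mul_comm A.det, mul_assoc, ← Matrix.det_mul, hA,
    Matrix.det_one, mul_one, Matrix.smul_one_eq_diagonal, Matrix.diagonal_sub,
    Matrix.det_diagonal]

lemma spectral_real (M : Matrix (Fin d) (Fin d) ℝ) (hM : M.IsHermitian) :
    ∃ C : Matrix (Fin d) (Fin d) ℝ, C * Cᵀ = 1 ∧ M = C * diagonal hM.eigenvalues * Cᵀ := by
  refine ⟨hM.eigenvectorUnitary, ?_, ?_⟩
  · have h := (Matrix.mem_unitaryGroup_iff).mp hM.eigenvectorUnitary.2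
    simpa [Matrix.star_eq_conjTranspose,
      Matrix.conjTranspose_eq_transpose_of_trivial] using h
  · have h := hM.spectral_theorem
    simpa [RCLike.ofReal_real_eq_id, Matrix.star_eq_conjTranspose,
      Matrix.conjTranspose_eq_transpose_of_trivial] using h

lemma eig_multiset (M U : Matrix (Fin d) (Fin d) ℝ) (hM : M.IsHermitian) (hU : U * Uᵀ = 1)
    (w : Fin d → ℝ) (hMU : M = U * diagonal w * Uᵀ) :
    ((List.ofFn hM.eigenvalues : List ℝ) : Multiset ℝ) = ((List.ofFn w : List ℝ) : Multiset ℝ) := by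
  obtain ⟨C, hC, hMC⟩ := spectral_real M hM
  have hdet : ∀ x : ℝ, ∏ i, (x - hM.eigenvalues i) = ∏ i, (x - w i) := by
    intro x
    rw [← cdiagDet C hC hM.eigenvalues x, ← cdiagDet U hU w x, ← hMC, ← hMU]
  have hpoly : (∏ i, (Polynomial.X - Polynomial.C (hM.eigenvalues i)))
      = ∏ i, (Polynomial.X - Polynomial.C (w i)) := by
    apply Polynomial.funext
    intro x
    rw [Polynomial.eval_prod, Polynomial.eval_prod]
    simpa using hdet x
  have hroots : (Finset.univ.val.map hM.eigenvalues) = Finset.univ.val.map w := by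
    have e1 : (∏ i, (Polynomial.X - Polynomial.C (hM.eigenvalues i)))
        = ((Finset.univ.val.map hM.eigenvalues).map
            (fun a => Polynomial.X - Polynomial.C a)).prod := by
      rw [Multiset.map_map]; rfl
    have e2 : (∏ i, (Polynomial.X - Polynomial.C (w i)))
        = ((Finset.univ.val.map w).map (fun a => Polynomial.X - Polynomial.C a)).prod := by
      rw [Multiset.map_map]; rfl
    have := congrArg Polynomial.roots (e1 ▸ e2 ▸ hpoly)
    rwa [Polynomial.roots_multiset_prod_X_sub_C, Polynomial.roots_multiset_prod_X_sub_C] at this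
  rw [← Fin.univ_val_map, ← Fin.univ_val_map]
  exact hroots

lemma eigsDesc_conj (M U : Matrix (Fin d) (Fin d) ℝ) (hM : M.IsHermitian) (hU : U * Uᵀ = 1)
    (w : Fin d → ℝ) (hMU : M = U * diagonal w * Uᵀ)
    (hw : ∀ i j : Fin d, i ≤ j → w j ≤ w i) (i : Fin d) :
    eigsDesc M i.val = w i := by
  have h0 : (fun j : Fin d => if hA : M.IsHermitian then hA.eigenvalues j else 0)
      = hM.eigenvalues := by
    funext j; rw [dif_pos hM]
  have hlist : List.insertionSort (· ≥ ·) (List.ofFn (fun j : Fin d =>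
      if hA : M.IsHermitian then hA.eigenvalues j else 0)) = List.ofFn w := by
    rw [h0]
    haveI : Std.Antisymm (α := ℝ) (· ≥ ·) := ⟨fun a b h1 h2 => le_antisymm h2 h1⟩
    refine (fun hp h1 h2 => List.Perm.eq_of_pairwise' (r := fun x1 x2 : ℝ => x1 ≥ x2) h1 h2 hp) ?_ ?_ ?_
    · exact (List.perm_insertionSort _ _).trans
        (Multiset.coe_eq_coe.mp (eig_multiset M U hM hU w hMU))
    · exact List.pairwise_insertionSort _ _
    · rw [List.pairwise_ofFn]
      intro a b hab
      exact hw a b (le_of_lt hab)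
  show (List.insertionSort (· ≥ ·) (List.ofFn (fun j : Fin d =>
      if hA : M.IsHermitian then hA.eigenvalues j else 0))).getD i.val 0 = w i
  rw [hlist]
  rw [List.getD_eq_getElem _ _ (by simpa using i.isLt)]
  simp

lemma eigsDesc_antitone (M : Matrix (Fin d) (Fin d) ℝ) (i j : ℕ) (hij : i ≤ j) (hj : j < d) :
    eigsDesc M j ≤ eigsDesc M i := by
  rcases eq_or_lt_of_le hij with rfl | hlt
  · exact le_refl _
  set L := List.insertionSort (· ≥ ·) (List.ofFn (fun j : Fin d =>
      if hA : M.IsHermitian then hA.eigenvalues j else 0)) with hL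
  have hlen : L.length = d := by
    rw [hL, List.length_insertionSort, List.length_ofFn]
  have hs : L.Pairwise (· ≥ ·) := List.pairwise_insertionSort _ _
  have hget := hs.rel_get_of_le (a := ⟨i, by omega⟩) (b := ⟨j, by omega⟩) (by simpa using hij)
  show L.getD j 0 ≤ L.getD i 0
  rw [List.getD_eq_getElem _ _ (by omega), List.getD_eq_getElem _ _ (by omega)]
  simpa [List.get_eq_getElem] using hget

lemma eigsDesc_nonneg (M : Matrix (Fin d) (Fin d) ℝ) (hM : M.PosSemidef) (i : ℕ) (hi : i < d) :
    0 ≤ eigsDesc M i := by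
  set L := List.insertionSort (· ≥ ·) (List.ofFn (fun j : Fin d =>
      if hA : M.IsHermitian then hA.eigenvalues j else 0)) with hL
  have hlen : L.length = d := by
    rw [hL, List.length_insertionSort, List.length_ofFn]
  have hmem : L.getD i 0 ∈ L := by
    rw [List.getD_eq_getElem _ _ (by omega)]
    exact List.getElem_mem _
  rw [hL, List.mem_insertionSort, List.mem_ofFn] at hmem
  obtain ⟨j, hj⟩ := hmem
  show 0 ≤ L.getD i 0
  rw [← hj]
  simp only [dif_pos hM.isHermitian]
  exact hM.eigenvalues_nonneg j

lemma exists_conj_eigsDesc (M : Matrix (Fin d) (Fin d) ℝ) (hM : M.IsHermitian) :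
    ∃ W : Matrix (Fin d) (Fin d) ℝ, W * Wᵀ = 1 ∧
      M = W * diagonal (fun i : Fin d => eigsDesc M i.val) * Wᵀ := by
  obtain ⟨C, hC, hMC⟩ := spectral_real M hM
  set e := hM.eigenvalues with he
  set σ := Tuple.sort (fun i => -(e i)) with hσ
  have hmono := Tuple.monotone_sort (fun i => -(e i))
  set w : Fin d → ℝ := fun i => e (σ i) with hw
  have hwmono : ∀ i j : Fin d, i ≤ j → w j ≤ w i := by
    intro i j hij
    have := hmono hij
    simp only [Function.comp_apply] at this
    rw [hw]; simp only []
    linarith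
  set W : Matrix (Fin d) (Fin d) ℝ := C.submatrix id σ with hWdef
  have hWapp : ∀ j i, W j i = C j (σ i) := fun j i => rfl
  have hWorth : W * Wᵀ = 1 := by
    ext j k
    rw [orth_apply]
    have : ∑ i, W j i * W k i = ∑ i, C j i * C k i :=
      Equiv.sum_comp σ (fun i => C j i * C k i)
    rw [this, ← orth_apply, hC]
  have hMW : M = W * diagonal w * Wᵀ := by
    rw [hMC]
    ext j k
    rw [cdiagApply, cdiagApply]
    exact (Equiv.sum_comp σ (fun i => C j i * e i * C k i)).symm
  refine ⟨W, hWorth, ?_⟩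
  have : (fun i : Fin d => eigsDesc M i.val) = w := by
    funext i
    exact eigsDesc_conj M W hM hWorth w hMW hwmono i
  rw [this]
  exact hMW

end Aux2

/-- Trace-constrained maximization of the sum of the `d − r` smallest
eigenvalues: the supremum over symmetric positive semidefinite `T` with `Tr[T] ≤ 1` of
`Σ_{i=r+1}^{d} λ_i(Σ^{1/2} T Σ^{1/2})` equals
`max_{ℓ ∈ {r+1,…,d}} (ℓ − r) / Σ_{i=1}^{ℓ} 1/λ_i(Σ)`, where `lam : ℕ → ℝ` lists the
eigenvalues of `Σ` in nonincreasing order (0-based) and `Sigh = Σ^{1/2}`. -/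
theorem stmt6 (d r : ℕ) (hr : 0 < r) (hrd : r < d)
    (Sig : Matrix (Fin d) (Fin d) ℝ) (hSig : Sig.PosDef)
    (Sigh : Matrix (Fin d) (Fin d) ℝ) (hSigh : Sigh.PosDef) (hSighsq : Sigh * Sigh = Sig)
    (lam : ℕ → ℝ) (hmono : ∀ i j : ℕ, i ≤ j → j < d → lam j ≤ lam i)
    (V : Matrix (Fin d) (Fin d) ℝ) (hV : V * Vᵀ = 1)
    (hdiag : Sig = V * Matrix.diagonal (fun i : Fin d => lam i.val) * Vᵀ) :
    sSup { v : ℝ | ∃ T : Matrix (Fin d) (Fin d) ℝ, T.PosSemidef ∧ T.trace ≤ 1 ∧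
        v = ∑ i ∈ Finset.Ico r d, eigsDesc (Sigh * T * Sigh) i }
      = sSup { w : ℝ | ∃ ℓ : ℕ, r < ℓ ∧ ℓ ≤ d ∧
          w = ((ℓ : ℝ) - r) / ∑ i ∈ Finset.range ℓ, 1 / lam i } := by
  classical
  have hd0 : 0 < d := by omega
  have hV' : Vᵀ * V = 1 := mul_eq_one_comm.mp hV
  set lamF : Fin d → ℝ := fun i => lam i.val with hlamF
  have hdiag' : Sig = V * Matrix.diagonal lamF * Vᵀ := hdiag
  -- positivity of lam on range d
  have hlam_pos : ∀ i, i < d → 0 < lam i := by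
    intro i hi
    have hmul := eig_multiset Sig V hSig.isHermitian hV lamF hdiag'
    have hmem : lamF ⟨i, hi⟩ ∈ ((List.ofFn lamF : List ℝ) : Multiset ℝ) := by
      rw [Multiset.mem_coe, List.mem_ofFn]
      exact ⟨⟨i, hi⟩, rfl⟩
    rw [← hmul, Multiset.mem_coe, List.mem_ofFn] at hmem
    obtain ⟨j, hj⟩ := hmem
    have hpos := hSig.eigenvalues_pos j
    have : lamF ⟨i, hi⟩ = lam i := rfl
    rw [← this, ← hj]
    exact hpos
  -- square root
  set sq : Fin d → ℝ := fun i => Real.sqrt (lam i.val) with hsqdef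
  have hsq : ∀ i : Fin d, sq i * sq i = lam i.val :=
    fun i => Real.mul_self_sqrt (le_of_lt (hlam_pos i.val i.isLt))
  set Sh := V * Matrix.diagonal sq * Vᵀ with hShdef
  have hShpsd : Sh.PosSemidef := cdiagPsd V sq (fun i => Real.sqrt_nonneg _)
  have hShsq : Sh * Sh = Sig := by
    rw [hShdef, cdiagMul V hV' sq sq, hdiag']
    congr 1
    rw [funext hsq]
  have hSighSh : Sigh = Sh :=
    open scoped MatrixOrder in
    (CFC.sq_eq_sq_iff Sigh Sh hSigh.posSemidef.nonneg hShpsd.nonneg).mp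
      (by rw [pow_two, pow_two, hSighsq, hShsq])
  -- the two sets
  set Aset := { v : ℝ | ∃ T : Matrix (Fin d) (Fin d) ℝ, T.PosSemidef ∧ T.trace ≤ 1 ∧
      v = ∑ i ∈ Finset.Ico r d, eigsDesc (Sigh * T * Sigh) i } with hAsetdef
  set Bset := { w : ℝ | ∃ ℓ : ℕ, r < ℓ ∧ ℓ ≤ d ∧
      w = ((ℓ : ℝ) - r) / ∑ i ∈ Finset.range ℓ, 1 / lam i } with hBsetdef
  have hBne : Bset.Nonempty :=
    ⟨((d : ℝ) - r) / ∑ i ∈ Finset.range d, 1 / lam i, d, hrd, le_rfl, rfl⟩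
  have hsumpos : ∀ ℓ, 0 < ℓ → ℓ ≤ d → 0 < ∑ i ∈ Finset.range ℓ, 1 / lam i := by
    intro ℓ h1 h2
    apply Finset.sum_pos
    · intro i hi
      rw [Finset.mem_range] at hi
      exact one_div_pos.mpr (hlam_pos i (by omega))
    · exact Finset.nonempty_range_iff.mpr (by omega)
  have hBbdd : BddAbove Bset := by
    have hsub : Bset ⊆ (fun ℓ : ℕ => ((ℓ : ℝ) - r) / ∑ i ∈ Finset.range ℓ, 1 / lam i) ''
        (Set.Icc (r+1) d) := by
      rintro w ⟨ℓ, h1, h2, rfl⟩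
      exact ⟨ℓ, ⟨by omega, h2⟩, rfl⟩
    exact (((Set.finite_Icc _ _).image _).subset hsub).bddAbove
  set t := sSup Bset with htdef
  have ht_ge : ∀ ℓ, r < ℓ → ℓ ≤ d →
      ((ℓ : ℝ) - r) / (∑ i ∈ Finset.range ℓ, 1 / lam i) ≤ t :=
    fun ℓ h1 h2 => le_csSup hBbdd ⟨ℓ, h1, h2, rfl⟩
  have ht_pos : 0 < t := by
    refine lt_of_lt_of_le ?_ (ht_ge d hrd le_rfl)
    exact div_pos (sub_pos.mpr (Nat.cast_lt.mpr hrd)) (hsumpos d (by omega) le_rfl)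
  -- upper bound: every element of Aset is ≤ t
  have key : ∀ v ∈ Aset, v ≤ t := by
    rintro v ⟨T, hT, htrT, rfl⟩
    set M := Sigh * T * Sigh with hMdef
    have hMpsd : M.PosSemidef := by
      have h := hT.mul_mul_conjTranspose_same Sigh
      rwa [hSigh.isHermitian.eq] at h
    obtain ⟨W, hWorth, hMW⟩ := exists_conj_eigsDesc M hMpsd.isHermitian
    set Q := Vᵀ * W with hQdef
    have hQ : Q * Qᵀ = 1 := by
      rw [hQdef, Matrix.transpose_mul, Matrix.transpose_transpose]
      calc Vᵀ * W * (Wᵀ * V) = Vᵀ * (W * Wᵀ) * V := by simp only [Matrix.mul_assoc]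
        _ = 1 := by rw [hWorth, Matrix.mul_one, hV']
    have hQ' : Qᵀ * Q = 1 := mul_eq_one_comm.mp hQ
    have hrowQ : ∀ j : Fin d, ∑ i, Q j i * Q j i = 1 := by
      intro j
      have h : (Q * Qᵀ) j j = (1 : Matrix (Fin d) (Fin d) ℝ) j j := by rw [hQ]
      rw [orth_apply, Matrix.one_apply_eq] at h
      exact h
    have hcolQ : ∀ i : Fin d, ∑ j, Q j i * Q j i = 1 := by
      intro i
      have h : (Qᵀ * Q) i i = (1 : Matrix (Fin d) (Fin d) ℝ) i i := by rw [hQ']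
      rw [Matrix.mul_apply, Matrix.one_apply_eq] at h
      rw [← h]
      exact Finset.sum_congr rfl fun j _ => by rw [Matrix.transpose_apply]
    set N := Vᵀ * M * V with hNdef
    have hNQ : N = Q * Matrix.diagonal (fun i : Fin d => eigsDesc M i.val) * Qᵀ := by
      rw [hNdef, hQdef, Matrix.transpose_mul, Matrix.transpose_transpose]
      conv_lhs => rw [hMW]
      simp only [Matrix.mul_assoc]
    have hNjj : ∀ j : Fin d, N j j = ∑ i, Q j i * eigsDesc M i.val * Q j i := by
      intro j
      rw [hNQ, cdiagApply]
    set Sinv := V * Matrix.diagonal (fun i : Fin d => (lam i.val)⁻¹) * Vᵀ with hSinvdef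
    have hShSinvSh : Sh * Sinv * Sh = 1 := by
      rw [hShdef, hSinvdef, cdiagMul V hV', cdiagMul V hV']
      have hfun : (fun i => (fun i => sq i * (lam i.val)⁻¹) i * sq i)
          = fun _ : Fin d => (1 : ℝ) := by
        funext i
        have h2 : sq i * (lam i.val)⁻¹ * sq i = (sq i * sq i) * (lam i.val)⁻¹ := by ring
        simp only []
        rw [h2, hsq i, mul_inv_cancel₀ (ne_of_gt (hlam_pos _ i.isLt))]
      rw [hfun, Matrix.diagonal_one, Matrix.mul_one, hV]
    have htr1 : (Sinv * M).trace = T.trace := by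
      have hMSh : M = Sh * T * Sh := by rw [hMdef, hSighSh]
      have h1 : Sinv * M = (Sinv * Sh * T) * Sh := by
        rw [hMSh]; simp only [Matrix.mul_assoc]
      rw [h1, Matrix.trace_mul_comm]
      have h2 : Sh * (Sinv * Sh * T) = (Sh * Sinv * Sh) * T := by
        simp only [Matrix.mul_assoc]
      rw [h2, hShSinvSh, Matrix.one_mul]
    have htr2 : (Sinv * M).trace = ∑ j : Fin d, (lam j.val)⁻¹ * N j j := by
      have h1 : Sinv * M
          = V * (Matrix.diagonal (fun i : Fin d => (lam i.val)⁻¹) * (Vᵀ * M)) := by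
        rw [hSinvdef]; simp only [Matrix.mul_assoc]
      rw [h1, Matrix.trace_mul_comm]
      have h2 : Matrix.diagonal (fun i : Fin d => (lam i.val)⁻¹) * (Vᵀ * M) * V
          = Matrix.diagonal (fun i : Fin d => (lam i.val)⁻¹) * N := by
        rw [hNdef]; simp only [Matrix.mul_assoc]
      rw [h2, Matrix.trace]
      exact Finset.sum_congr rfl fun j _ => by
        rw [Matrix.diag_apply, Matrix.diagonal_mul]
    set S : ℕ → ℕ → ℝ := fun j i => if h : j < d ∧ i < d
      then Q ⟨j, h.1⟩ ⟨i, h.2⟩ * Q ⟨j, h.1⟩ ⟨i, h.2⟩ else 0 with hSdef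
    have hr1 : ∑ i ∈ Finset.range d, eigsDesc M i * (lam i)⁻¹
        ≤ ∑ j ∈ Finset.range d, (∑ i ∈ Finset.range d, S j i * eigsDesc M i) * (lam j)⁻¹ := by
      apply ruhe_scalar d lam (eigsDesc M) S hlam_pos hmono
        (fun i j hij hj => eigsDesc_antitone M i j hij hj)
        (fun i hi => eigsDesc_nonneg M hMpsd i hi)
      · intro j i hj hi
        rw [hSdef]
        simp only [dif_pos (And.intro hj hi)]
        exact mul_self_nonneg _
      · intro j hj
        rw [← Fin.sum_univ_eq_sum_range (fun i => S j i) d, ← hrowQ ⟨j, hj⟩]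
        refine Finset.sum_congr rfl fun i _ => ?_
        rw [hSdef]
        simp only [dif_pos (And.intro hj i.isLt), Fin.eta]
      · intro i hi
        rw [← Fin.sum_univ_eq_sum_range (fun j => S j i) d, ← hcolQ ⟨i, hi⟩]
        refine Finset.sum_congr rfl fun j _ => ?_
        rw [hSdef]
        simp only [dif_pos (And.intro j.isLt hi), Fin.eta]
    have hDj : ∀ j : Fin d, ∑ i ∈ Finset.range d, S j.val i * eigsDesc M i = N j j := by
      intro j
      rw [hNjj, ← Fin.sum_univ_eq_sum_range (fun i => S j.val i * eigsDesc M i) d]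
      refine Finset.sum_congr rfl fun i _ => ?_
      rw [hSdef]
      simp only [dif_pos (And.intro j.isLt i.isLt), Fin.eta]
      ring
    have hcon : ∑ i ∈ Finset.range d, eigsDesc M i * (lam i)⁻¹ ≤ 1 := by
      have e1 : ∑ j ∈ Finset.range d, (∑ i ∈ Finset.range d, S j i * eigsDesc M i) * (lam j)⁻¹
          = ∑ j : Fin d, (lam j.val)⁻¹ * N j j := by
        rw [← Fin.sum_univ_eq_sum_range
          (fun j => (∑ i ∈ Finset.range d, S j i * eigsDesc M i) * (lam j)⁻¹) d]
        exact Finset.sum_congr rfl fun j _ => by rw [hDj j]; ring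
      calc ∑ i ∈ Finset.range d, eigsDesc M i * (lam i)⁻¹
          ≤ ∑ j ∈ Finset.range d, (∑ i ∈ Finset.range d, S j i * eigsDesc M i) * (lam j)⁻¹ := hr1
        _ = (Sinv * M).trace := by rw [e1, ← htr2]
        _ = T.trace := htr1
        _ ≤ 1 := htrT
    apply lp_scalar d r hrd lam (eigsDesc M) t hlam_pos
      (fun i j hij hj => eigsDesc_antitone M i j hij hj)
      (fun i hi => eigsDesc_nonneg M hMpsd i hi)
      (le_of_lt ht_pos) ?_ hcon
    intro ℓ h1 h2
    have hle := ht_ge ℓ h1 h2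
    have hs := hsumpos ℓ (by omega) h2
    rw [div_le_iff₀ hs] at hle
    calc ((ℓ : ℝ) - r) ≤ t * ∑ i ∈ Finset.range ℓ, 1 / lam i := hle
      _ = t * ∑ i ∈ Finset.range ℓ, (lam i)⁻¹ := by simp only [one_div]
  -- lower bound: Bset ⊆ Aset
  have hBsubA : Bset ⊆ Aset := by
    rintro w ⟨ℓ, h1, h2, rfl⟩
    set sl := ∑ i ∈ Finset.range ℓ, 1 / lam i with hsl
    have hslpos : 0 < sl := hsumpos ℓ (by omega) h2
    set c := sl⁻¹ with hcdef
    have hcpos : 0 < c := inv_pos.mpr hslpos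
    set f : ℕ → ℝ := fun n => if n < ℓ then c * (lam n)⁻¹ else 0 with hfdef
    set g : Fin d → ℝ := fun i => f i.val with hgdef
    have hg0 : ∀ i, 0 ≤ g i := by
      intro i
      rw [hgdef]
      simp only [hfdef]
      split
      · next h => exact le_of_lt (mul_pos hcpos (inv_pos.mpr (hlam_pos i.val i.isLt)))
      · exact le_refl 0
    refine ⟨V * Matrix.diagonal g * Vᵀ, cdiagPsd V g hg0, ?_, ?_⟩
    · rw [cdiagTrace V hV' g]
      have e1 : ∑ i : Fin d, g i = ∑ i ∈ Finset.range d, f i :=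
        Fin.sum_univ_eq_sum_range f d
      have e2 : ∑ i ∈ Finset.range ℓ, f i = ∑ i ∈ Finset.range d, f i := by
        apply Finset.sum_subset (Finset.range_subset_range.mpr h2)
        intro x hx hnx
        rw [Finset.mem_range] at hnx
        rw [hfdef]
        simp only [if_neg hnx]
      have e3 : ∑ i ∈ Finset.range ℓ, f i = c * sl := by
        rw [hsl, Finset.mul_sum]
        refine Finset.sum_congr rfl fun i hi => ?_
        rw [Finset.mem_range] at hi
        rw [hfdef]
        simp only [if_pos hi, one_div]
      rw [e1, ← e2, e3, hcdef, inv_mul_cancel₀ (ne_of_gt hslpos)]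
    · set hfun : Fin d → ℝ := fun i => if i.val < ℓ then c else 0 with hhfundef
      have hMeq : Sigh * (V * Matrix.diagonal g * Vᵀ) * Sigh
          = V * Matrix.diagonal hfun * Vᵀ := by
        rw [hSighSh, hShdef, cdiagMul V hV', cdiagMul V hV']
        show V * Matrix.diagonal (fun i : Fin d => sq i * g i * sq i) * Vᵀ
            = V * Matrix.diagonal hfun * Vᵀ
        have hfe : (fun i : Fin d => sq i * g i * sq i) = hfun := by
          funext i
          simp only [hhfundef, hgdef, hfdef]
          split_ifs with hi
          · have h2' : sq i * (c * (lam i.val)⁻¹) * sq i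
                = (sq i * sq i) * (lam i.val)⁻¹ * c := by ring
            rw [h2', hsq i, mul_inv_cancel₀ (ne_of_gt (hlam_pos _ i.isLt)), one_mul]
          · ring
        rw [hfe]
      have hfun0 : ∀ i, 0 ≤ hfun i := by
        intro i
        simp only [hhfundef]
        split_ifs
        · exact le_of_lt hcpos
        · exact le_refl 0
      have hfunmono : ∀ i j : Fin d, i ≤ j → hfun j ≤ hfun i := by
        intro i j hij
        simp only [hhfundef]
        have hij' : i.val ≤ j.val := hij
        split_ifs with h1' h2' h3'
        · exact le_refl c
        · omega
        · exact le_of_lt hcpos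
        · exact le_refl 0
      have hMHerm : (Sigh * (V * Matrix.diagonal g * Vᵀ) * Sigh).IsHermitian := by
        rw [hMeq]
        exact (cdiagPsd V hfun hfun0).isHermitian
      have heig : ∀ i : Fin d, eigsDesc (Sigh * (V * Matrix.diagonal g * Vᵀ) * Sigh) i.val
          = hfun i :=
        fun i => eigsDesc_conj _ V hMHerm hV hfun hMeq hfunmono i
      have hsum : ∑ i ∈ Finset.Ico r d,
          eigsDesc (Sigh * (V * Matrix.diagonal g * Vᵀ) * Sigh) i
          = ((ℓ : ℝ) - r) * c := by
        have e4 : ∑ i ∈ Finset.Ico r d,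
            eigsDesc (Sigh * (V * Matrix.diagonal g * Vᵀ) * Sigh) i
            = ∑ i ∈ Finset.Ico r d, (if i < ℓ then c else 0) := by
          refine Finset.sum_congr rfl fun i hi => ?_
          rw [Finset.mem_Ico] at hi
          have := heig ⟨i, hi.2⟩
          rw [this]
        rw [e4, ← Finset.sum_Ico_consecutive _ (le_of_lt h1) h2]
        have e5 : ∑ i ∈ Finset.Ico r ℓ, (if i < ℓ then c else 0)
            = ((ℓ : ℝ) - r) * c := by
          have : ∀ i ∈ Finset.Ico r ℓ, (if i < ℓ then c else 0) = c := by
            intro i hi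
            rw [Finset.mem_Ico] at hi
            rw [if_pos hi.2]
          rw [Finset.sum_congr rfl this, Finset.sum_const, Nat.card_Ico, nsmul_eq_mul,
            Nat.cast_sub (le_of_lt h1)]
        have e6 : ∑ i ∈ Finset.Ico ℓ d, (if i < ℓ then c else 0) = 0 := by
          apply Finset.sum_eq_zero
          intro i hi
          rw [Finset.mem_Ico] at hi
          rw [if_neg (by omega)]
        rw [e5, e6, add_zero]
      rw [hsum, hcdef, div_eq_mul_inv]
  have hAne : Aset.Nonempty := hBne.mono hBsubA
  apply le_antisymm
  · exact csSup_le hAne key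
  · exact csSup_le_csSup ⟨t, fun v hv => key v hv⟩ hBne hBsubA
end

section
/- Let ℓ* ∈ {r+1, …, d} maximize ℓ ↦ (ℓ − r)/Σ_{i=1}^{ℓ}(1/λ_i(Σ)) over {r+1, …, d}, let V be an orthogonal matrix whose columns v_1, …, v_d are eigenvectors of Σ ordered by nonincreasing eigenvalue, and set Σ̃* = (Σ_{i=1}^{ℓ*} 1/λ_i(Σ))⁻¹ · V diag(1/λ_1(Σ), …, 1/λ_{ℓ*}(Σ), 0, …, 0) Vᵀ. Then Σ̃* is symmetric positive semidefinite, Tr[Σ̃*] = 1, and Σ_{i=r+1}^{d} λ_i(Σ^{1/2} Σ̃* Σ^{1/2}) = (ℓ* − r)/Σ_{i=1}^{ℓ*}(1/λ_i(Σ)). -/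
open Matrix

open Polynomial in
private lemma charpoly_conj_aux {d : ℕ} (U W A : Matrix (Fin d) (Fin d) ℝ) (h : U * W = 1) :
    (U * A * W).charpoly = A.charpoly := by
  have h1 : U.map C * W.map C = 1 := by
    rw [← Matrix.map_mul, h, Matrix.map_one _ (map_zero C) (map_one C)]
  have hcm : charmatrix (U * A * W) = U.map C * charmatrix A * W.map C := by
    unfold charmatrix
    rw [mul_sub, sub_mul]
    congr 1
    · rw [← (Matrix.scalar_commute (X : ℝ[X]) (fun r => Commute.all _ _) (U.map C)).eq,
        Matrix.mul_assoc, h1, Matrix.mul_one]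
    · simp only [RingHom.mapMatrix_apply, Matrix.map_mul, Matrix.mul_assoc]
  have h2 : (U.map C).det * (W.map C).det = 1 := by
    rw [← det_mul, h1, det_one]
  calc (U * A * W).charpoly = (U.map C).det * (charmatrix A).det * (W.map C).det := by
        rw [Matrix.charpoly, hcm, det_mul, det_mul]
    _ = (charmatrix A).det * ((U.map C).det * (W.map C).det) := by ring
    _ = A.charpoly := by rw [h2, mul_one, Matrix.charpoly]

open Polynomial in
private lemma charpoly_diagonal_aux {d : ℕ} (f : Fin d → ℝ) :
    (Matrix.diagonal f).charpoly = ∏ i, (X - C (f i)) := by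
  rw [Matrix.charpoly_of_upperTriangular _ (Matrix.blockTriangular_diagonal f)]
  simp

open Polynomial in
private lemma eig_perm_aux {d : ℕ} (M : Matrix (Fin d) (Fin d) ℝ) (hM : M.IsHermitian)
    (V : Matrix (Fin d) (Fin d) ℝ) (hV : V * Vᵀ = 1) (e : Fin d → ℝ)
    (hMe : M = V * Matrix.diagonal e * Vᵀ) :
    Multiset.map hM.eigenvalues Finset.univ.val = Multiset.map e Finset.univ.val := by
  have key : ∀ f : Fin d → ℝ,
      (∏ i, (X - C (f i))).roots = Multiset.map f Finset.univ.val := by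
    intro f
    have hco : (fun i : Fin d => X - C (f i)) = (fun a : ℝ => X - C a) ∘ f := rfl
    rw [Finset.prod_eq_multiset_prod, hco, ← Multiset.map_map,
      Polynomial.roots_multiset_prod_X_sub_C]
  have h1 : M.charpoly = ∏ i, (X - C (e i)) := by
    rw [hMe, charpoly_conj_aux _ _ _ hV, charpoly_diagonal_aux]
  have hU : (hM.eigenvectorUnitary : Matrix (Fin d) (Fin d) ℝ) *
      (star (hM.eigenvectorUnitary : Matrix (Fin d) (Fin d) ℝ)) = 1 :=
    Unitary.mul_star_self_of_mem (hM.eigenvectorUnitary).2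
  have h2 : M.charpoly = ∏ i, (X - C (hM.eigenvalues i)) := by
    have hdg : Matrix.diagonal ((RCLike.ofReal : ℝ → ℝ) ∘ hM.eigenvalues)
        = Matrix.diagonal hM.eigenvalues := by
      congr 1
    conv_lhs => rw [hM.spectral_theorem, Unitary.conjStarAlgAut_apply]
    rw [hdg, charpoly_conj_aux _ _ _ hU, charpoly_diagonal_aux]
  have h3 := congrArg Polynomial.roots (h2.symm.trans h1)
  rwa [key, key] at h3

private lemma sorted_eq_aux {d : ℕ} (f g : Fin d → ℝ)
    (hperm : Multiset.map f Finset.univ.val = Multiset.map g Finset.univ.val)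
    (hg : ∀ i j : Fin d, i < j → g j ≤ g i) :
    List.insertionSort (· ≥ ·) (List.ofFn f) = List.ofFn g := by
  haveI : IsAntisymm ℝ (· ≥ ·) := ⟨fun a b h1 h2 => le_antisymm h2 h1⟩
  have hp : (List.insertionSort (· ≥ ·) (List.ofFn f)).Perm (List.ofFn g) := by
    refine (List.perm_insertionSort _ _).trans (Multiset.coe_eq_coe.mp ?_)
    rw [← Fin.univ_val_map, ← Fin.univ_val_map]
    exact hperm
  have h1 : (List.insertionSort (· ≥ ·) (List.ofFn f)).Pairwise (· ≥ ·) :=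
    List.pairwise_insertionSort _ _
  have h2 : (List.ofFn g).Pairwise (· ≥ ·) :=
    List.pairwise_ofFn.mpr (fun i j hij => hg i j hij)
  exact List.Perm.eq_of_pairwise (fun a b _ _ h1 h2 => le_antisymm h2 h1) h1 h2 hp

/-- Let `ℓ* ∈ {r+1,…,d}` maximize `ℓ ↦ (ℓ−r)/Σ_{i=1}^{ℓ} 1/λ_i(Σ)`, let `V`
be orthogonal with columns eigenvectors of `Σ` ordered by nonincreasing eigenvalues `lam`
(0-based), and set `T* = (Σ_{i=1}^{ℓ*} 1/λ_i)⁻¹ · V diag(1/λ_1,…,1/λ_{ℓ*},0,…,0) Vᵀ`.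
Then `T*` is symmetric positive semidefinite, `Tr[T*] = 1`, and
`Σ_{i=r+1}^{d} λ_i(Σ^{1/2} T* Σ^{1/2}) = (ℓ*−r)/Σ_{i=1}^{ℓ*} 1/λ_i`. -/
theorem stmt7 (d r : ℕ) (hr : 0 < r) (hrd : r < d)
    (Sig : Matrix (Fin d) (Fin d) ℝ) (hSig : Sig.PosDef)
    (Sigh : Matrix (Fin d) (Fin d) ℝ) (hSigh : Sigh.PosDef) (hSighsq : Sigh * Sigh = Sig)
    (lam : ℕ → ℝ) (hmono : ∀ i j : ℕ, i ≤ j → j < d → lam j ≤ lam i)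
    (V : Matrix (Fin d) (Fin d) ℝ) (hV : V * Vᵀ = 1)
    (hdiag : Sig = V * Matrix.diagonal (fun i : Fin d => lam i.val) * Vᵀ)
    (lstar : ℕ) (hl1 : r < lstar) (hl2 : lstar ≤ d)
    (hmax : ∀ ℓ : ℕ, r < ℓ → ℓ ≤ d →
      ((ℓ : ℝ) - r) / ∑ i ∈ Finset.range ℓ, 1 / lam i
        ≤ ((lstar : ℝ) - r) / ∑ i ∈ Finset.range lstar, 1 / lam i) :
    let Tstar : Matrix (Fin d) (Fin d) ℝ :=
      (∑ i ∈ Finset.range lstar, 1 / lam i)⁻¹ •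
        (V * Matrix.diagonal (fun i : Fin d => if i.val < lstar then 1 / lam i.val else 0)
          * Vᵀ)
    Tstar.PosSemidef ∧ Tstar.trace = 1 ∧
      ∑ i ∈ Finset.Ico r d, eigsDesc (Sigh * Tstar * Sigh) i
        = ((lstar : ℝ) - r) / ∑ i ∈ Finset.range lstar, 1 / lam i := by
  intro Tstar
  set c : ℝ := ∑ i ∈ Finset.range lstar, 1 / lam i with hc_def
  have hct : ∀ (A : Matrix (Fin d) (Fin d) ℝ), Aᴴ = Aᵀ := fun A =>
    Matrix.conjTranspose_eq_transpose_of_trivial A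
  have hV' : Vᵀ * V = 1 := mul_eq_one_comm.mp hV
  -- lam is positive on Fin d
  have hDpd : (Matrix.diagonal (fun i : Fin d => lam i.val)).PosDef := by
    have hD : Matrix.diagonal (fun i : Fin d => lam i.val) = Vᵀ * Sig * V := by
      rw [hdiag]
      refine Eq.symm ?_
      calc Vᵀ * (V * Matrix.diagonal (fun i : Fin d => lam i.val) * Vᵀ) * V
          = (Vᵀ * V) * Matrix.diagonal (fun i : Fin d => lam i.val) * (Vᵀ * V) := by
            simp only [Matrix.mul_assoc]
        _ = Matrix.diagonal (fun i : Fin d => lam i.val) := by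
            rw [hV', Matrix.one_mul, Matrix.mul_one]
    rw [hD]
    refine Matrix.PosDef.of_dotProduct_mulVec_pos ?_ ?_
    · have h1 := Matrix.isHermitian_conjTranspose_mul_mul V hSig.1
      rwa [hct V] at h1
    · intro x hx
      have hVx : V *ᵥ x ≠ 0 := by
        intro h0
        apply hx
        have h1 : (Vᵀ * V) *ᵥ x = 0 := by
          rw [← Matrix.mulVec_mulVec, h0, Matrix.mulVec_zero]
        rwa [hV', Matrix.one_mulVec] at h1
      have h2 := hSig.dotProduct_mulVec_pos hVx
      have h3 : star x ⬝ᵥ ((Vᵀ * Sig * V) *ᵥ x)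
          = star (V *ᵥ x) ⬝ᵥ (Sig *ᵥ (V *ᵥ x)) := by
        rw [← Matrix.mulVec_mulVec, ← Matrix.mulVec_mulVec, Matrix.dotProduct_mulVec,
          star_trivial, star_trivial, Matrix.vecMul_transpose]
      rw [h3]
      exact h2
  have hlamf : ∀ i : Fin d, 0 < lam i.val := fun i =>
    (Matrix.posDef_diagonal_iff.mp hDpd) i
  have hlam : ∀ i : ℕ, i < d → 0 < lam i := fun i h => hlamf ⟨i, h⟩
  have hc : 0 < c := by
    apply Finset.sum_pos
    · intro i hi
      exact one_div_pos.mpr (hlam i (lt_of_lt_of_le (Finset.mem_range.mp hi) hl2))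
    · exact ⟨0, Finset.mem_range.mpr (lt_of_le_of_lt (Nat.zero_le r) hl1)⟩
  -- a helper for conjugation products
  have hmul : ∀ A B : Matrix (Fin d) (Fin d) ℝ,
      (V * A * Vᵀ) * (V * B * Vᵀ) = V * (A * B) * Vᵀ := by
    intro A B
    calc (V * A * Vᵀ) * (V * B * Vᵀ) = V * (A * ((Vᵀ * V) * (B * Vᵀ))) := by
          simp only [Matrix.mul_assoc]
      _ = V * (A * B) * Vᵀ := by rw [hV']; simp only [Matrix.one_mul, Matrix.mul_assoc]
  -- rewrite Tstar as a conjugated diagonal matrix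
  have hTstar : Tstar = V * Matrix.diagonal
      (fun i : Fin d => if i.val < lstar then c⁻¹ * (1 / lam i.val) else 0) * Vᵀ := by
    have hdiagsm : c⁻¹ • (Matrix.diagonal
        (fun i : Fin d => if i.val < lstar then 1 / lam i.val else 0))
        = Matrix.diagonal
          (fun i : Fin d => if i.val < lstar then c⁻¹ * (1 / lam i.val) else 0) := by
      rw [← Matrix.diagonal_smul]
      refine congrArg Matrix.diagonal (funext fun i => ?_)
      by_cases h : i.val < lstar <;> simp [h]
    show c⁻¹ • (V * Matrix.diagonal
      (fun i : Fin d => if i.val < lstar then 1 / lam i.val else 0) * Vᵀ) = _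
    rw [← hdiagsm, Matrix.mul_smul, Matrix.smul_mul]
  have hTnonneg : ∀ i : Fin d,
      0 ≤ (fun i : Fin d => if i.val < lstar then c⁻¹ * (1 / lam i.val) else 0) i := by
    intro i
    by_cases h : i.val < lstar
    · simp only [h, if_true]
      exact mul_nonneg (inv_nonneg.mpr hc.le) (one_div_nonneg.mpr (hlamf ⟨i.val, i.isLt⟩).le)
    · simp [h]
  have hTpsd : Tstar.PosSemidef := by
    rw [hTstar]
    have h1 : (Matrix.diagonal
        (fun i : Fin d => if i.val < lstar then c⁻¹ * (1 / lam i.val) else 0)).PosSemidef :=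
      Matrix.PosSemidef.diagonal hTnonneg
    have h2 := h1.mul_mul_conjTranspose_same V
    rwa [hct V] at h2
  -- trace
  have hfilter : (Finset.range d).filter (· < lstar) = Finset.range lstar := by
    ext x
    simp only [Finset.mem_filter, Finset.mem_range]
    exact ⟨fun h => h.2, fun h => ⟨lt_of_lt_of_le h hl2, h⟩⟩
  have htr : Tstar.trace = 1 := by
    rw [hTstar, Matrix.trace_mul_cycle, hV', Matrix.one_mul, Matrix.trace_diagonal]
    have h1 : ∑ i : Fin d, (if i.val < lstar then c⁻¹ * (1 / lam i.val) else 0)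
        = ∑ i ∈ Finset.range d, (if i < lstar then c⁻¹ * (1 / lam i) else 0) :=
      Fin.sum_univ_eq_sum_range (fun i => if i < lstar then c⁻¹ * (1 / lam i) else 0) d
    rw [h1, ← Finset.sum_filter, hfilter, ← Finset.mul_sum, ← hc_def,
      inv_mul_cancel₀ hc.ne']
  refine ⟨hTpsd, htr, ?_⟩
  -- square root identification
  set s : Fin d → ℝ := fun i => Real.sqrt (lam i.val) with hs_def
  have hss : ∀ i : Fin d, s i * s i = lam i.val := fun i =>
    Real.mul_self_sqrt (hlamf i).le
  have hSeq : Sigh = V * Matrix.diagonal s * Vᵀ := by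
    have h1 : (Matrix.diagonal s).PosSemidef :=
      Matrix.PosSemidef.diagonal (fun i => Real.sqrt_nonneg _)
    have hS_psd : (V * Matrix.diagonal s * Vᵀ).PosSemidef := by
      have h2 := h1.mul_mul_conjTranspose_same V
      rwa [hct V] at h2
    have hsq : Sigh ^ 2 = (V * Matrix.diagonal s * Vᵀ) ^ 2 := by
      rw [pow_two, pow_two, hSighsq, hmul, Matrix.diagonal_mul_diagonal, hdiag]
      exact congrArg (fun D => V * D * Vᵀ)
        (congrArg Matrix.diagonal (funext fun i => (hss i).symm))
    open MatrixOrder in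
    exact (CFC.sq_eq_sq_iff Sigh _ hSigh.posSemidef.nonneg hS_psd.nonneg).mp hsq
  -- the conjugated matrix
  set e : Fin d → ℝ := fun i => if i.val < lstar then c⁻¹ else 0 with he_def
  have hM : Sigh * Tstar * Sigh = V * Matrix.diagonal e * Vᵀ := by
    rw [hTstar, hSeq, hmul, hmul, Matrix.diagonal_mul_diagonal, Matrix.diagonal_mul_diagonal]
    have hfun : (fun i : Fin d =>
        s i * (if i.val < lstar then c⁻¹ * (1 / lam i.val) else 0) * s i) = e := by
      funext i
      by_cases h : i.val < lstar
      · simp only [h, if_true, he_def]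
        have h2 : s i * (c⁻¹ * (1 / lam i.val)) * s i
            = c⁻¹ * ((s i * s i) * (lam i.val)⁻¹) := by ring
        rw [h2, hss i, mul_inv_cancel₀ (hlamf i).ne', mul_one]
      · simp [h, he_def]
    exact congrArg (fun D => V * D * Vᵀ) (congrArg Matrix.diagonal hfun)
  have hMH : (Sigh * Tstar * Sigh).IsHermitian := by
    show (Sigh * Tstar * Sigh)ᴴ = _
    rw [hM, Matrix.conjTranspose_mul, Matrix.conjTranspose_mul, hct Vᵀ,
      Matrix.transpose_transpose, hct (Matrix.diagonal e), Matrix.diagonal_transpose, hct V]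
    simp only [Matrix.mul_assoc]
  have hperm := eig_perm_aux _ hMH V hV e hM
  have hemono : ∀ i j : Fin d, i < j → e j ≤ e i := by
    intro i j hij
    by_cases hj : j.val < lstar
    · have hi : i.val < lstar := lt_trans hij hj
      simp [he_def, hi, hj]
    · by_cases hi : i.val < lstar
      · simp only [he_def, hi, hj, if_true, if_false]
        exact inv_nonneg.mpr hc.le
      · simp [he_def, hi, hj]
  have hsorted : List.insertionSort (· ≥ ·)
      (List.ofFn fun j : Fin d => hMH.eigenvalues j) = List.ofFn e :=
    sorted_eq_aux _ e hperm hemono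
  have heig : ∀ i ∈ Finset.Ico r d,
      eigsDesc (Sigh * Tstar * Sigh) i = if i < lstar then c⁻¹ else 0 := by
    intro i hi
    obtain ⟨hir, hid⟩ := Finset.mem_Ico.mp hi
    unfold eigsDesc
    simp only [dif_pos hMH]
    rw [hsorted]
    have hlen : i < (List.ofFn e).length := by simpa using hid
    rw [List.getD_eq_getElem _ _ hlen, List.getElem_ofFn]
  rw [Finset.sum_congr rfl heig, ← Finset.sum_filter]
  have hfil2 : (Finset.Ico r d).filter (· < lstar) = Finset.Ico r lstar := by
    ext x
    simp only [Finset.mem_filter, Finset.mem_Ico]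
    constructor
    · rintro ⟨⟨h1, _⟩, h2⟩; exact ⟨h1, h2⟩
    · rintro ⟨h1, h2⟩; exact ⟨⟨h1, lt_of_lt_of_le h2 hl2⟩, h2⟩
  rw [hfil2, Finset.sum_const, Nat.card_Ico, nsmul_eq_mul, div_eq_mul_inv]
  congr 1
  push_cast [hl1.le]
  ring
end

section
/- An index ℓ ∈ {r+1, …, d} maximizes a_ℓ = (ℓ − r)/Σ_{i=1}^{ℓ}(1/λ_i) over {r+1, …, d} if and only if (ℓ − r)/λ_ℓ ≤ Σ_{i=1}^{ℓ}(1/λ_i), and either ℓ = d or Σ_{i=1}^{ℓ}(1/λ_i) ≤ (ℓ − r)/λ_{ℓ+1}. In particular, every ℓ satisfying these two conditions attains the same value of a_ℓ. -/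
private lemma key_iff₁ (x S L : ℝ) (hS : 0 < S) (hL : 0 < L) :
    (x + 1) / (S + 1 / L) ≤ x / S ↔ S * L ≤ x := by
  have h1 : 0 < S + 1 / L := by positivity
  have hu : 1 / L * L = 1 := one_div_mul_cancel hL.ne'
  rw [div_le_div_iff₀ h1 hS]
  constructor
  · intro h
    have h2 : S ≤ x * (1 / L) := by nlinarith
    have h3 : S * L ≤ x * (1 / L) * L := mul_le_mul_of_nonneg_right h2 hL.le
    calc S * L ≤ x * (1 / L) * L := h3
      _ = x * (1 / L * L) := by ring
      _ = x := by rw [hu, mul_one]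
  · intro h
    have h2 : S * L * (1 / L) ≤ x * (1 / L) :=
      mul_le_mul_of_nonneg_right h (by positivity)
    have h3 : S ≤ x * (1 / L) := by
      calc S = S * L * (1 / L) := by
            rw [mul_assoc, mul_comm L (1 / L), hu, mul_one]
        _ ≤ x * (1 / L) := h2
    nlinarith

private lemma key_iff₂ (x S L : ℝ) (hS : 0 < S) (hL : 0 < L) :
    x / S ≤ (x + 1) / (S + 1 / L) ↔ x ≤ S * L := by
  have h1 : 0 < S + 1 / L := by positivity
  have hu : 1 / L * L = 1 := one_div_mul_cancel hL.ne'
  rw [div_le_div_iff₀ hS h1]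
  constructor
  · intro h
    have h2 : x * (1 / L) ≤ S := by nlinarith
    have h3 : x * (1 / L) * L ≤ S * L := mul_le_mul_of_nonneg_right h2 hL.le
    calc x = x * (1 / L * L) := by rw [hu, mul_one]
      _ = x * (1 / L) * L := by ring
      _ ≤ S * L := h3
  · intro h
    have h2 : x * (1 / L) ≤ S * L * (1 / L) :=
      mul_le_mul_of_nonneg_right h (by positivity)
    have h3 : x * (1 / L) ≤ S := by
      calc x * (1 / L) ≤ S * L * (1 / L) := h2
        _ = S * (1 / L * L) := by ring
        _ = S := by rw [hu, mul_one]
    nlinarith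

/-- With `lam : ℕ → ℝ` positive and nonincreasing on `{0,…,d−1}` (0-based,
so `λ_i = lam (i−1)` for the paper's 1-based `λ_1 ≥ ⋯ ≥ λ_d > 0`), an index
`ℓ ∈ {r+1,…,d}` maximizes `a_ℓ = (ℓ−r)/Σ_{i=1}^{ℓ} 1/λ_i` over `{r+1,…,d}` iff
`(ℓ−r)/λ_ℓ ≤ Σ_{i=1}^{ℓ} 1/λ_i` and (`ℓ = d` or `Σ_{i=1}^{ℓ} 1/λ_i ≤ (ℓ−r)/λ_{ℓ+1}`);
moreover every index satisfying these two conditions attains the same value of `a_ℓ`. -/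
theorem stmt8 (d r : ℕ) (hr : 0 < r) (hrd : r < d)
    (lam : ℕ → ℝ) (hpos : ∀ i, i < d → 0 < lam i)
    (hmono : ∀ i j : ℕ, i ≤ j → j < d → lam j ≤ lam i) :
    (∀ ℓ : ℕ, r < ℓ → ℓ ≤ d →
      ((∀ ℓ' : ℕ, r < ℓ' → ℓ' ≤ d →
          ((ℓ' : ℝ) - r) / ∑ i ∈ Finset.range ℓ', 1 / lam i
            ≤ ((ℓ : ℝ) - r) / ∑ i ∈ Finset.range ℓ, 1 / lam i)
        ↔ (((ℓ : ℝ) - r) / lam (ℓ - 1) ≤ ∑ i ∈ Finset.range ℓ, 1 / lam i ∧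
            (ℓ = d ∨ ∑ i ∈ Finset.range ℓ, 1 / lam i ≤ ((ℓ : ℝ) - r) / lam ℓ))))
    ∧ (∀ ℓ₁ ℓ₂ : ℕ, r < ℓ₁ → ℓ₁ ≤ d → r < ℓ₂ → ℓ₂ ≤ d →
        ((ℓ₁ : ℝ) - r) / lam (ℓ₁ - 1) ≤ ∑ i ∈ Finset.range ℓ₁, 1 / lam i →
        (ℓ₁ = d ∨ ∑ i ∈ Finset.range ℓ₁, 1 / lam i ≤ ((ℓ₁ : ℝ) - r) / lam ℓ₁) →
        ((ℓ₂ : ℝ) - r) / lam (ℓ₂ - 1) ≤ ∑ i ∈ Finset.range ℓ₂, 1 / lam i →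
        (ℓ₂ = d ∨ ∑ i ∈ Finset.range ℓ₂, 1 / lam i ≤ ((ℓ₂ : ℝ) - r) / lam ℓ₂) →
        ((ℓ₁ : ℝ) - r) / ∑ i ∈ Finset.range ℓ₁, 1 / lam i
          = ((ℓ₂ : ℝ) - r) / ∑ i ∈ Finset.range ℓ₂, 1 / lam i) := by
  set S : ℕ → ℝ := fun n => ∑ i ∈ Finset.range n, 1 / lam i with hSdef
  have hS' : ∀ n, ∑ i ∈ Finset.range n, 1 / lam i = S n := fun n => rfl
  simp only [hS']
  have hSsucc : ∀ n, S (n + 1) = S n + 1 / lam n := fun n => Finset.sum_range_succ _ n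
  have hSpos : ∀ n, 0 < n → n ≤ d → 0 < S n := by
    intro n h1 h2
    apply Finset.sum_pos
    · intro i hi
      exact one_div_pos.mpr (hpos i (lt_of_lt_of_le (Finset.mem_range.mp hi) h2))
    · exact Finset.nonempty_range_iff.mpr h1.ne'
  -- step comparison lemmas
  have hstep₁ : ∀ m : ℕ, r < m → m < d →
      (((((m + 1 : ℕ)) : ℝ) - r) / S (m + 1) ≤ ((m : ℝ) - r) / S m ↔
        S m * lam m ≤ (m : ℝ) - r) := by
    intro m h1 h2
    have hSm : 0 < S m := hSpos m (by omega) h2.le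
    have hL : 0 < lam m := hpos m h2
    rw [hSsucc]
    push_cast
    rw [show ((m : ℝ) + 1 - r) = ((m : ℝ) - r) + 1 by ring]
    exact key_iff₁ ((m : ℝ) - r) (S m) (lam m) hSm hL
  have hstep₂ : ∀ m : ℕ, r < m → m < d →
      (((m : ℝ) - r) / S m ≤ ((((m + 1 : ℕ)) : ℝ) - r) / S (m + 1) ↔
        (m : ℝ) - r ≤ S m * lam m) := by
    intro m h1 h2
    have hSm : 0 < S m := hSpos m (by omega) h2.le
    have hL : 0 < lam m := hpos m h2
    rw [hSsucc]
    push_cast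
    rw [show ((m : ℝ) + 1 - r) = ((m : ℝ) - r) + 1 by ring]
    exact key_iff₂ ((m : ℝ) - r) (S m) (lam m) hSm hL
  -- the "decreasing" condition propagates upward (weak and strict)
  have hDprop : ∀ p : ℕ, r < p → ∀ q : ℕ, p ≤ q → q < d →
      S p * lam p ≤ (p : ℝ) - r → S q * lam q ≤ (q : ℝ) - r := by
    intro p hp q hpq
    induction q, hpq using Nat.le_induction with
    | base => exact fun _ h => h
    | succ q hq ih =>
      intro hqd hbase
      have hq' : q < d := by omega
      have hD := ih hq' hbase
      have hLq : 0 < lam q := hpos q hq'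
      have hSq1 : 0 < S (q + 1) := hSpos (q + 1) (by omega) (by omega)
      have h1 : S (q + 1) * lam (q + 1) ≤ S (q + 1) * lam q :=
        mul_le_mul_of_nonneg_left (hmono q (q + 1) (by omega) hqd) hSq1.le
      have h2 : S (q + 1) * lam q = S q * lam q + 1 := by
        rw [hSsucc, add_mul, one_div_mul_cancel hLq.ne']
      push_cast
      calc S (q + 1) * lam (q + 1) ≤ S (q + 1) * lam q := h1
        _ = S q * lam q + 1 := h2
        _ ≤ (q : ℝ) - r + 1 := by linarith
        _ = (q : ℝ) + 1 - r := by ring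
  have hDprop' : ∀ p : ℕ, r < p → ∀ q : ℕ, p ≤ q → q < d →
      S p * lam p < (p : ℝ) - r → S q * lam q < (q : ℝ) - r := by
    intro p hp q hpq
    induction q, hpq using Nat.le_induction with
    | base => exact fun _ h => h
    | succ q hq ih =>
      intro hqd hbase
      have hq' : q < d := by omega
      have hD := ih hq' hbase
      have hLq : 0 < lam q := hpos q hq'
      have hSq1 : 0 < S (q + 1) := hSpos (q + 1) (by omega) (by omega)
      have h1 : S (q + 1) * lam (q + 1) ≤ S (q + 1) * lam q :=
        mul_le_mul_of_nonneg_left (hmono q (q + 1) (by omega) hqd) hSq1.le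
      have h2 : S (q + 1) * lam q = S q * lam q + 1 := by
        rw [hSsucc, add_mul, one_div_mul_cancel hLq.ne']
      push_cast
      calc S (q + 1) * lam (q + 1) ≤ S (q + 1) * lam q := h1
        _ = S q * lam q + 1 := h2
        _ < (q : ℝ) - r + 1 := by linarith
        _ = (q : ℝ) + 1 - r := by ring
  -- chaining
  have hchain_down : ∀ p : ℕ, r < p → ∀ q : ℕ, p ≤ q → q ≤ d →
      (∀ m, p ≤ m → m < q → S m * lam m ≤ (m : ℝ) - r) →
      ((q : ℝ) - r) / S q ≤ ((p : ℝ) - r) / S p := by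
    intro p hp q hpq
    induction q, hpq using Nat.le_induction with
    | base => exact fun _ _ => le_refl _
    | succ q hq ih =>
      intro hqd hD
      have ih' := ih (by omega) (fun m h1 h2 => hD m h1 (by omega))
      have hstep := (hstep₁ q (lt_of_lt_of_le hp hq) (by omega)).mpr
        (hD q hq (by omega))
      exact le_trans hstep ih'
  have hchain_up : ∀ p : ℕ, r < p → ∀ q : ℕ, p ≤ q → q ≤ d →
      (∀ m, p ≤ m → m < q → (m : ℝ) - r ≤ S m * lam m) →
      ((p : ℝ) - r) / S p ≤ ((q : ℝ) - r) / S q := by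
    intro p hp q hpq
    induction q, hpq using Nat.le_induction with
    | base => exact fun _ _ => le_refl _
    | succ q hq ih =>
      intro hqd hU
      have ih' := ih (by omega) (fun m h1 h2 => hU m h1 (by omega))
      have hstep := (hstep₂ q (lt_of_lt_of_le hp hq) (by omega)).mpr
        (hU q hq (by omega))
      exact le_trans ih' hstep
  -- condition conversions
  have hC1iff : ∀ m : ℕ, r < m → m + 1 ≤ d →
      (((((m + 1 : ℕ)) : ℝ) - r) / lam m ≤ S (m + 1) ↔
        (m : ℝ) - r ≤ S m * lam m) := by
    intro m hm hmd
    have hL : 0 < lam m := hpos m (by omega)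
    rw [div_le_iff₀ hL, hSsucc, add_mul, one_div_mul_cancel hL.ne']
    push_cast
    constructor <;> intro h <;> linarith
  have hC2iff : ∀ m : ℕ, r < m → m < d →
      (S m ≤ ((m : ℝ) - r) / lam m ↔ S m * lam m ≤ (m : ℝ) - r) :=
    fun m _ h => le_div_iff₀ (hpos m h)
  have hC1base : ((((r + 1 : ℕ)) : ℝ) - r) / lam r ≤ S (r + 1) := by
    rw [show ((((r + 1 : ℕ)) : ℝ) - r) = 1 by push_cast; ring, div_eq_mul_one_div,
      one_mul]
    exact Finset.single_le_sum (f := fun i => 1 / lam i)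
      (fun i hi => (one_div_pos.mpr (hpos i (by
        have := Finset.mem_range.mp hi; omega))).le)
      (Finset.self_mem_range_succ r)
  -- main iff
  have hmain : ∀ ℓ : ℕ, r < ℓ → ℓ ≤ d →
      ((∀ ℓ' : ℕ, r < ℓ' → ℓ' ≤ d →
          ((ℓ' : ℝ) - r) / S ℓ' ≤ ((ℓ : ℝ) - r) / S ℓ)
        ↔ (((ℓ : ℝ) - r) / lam (ℓ - 1) ≤ S ℓ ∧
            (ℓ = d ∨ S ℓ ≤ ((ℓ : ℝ) - r) / lam ℓ))) := by
    intro ℓ hℓr hℓd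
    constructor
    · intro hmax
      constructor
      · rcases eq_or_lt_of_le (Nat.succ_le_of_lt hℓr) with heq | hlt
        · rw [← heq]
          simpa using hC1base
        · obtain ⟨m, rfl⟩ : ∃ m, ℓ = m + 1 := ⟨ℓ - 1, by omega⟩
          simp only [Nat.add_sub_cancel]
          refine (hC1iff m (by omega) hℓd).mpr ?_
          refine (hstep₂ m (by omega) (by omega)).mp ?_
          exact hmax m (by omega) (by omega)
      · rcases eq_or_lt_of_le hℓd with heq | hlt
        · exact Or.inl heq
        · right
          refine (hC2iff ℓ hℓr hlt).mpr ?_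
          refine (hstep₁ ℓ hℓr hlt).mp ?_
          exact hmax (ℓ + 1) (by omega) (by omega)
    · rintro ⟨h1, h2⟩ ℓ' hℓ'r hℓ'd
      rcases lt_trichotomy ℓ' ℓ with hlt | heq | hgt
      · obtain ⟨m0, rfl⟩ : ∃ m, ℓ = m + 1 := ⟨ℓ - 1, by omega⟩
        simp only [Nat.add_sub_cancel] at h1
        have hU0 : (m0 : ℝ) - r ≤ S m0 * lam m0 := (hC1iff m0 (by omega) hℓd).mp h1
        have hUall : ∀ m, ℓ' ≤ m → m < m0 + 1 → (m : ℝ) - r ≤ S m * lam m := by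
          intro m hm1 hm2
          by_contra hc
          push_neg at hc
          have := hDprop' m (by omega) m0 (by omega) (by omega) hc
          linarith
        exact hchain_up ℓ' hℓ'r (m0 + 1) (by omega) hℓd hUall
      · rw [heq]
      · have hℓd' : ℓ < d := by omega
        have hD0 : S ℓ * lam ℓ ≤ (ℓ : ℝ) - r := by
          rcases h2 with h2 | h2
          · omega
          · exact (hC2iff ℓ hℓr hℓd').mp h2
        have hDall : ∀ m, ℓ ≤ m → m < ℓ' → S m * lam m ≤ (m : ℝ) - r :=
          fun m hm1 hm2 => hDprop ℓ hℓr m hm1 (by omega) hD0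
        exact hchain_down ℓ hℓr ℓ' (by omega) hℓ'd hDall
  refine ⟨hmain, ?_⟩
  intro ℓ₁ ℓ₂ h1r h1d h2r h2d hA1 hB1 hA2 hB2
  exact le_antisymm
    ((hmain ℓ₂ h2r h2d).mpr ⟨hA2, hB2⟩ ℓ₁ h1r h1d)
    ((hmain ℓ₁ h1r h1d).mpr ⟨hA1, hB1⟩ ℓ₂ h2r h2d)
end

section
/- The sequence a_ℓ = (ℓ − r)/Σ_{i=1}^{ℓ}(1/λ_i), ℓ ∈ {r, r+1, …, d} (with a_r = 0), is unimodal: there exists ℓ₀ ∈ {r+1, …, d} such that a_ℓ is nondecreasing for r ≤ ℓ ≤ ℓ₀ and nonincreasing for ℓ₀ ≤ ℓ ≤ d. Equivalently, the sequence ζ_ℓ = Σ_{i=1}^{ℓ}(1/λ_i) − (ℓ − r)/λ_{ℓ+1}, which has the same sign as a_{ℓ+1} − a_ℓ, is nonincreasing in ℓ ∈ {r, …, d−1} and is positive at ℓ = r. -/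
/-- Unimodality: with `lam : ℕ → ℝ` positive and nonincreasing on
`{0,…,d−1}` (0-based, `λ_i = lam (i−1)`), the sequence
`a_ℓ = (ℓ−r)/Σ_{i=1}^{ℓ} 1/λ_i` for `ℓ ∈ {r,…,d}` (with `a_r = 0`) is unimodal: there is
`ℓ₀ ∈ {r+1,…,d}` with `a` nondecreasing on `[r, ℓ₀]` and nonincreasing on `[ℓ₀, d]`.
Equivalently, `ζ_ℓ = Σ_{i=1}^{ℓ} 1/λ_i − (ℓ−r)/λ_{ℓ+1}` is nonincreasing on `{r,…,d−1}`,
positive at `ℓ = r`, and has the same sign as `a_{ℓ+1} − a_ℓ`. -/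
theorem stmt9 (d r : ℕ) (hr : 0 < r) (hrd : r < d)
    (lam : ℕ → ℝ) (hpos : ∀ i, i < d → 0 < lam i)
    (hmono : ∀ i j : ℕ, i ≤ j → j < d → lam j ≤ lam i) :
    let a : ℕ → ℝ := fun ℓ => ((ℓ : ℝ) - r) / ∑ i ∈ Finset.range ℓ, 1 / lam i
    let z : ℕ → ℝ := fun ℓ => (∑ i ∈ Finset.range ℓ, 1 / lam i) - ((ℓ : ℝ) - r) / lam ℓ
    (∃ ℓ₀ : ℕ, r < ℓ₀ ∧ ℓ₀ ≤ d ∧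
        (∀ ℓ ℓ' : ℕ, r ≤ ℓ → ℓ ≤ ℓ' → ℓ' ≤ ℓ₀ → a ℓ ≤ a ℓ') ∧
        (∀ ℓ ℓ' : ℕ, ℓ₀ ≤ ℓ → ℓ ≤ ℓ' → ℓ' ≤ d → a ℓ' ≤ a ℓ))
    ∧ (∀ ℓ : ℕ, r ≤ ℓ → ℓ + 1 ≤ d - 1 → z (ℓ + 1) ≤ z ℓ)
    ∧ 0 < z r
    ∧ (∀ ℓ : ℕ, r ≤ ℓ → ℓ ≤ d - 1 →
        ((0 ≤ z ℓ ↔ a ℓ ≤ a (ℓ + 1)) ∧ (z ℓ ≤ 0 ↔ a (ℓ + 1) ≤ a ℓ))) := by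
  classical
  intro a z
  have hd1 : 1 ≤ d := by omega
  have hSpos : ∀ ℓ, 1 ≤ ℓ → ℓ ≤ d → 0 < ∑ i ∈ Finset.range ℓ, 1 / lam i := by
    intro ℓ h1 h2
    apply Finset.sum_pos
    · intro i hi
      exact one_div_pos.mpr (hpos i (lt_of_lt_of_le (Finset.mem_range.mp hi) h2))
    · exact Finset.nonempty_range_iff.mpr (by omega)
  -- z single step
  have zstep : ∀ ℓ : ℕ, r ≤ ℓ → ℓ + 1 ≤ d - 1 → z (ℓ + 1) ≤ z ℓ := by
    intro ℓ h1 h2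
    have hl1 : 0 < lam ℓ := hpos ℓ (by omega)
    have hl2 : 0 < lam (ℓ + 1) := hpos (ℓ + 1) (by omega)
    have hle : lam (ℓ + 1) ≤ lam ℓ := hmono ℓ (ℓ + 1) (by omega) (by omega)
    have hinv : 1 / lam ℓ ≤ 1 / lam (ℓ + 1) := one_div_le_one_div_of_le hl2 hle
    have hcoef : (0 : ℝ) ≤ (ℓ : ℝ) + 1 - r := by
      have : (r : ℝ) ≤ ℓ := by exact_mod_cast h1
      linarith
    have hdiff : z ℓ - z (ℓ + 1) = ((ℓ : ℝ) + 1 - r) * (1 / lam (ℓ + 1) - 1 / lam ℓ) := by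
      simp only [z, Finset.sum_range_succ]
      push_cast
      field_simp
      ring
    have hm := mul_nonneg hcoef (sub_nonneg.mpr hinv)
    linarith [hdiff ▸ hm]
  -- key identity
  have key : ∀ ℓ : ℕ, r ≤ ℓ → ℓ ≤ d - 1 →
      a (ℓ + 1) - a ℓ = z ℓ /
        ((∑ i ∈ Finset.range ℓ, 1 / lam i) * (∑ i ∈ Finset.range (ℓ + 1), 1 / lam i)) := by
    intro ℓ h1 h2
    have hS1 := hSpos ℓ (by omega) (by omega)
    have hS2 := hSpos (ℓ + 1) (by omega) (by omega)
    have hl : 0 < lam ℓ := hpos ℓ (by omega)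
    have hS2' : 0 < (∑ i ∈ Finset.range ℓ, 1 / lam i) + 1 / lam ℓ := by
      rw [← Finset.sum_range_succ]; exact hS2
    simp only [a, z, Finset.sum_range_succ]
    push_cast
    field_simp
    ring
  have iffs : ∀ ℓ : ℕ, r ≤ ℓ → ℓ ≤ d - 1 →
      ((0 ≤ z ℓ ↔ a ℓ ≤ a (ℓ + 1)) ∧ (z ℓ ≤ 0 ↔ a (ℓ + 1) ≤ a ℓ)) := by
    intro ℓ h1 h2
    have hS1 := hSpos ℓ (by omega) (by omega)
    have hS2 := hSpos (ℓ + 1) (by omega) (by omega)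
    have hc : 0 < (∑ i ∈ Finset.range ℓ, 1 / lam i) *
        (∑ i ∈ Finset.range (ℓ + 1), 1 / lam i) := mul_pos hS1 hS2
    have h := key ℓ h1 h2
    constructor
    · have e1 : 0 ≤ z ℓ ↔ 0 ≤ z ℓ /
          ((∑ i ∈ Finset.range ℓ, 1 / lam i) * (∑ i ∈ Finset.range (ℓ + 1), 1 / lam i)) := by
        rw [le_div_iff₀ hc, zero_mul]
      exact e1.trans (by rw [← h]; exact sub_nonneg)
    · have e2 : z ℓ ≤ 0 ↔ z ℓ /
          ((∑ i ∈ Finset.range ℓ, 1 / lam i) * (∑ i ∈ Finset.range (ℓ + 1), 1 / lam i)) ≤ 0 := by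
        rw [div_le_iff₀ hc, zero_mul]
      exact e2.trans (by rw [← h]; exact sub_nonpos)
  -- z positive at r
  have hzr : 0 < z r := by
    have := hSpos r hr hrd.le
    simpa [z, sub_self] using this
  -- chain for z
  have zchain : ∀ ℓ ℓ' : ℕ, r ≤ ℓ → ℓ ≤ ℓ' → ℓ' ≤ d - 1 → z ℓ' ≤ z ℓ := by
    intro ℓ ℓ' h1 h2 h3
    induction ℓ', h2 using Nat.le_induction with
    | base => exact le_refl _
    | succ n hn ih =>
      have hn' : n ≤ d - 1 := by omega
      exact le_trans (zstep n (le_trans h1 hn) (by omega)) (ih hn')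
  -- pointwise a steps
  have aup : ∀ ℓ : ℕ, r ≤ ℓ → ℓ ≤ d - 1 → 0 ≤ z ℓ → a ℓ ≤ a (ℓ + 1) := by
    intro ℓ h1 h2 hz
    exact ((iffs ℓ h1 h2).1).mp hz
  have adown : ∀ ℓ : ℕ, r ≤ ℓ → ℓ ≤ d - 1 → z ℓ ≤ 0 → a (ℓ + 1) ≤ a ℓ := by
    intro ℓ h1 h2 hz
    exact ((iffs ℓ h1 h2).2).mp hz
  -- chain lemmas for a
  have chainUp : ∀ m : ℕ, (∀ ℓ : ℕ, r ≤ ℓ → ℓ < m → a ℓ ≤ a (ℓ + 1)) →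
      ∀ ℓ ℓ' : ℕ, r ≤ ℓ → ℓ ≤ ℓ' → ℓ' ≤ m → a ℓ ≤ a ℓ' := by
    intro m hstep ℓ ℓ' h1 h2 h3
    induction ℓ', h2 using Nat.le_induction with
    | base => exact le_refl _
    | succ n hn ih =>
      exact le_trans (ih (by omega)) (hstep n (le_trans h1 hn) (by omega))
  have chainDown : ∀ m : ℕ, (∀ ℓ : ℕ, m ≤ ℓ → ℓ < d → a (ℓ + 1) ≤ a ℓ) →
      ∀ ℓ ℓ' : ℕ, m ≤ ℓ → ℓ ≤ ℓ' → ℓ' ≤ d → a ℓ' ≤ a ℓ := by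
    intro m hstep ℓ ℓ' h1 h2 h3
    induction ℓ', h2 using Nat.le_induction with
    | base => exact le_refl _
    | succ n hn ih =>
      exact le_trans (hstep n (le_trans h1 hn) (by omega)) (ih (by omega))
  refine ⟨?_, zstep, hzr, iffs⟩
  by_cases hneg : ∃ k : ℕ, r ≤ k ∧ k ≤ d - 1 ∧ z k < 0
  · -- minimal such k
    have hk := Nat.find_spec hneg
    set k := Nat.find hneg with hkdef
    obtain ⟨hk1, hk2, hk3⟩ := hk
    have hkr : r < k := by
      rcases Nat.lt_or_ge r k with h | h
      · exact h
      · exfalso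
        have : k = r := le_antisymm (by omega) (by omega)
        rw [this] at hk3; linarith
    refine ⟨k, hkr, by omega, ?_, ?_⟩
    · apply chainUp k
      intro ℓ hℓ1 hℓ2
      apply aup ℓ hℓ1 (by omega)
      by_contra hcon
      push_neg at hcon
      exact absurd (Nat.find_min hneg hℓ2 ⟨hℓ1, by omega, hcon⟩) (by simp)
    · apply chainDown k
      intro ℓ hℓ1 hℓ2
      apply adown ℓ (by omega) (by omega)
      have := zchain k ℓ (by omega) hℓ1 (by omega)
      linarith
  · push_neg at hneg
    refine ⟨d, hrd, le_refl d, ?_, ?_⟩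
    · apply chainUp d
      intro ℓ hℓ1 hℓ2
      apply aup ℓ hℓ1 (by omega)
      linarith [hneg ℓ hℓ1 (by omega)]
    · apply chainDown d
      intro ℓ hℓ1 hℓ2
      omega
end

section
/- Suppose ℓ* ∈ {r+1, …, d} satisfies (ℓ* − r)/λ_{ℓ*} ≤ Σ_{i=1}^{ℓ*}(1/λ_i) and (ℓ* = d or Σ_{i=1}^{ℓ*}(1/λ_i) ≤ (ℓ* − r)/λ_{ℓ*+1}), where λ_i = λ_i(Σ^{1/2} S Σ^{1/2}). Let v_1, …, v_d be an orthonormal eigenbasis of Σ^{1/2} S Σ^{1/2} ordered by nonincreasing eigenvalue. Then there exist m ≤ ℓ* + 1 subsets I_1, …, I_m ⊆ {1, …, ℓ*}, each of cardinality r, and weights p_1, …, p_m ≥ 0 with Σ_j p_j = 1, such that with R_j ∈ ℝ^{d×r} whose columns are Σ^{-1/2} v_i for i ∈ I_j, each R_jᵀ Σ R_j is invertible and for every f ∈ F_S one has Σ_{j=1}^{m} p_j · regret(R_j, f) ≤ (ℓ* − r)/Σ_{i=1}^{ℓ*}(1/λ_i). -/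
open Matrix

private lemma decomp_base {ℓ : ℕ} (r : ℕ) (q : Fin ℓ → ℝ)
    (hbin : ∀ i, q i = 0 ∨ q i = 1) (hsum : ∑ i, q i = r) :
    ∃ I : Finset (Fin ℓ), I.card = r ∧ ∀ i, (if i ∈ I then (1:ℝ) else 0) = q i := by
  refine ⟨Finset.univ.filter (fun i => q i = 1), ?_, ?_⟩
  · have h : ((Finset.univ.filter (fun i => q i = 1)).card : ℝ) = (r : ℝ) := by
      rw [← hsum, Finset.card_filter]
      push_cast
      refine (Finset.sum_congr rfl fun i _ => ?_).symm
      rcases hbin i with h | h <;> simp [h]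
    exact_mod_cast h
  · intro i
    rcases hbin i with h | h <;> simp [h]

private lemma decomp (n : ℕ) : ∀ (ℓ r : ℕ), 0 < r → r ≤ ℓ →
    ∀ q : Fin ℓ → ℝ, (∀ i, 0 ≤ q i) → (∀ i, q i ≤ 1) → (∑ i, q i = r) →
    (Finset.univ.filter (fun i => 0 < q i ∧ q i < 1)).card ≤ n →
    ∃ m, m ≤ n + 1 ∧ ∃ (I : Fin m → Finset (Fin ℓ)) (p : Fin m → ℝ),
      (∀ j, (I j).card = r) ∧ (∀ j, 0 ≤ p j) ∧ (∑ j, p j = 1) ∧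
      (∀ i, ∑ j, p j * (if i ∈ I j then (1:ℝ) else 0) = q i) := by
  induction n with
  | zero =>
    intro ℓ r hr hrl q h0 h1 hsum hcard
    have hbin : ∀ i, q i = 0 ∨ q i = 1 := by
      intro i
      by_contra h
      push_neg at h
      have hi : i ∈ Finset.univ.filter (fun i => 0 < q i ∧ q i < 1) := by
        simp only [Finset.mem_filter, Finset.mem_univ, true_and]
        exact ⟨lt_of_le_of_ne (h0 i) (Ne.symm h.1), lt_of_le_of_ne (h1 i) h.2⟩
      have := Finset.card_pos.mpr ⟨i, hi⟩
      omega
    obtain ⟨A, hAcard, hAind⟩ := decomp_base r q hbin hsum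
    exact ⟨1, le_rfl, fun _ => A, fun _ => 1, fun _ => hAcard, fun _ => zero_le_one,
      by simp, fun i => by simpa using hAind i⟩
  | succ n ih =>
    intro ℓ r hr hrl q h0 h1 hsum hcard
    by_cases hF : (Finset.univ.filter (fun i => 0 < q i ∧ q i < 1)).Nonempty
    · -- main case
      obtain ⟨i₀, hi₀F⟩ := hF
      have hi₀F' : 0 < q i₀ ∧ q i₀ < 1 := by simpa using hi₀F
      have hlpos : 0 < ℓ := lt_of_lt_of_le hr hrl
      haveI : Nonempty (Fin ℓ) := ⟨⟨0, hlpos⟩⟩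
      have hune : (Finset.univ : Finset (Fin ℓ)).Nonempty := Finset.univ_nonempty
      have hsub : (Finset.univ.filter (fun i => q i = 1)) ⊆
          (Finset.univ.filter (fun i => 0 < q i)) := by
        intro i hi
        simp only [Finset.mem_filter, Finset.mem_univ, true_and] at hi ⊢
        rw [hi]; exact one_pos
      have hAone_le : (Finset.univ.filter (fun i => q i = 1)).card ≤ r := by
        have hreal : (((Finset.univ.filter (fun i => q i = 1)).card : ℝ)) ≤ (r : ℝ) := by
          have e1 : ∑ i ∈ Finset.univ.filter (fun i => q i = 1), q i
              = ((Finset.univ.filter (fun i => q i = 1)).card : ℝ) := by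
            rw [Finset.sum_congr rfl (fun i hi => by
              simp only [Finset.mem_filter] at hi
              exact hi.2)]
            simp
          have e2 : ∑ i ∈ Finset.univ.filter (fun i => q i = 1), q i ≤ ∑ i, q i :=
            Finset.sum_le_sum_of_subset_of_nonneg (Finset.subset_univ _)
              (fun i _ _ => h0 i)
          rw [hsum, e1] at e2
          exact e2
        exact_mod_cast hreal
      have hApos_ge : r ≤ (Finset.univ.filter (fun i => 0 < q i)).card := by
        have hreal : (r : ℝ) ≤ ((Finset.univ.filter (fun i => 0 < q i)).card : ℝ) := by
          have e1 : ∑ i ∈ Finset.univ.filter (fun i => 0 < q i), q i = ∑ i, q i :=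
            Finset.sum_filter_of_ne (fun i _ hne => lt_of_le_of_ne (h0 i) (Ne.symm hne))
          have e2 : ∑ i ∈ Finset.univ.filter (fun i => 0 < q i), q i
              ≤ ∑ i ∈ Finset.univ.filter (fun i => 0 < q i), (1:ℝ) :=
            Finset.sum_le_sum (fun i _ => h1 i)
          rw [Finset.sum_const, nsmul_eq_mul, mul_one] at e2
          rw [hsum] at e1
          linarith
        exact_mod_cast hreal
      obtain ⟨A, hA1, hA2, hAcard⟩ := Finset.exists_subsuperset_card_eq hsub hAone_le hApos_ge
      have hA1' : ∀ i, q i = 1 → i ∈ A := fun i hi => hA1 (by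
        simp only [Finset.mem_filter, Finset.mem_univ, true_and]
        exact hi)
      have hA2' : ∀ i ∈ A, 0 < q i := fun i hi => by
        have := hA2 hi
        simpa using this
      obtain ⟨ε, hεdef⟩ : ∃ ε : ℝ, ε = Finset.univ.inf' hune
          (fun i => if i ∈ A then q i else 1 - q i) := ⟨_, rfl⟩
      have hεle : ∀ i ∈ A, ε ≤ q i := by
        intro i hi
        have h : ε ≤ if i ∈ A then q i else 1 - q i :=
          hεdef ▸ Finset.inf'_le _ (Finset.mem_univ i)
        rwa [if_pos hi] at h
      have hεle' : ∀ i ∉ A, ε ≤ 1 - q i := by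
        intro i hi
        have h : ε ≤ if i ∈ A then q i else 1 - q i :=
          hεdef ▸ Finset.inf'_le _ (Finset.mem_univ i)
        rwa [if_neg hi] at h
      have hεpos : 0 < ε := by
        rw [hεdef, Finset.lt_inf'_iff]
        intro i _
        by_cases hiA : i ∈ A
        · rw [if_pos hiA]
          exact hA2' i hiA
        · rw [if_neg hiA]
          have hne : q i ≠ 1 := fun h => hiA (hA1' i h)
          have := lt_of_le_of_ne (h1 i) hne
          linarith
      have hεlt1 : ε < 1 := by
        have h : ε ≤ if i₀ ∈ A then q i₀ else 1 - q i₀ :=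
          hεdef ▸ Finset.inf'_le _ (Finset.mem_univ i₀)
        by_cases hiA : i₀ ∈ A
        · rw [if_pos hiA] at h; linarith [hi₀F'.2]
        · rw [if_neg hiA] at h; linarith [hi₀F'.1]
      have h1ε : 0 < 1 - ε := by linarith
      obtain ⟨istar, _, hstar⟩ := Finset.exists_mem_eq_inf' hune
          (fun i => if i ∈ A then q i else 1 - q i)
      rw [← hεdef] at hstar
      obtain ⟨q', hq'def⟩ : ∃ q' : Fin ℓ → ℝ,
          q' = fun i => (q i - if i ∈ A then ε else 0) / (1 - ε) := ⟨_, rfl⟩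
      have hq' : ∀ i, q' i = (q i - if i ∈ A then ε else 0) / (1 - ε) :=
        fun i => by rw [hq'def]
      have h0' : ∀ i, 0 ≤ q' i := by
        intro i
        rw [hq' i]
        apply div_nonneg _ (le_of_lt h1ε)
        by_cases hiA : i ∈ A
        · rw [if_pos hiA]; linarith [hεle i hiA]
        · rw [if_neg hiA]; linarith [h0 i]
      have h1' : ∀ i, q' i ≤ 1 := by
        intro i
        rw [hq' i, div_le_one h1ε]
        by_cases hiA : i ∈ A
        · rw [if_pos hiA]; linarith [h1 i]
        · rw [if_neg hiA]; linarith [hεle' i hiA]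
      have hsum' : ∑ i, q' i = r := by
        have hnum : ∑ i, (q i - if i ∈ A then ε else 0) = (r : ℝ) * (1 - ε) := by
          rw [Finset.sum_sub_distrib, hsum]
          rw [Finset.sum_ite_mem, Finset.univ_inter, Finset.sum_const, hAcard,
            nsmul_eq_mul]
          ring
        calc ∑ i, q' i = ∑ i, (q i - if i ∈ A then ε else 0) / (1 - ε) :=
              Finset.sum_congr rfl (fun i _ => hq' i)
          _ = (∑ i, (q i - if i ∈ A then ε else 0)) / (1 - ε) := by
              rw [← Finset.sum_div]
          _ = (r : ℝ) := by
              rw [hnum, mul_div_assoc, div_self (ne_of_gt h1ε), mul_one]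
      have hbinstay : ∀ i, (q i = 0 ∨ q i = 1) → (q' i = 0 ∨ q' i = 1) := by
        intro i hi
        rcases hi with h | h
        · left
          have hiA : i ∉ A := fun hiA => by linarith [hA2' i hiA]
          rw [hq' i, if_neg hiA, h]
          simp
        · right
          have hiA : i ∈ A := hA1' i h
          rw [hq' i, if_pos hiA, h, div_self (ne_of_gt h1ε)]
      have histarF : 0 < q istar ∧ q istar < 1 := by
        by_cases hiA : istar ∈ A
        · rw [if_pos hiA] at hstar
          exact ⟨by linarith, by linarith⟩
        · rw [if_neg hiA] at hstar
          exact ⟨by linarith, by linarith⟩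
      have hq'star : q' istar = 0 ∨ q' istar = 1 := by
        by_cases hiA : istar ∈ A
        · left
          rw [if_pos hiA] at hstar
          rw [hq' istar, if_pos hiA, ← hstar]
          simp
        · right
          rw [if_neg hiA] at hstar
          rw [hq' istar, if_neg hiA, sub_zero,
            show q istar = 1 - ε by linarith, div_self (ne_of_gt h1ε)]
      have hcard' : (Finset.univ.filter (fun i => 0 < q' i ∧ q' i < 1)).card ≤ n := by
        have hsubF : (Finset.univ.filter (fun i => 0 < q' i ∧ q' i < 1)) ⊆
            (Finset.univ.filter (fun i => 0 < q i ∧ q i < 1)).erase istar := by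
          intro i hi
          simp only [Finset.mem_filter, Finset.mem_univ, true_and] at hi
          rw [Finset.mem_erase]
          constructor
          · rintro rfl
            rcases hq'star with h | h <;> rw [h] at hi <;> [exact lt_irrefl _ hi.1;
              exact lt_irrefl _ hi.2]
          · simp only [Finset.mem_filter, Finset.mem_univ, true_and]
            by_contra h
            push_neg at h
            have hbi : q i = 0 ∨ q i = 1 := by
              rcases le_or_gt (q i) 0 with h' | h'
              · left; linarith [h0 i]
              · right; linarith [h h', h1 i]
            rcases hbinstay i hbi with h' | h' <;> rw [h'] at hi <;>
              [exact lt_irrefl _ hi.1; exact lt_irrefl _ hi.2]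
        have hstarmem : istar ∈ Finset.univ.filter (fun i => 0 < q i ∧ q i < 1) := by
          simp only [Finset.mem_filter, Finset.mem_univ, true_and]
          exact histarF
        calc (Finset.univ.filter (fun i => 0 < q' i ∧ q' i < 1)).card
            ≤ ((Finset.univ.filter (fun i => 0 < q i ∧ q i < 1)).erase istar).card :=
              Finset.card_le_card hsubF
          _ = (Finset.univ.filter (fun i => 0 < q i ∧ q i < 1)).card - 1 :=
              Finset.card_erase_of_mem hstarmem
          _ ≤ n := by
              have := Finset.card_pos.mpr ⟨istar, hstarmem⟩
              omega
      obtain ⟨m', hm', I', p', hI'card, hp'0, hp'sum, hmar'⟩ :=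
        ih ℓ r hr hrl q' h0' h1' hsum' hcard'
      refine ⟨m' + 1, by omega, Fin.cons A I', Fin.cons ε (fun j => (1 - ε) * p' j),
        ?_, ?_, ?_, ?_⟩
      · intro j
        induction j using Fin.cases with
        | zero => simpa using hAcard
        | succ j => simpa using hI'card j
      · intro j
        induction j using Fin.cases with
        | zero => simpa using le_of_lt hεpos
        | succ j => simpa using mul_nonneg (le_of_lt h1ε) (hp'0 j)
      · rw [Fin.sum_univ_succ]
        simp only [Fin.cons_zero, Fin.cons_succ]
        rw [← Finset.mul_sum, hp'sum]
        ring
      · intro i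
        rw [Fin.sum_univ_succ]
        simp only [Fin.cons_zero, Fin.cons_succ]
        have e : ∑ j : Fin m', (1 - ε) * p' j * (if i ∈ I' j then (1:ℝ) else 0)
            = (1 - ε) * q' i := by
          rw [← hmar' i, Finset.mul_sum]
          exact Finset.sum_congr rfl (fun j _ => by ring)
        rw [e, hq' i]
        by_cases hiA : i ∈ A
        · rw [if_pos hiA, if_pos hiA, mul_one,
            mul_comm ((1:ℝ) - ε) ((q i - ε) / (1 - ε)),
            div_mul_cancel₀ _ (ne_of_gt h1ε)]
          ring
        · rw [if_neg hiA, if_neg hiA, mul_zero, zero_add, sub_zero,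
            mul_comm ((1:ℝ) - ε) (q i / (1 - ε)),
            div_mul_cancel₀ _ (ne_of_gt h1ε)]
    · rw [Finset.not_nonempty_iff_eq_empty] at hF
      obtain ⟨m, hm, rest⟩ := ih ℓ r hr hrl q h0 h1 hsum (by rw [hF]; simp)
      exact ⟨m, by omega, rest⟩

private lemma dot_shift {n m : Type*} [Fintype n] [Fintype m] (A : Matrix n m ℝ)
    (v : n → ℝ) (w : m → ℝ) : v ⬝ᵥ (A *ᵥ w) = (Aᵀ *ᵥ v) ⬝ᵥ w := by
  rw [Matrix.dotProduct_mulVec, Matrix.mulVec_transpose]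

private lemma quad_eq {d κ : ℕ} (W : Matrix (Fin d) (Fin κ) ℝ) (f : Fin d → ℝ) :
    f ⬝ᵥ ((W * Wᵀ) *ᵥ f) = ∑ k, ((Wᵀ *ᵥ f) k)^2 := by
  rw [← Matrix.mulVec_mulVec, dot_shift]
  simp [dotProduct, sq]

private lemma quad_diag {d : ℕ} (A : Matrix (Fin d) (Fin d) ℝ) (w : Fin d → ℝ)
    (f : Fin d → ℝ) :
    f ⬝ᵥ ((A * Matrix.diagonal w * Aᵀ) *ᵥ f) = ∑ i, w i * ((Aᵀ *ᵥ f) i)^2 := by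
  rw [← Matrix.mulVec_mulVec, ← Matrix.mulVec_mulVec, dot_shift]
  simp [dotProduct, Matrix.mulVec_diagonal, sq]
  exact Finset.sum_congr rfl (fun i _ => by ring)

private lemma matrix_regret {d r : ℕ} (Sig Sigh V : Matrix (Fin d) (Fin d) ℝ)
    (hdet : IsUnit Sigh.det) (hSighT : Sighᵀ = Sigh) (hSigT : Sigᵀ = Sig)
    (hSighsq : Sigh * Sigh = Sig)
    (hV : V * Vᵀ = 1) (hVtV : Vᵀ * V = 1)
    (e : Fin r → Fin d) (he : Function.Injective e) :
    (((Sigh⁻¹ * V).submatrix id e)ᵀ * Sig * ((Sigh⁻¹ * V).submatrix id e)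
        = (1 : Matrix (Fin r) (Fin r) ℝ)) ∧
    ∀ f : Fin d → ℝ,
      f ⬝ᵥ ((Sig - Sig * ((Sigh⁻¹ * V).submatrix id e) *
          ((((Sigh⁻¹ * V).submatrix id e))ᵀ * Sig * ((Sigh⁻¹ * V).submatrix id e))⁻¹ *
          (((Sigh⁻¹ * V).submatrix id e))ᵀ * Sig) *ᵥ f)
        = (∑ i, ((Sigh *ᵥ f) i)^2) - ∑ k, ((Vᵀ *ᵥ (Sigh *ᵥ f)) (e k))^2 := by
  have hRsub : (Sigh⁻¹ * V).submatrix id e = Sigh⁻¹ * (V.submatrix id e) := by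
    ext i k
    simp [Matrix.mul_apply]
  set U := V.submatrix id e with hUdef
  have hUtU : Uᵀ * U = (1 : Matrix (Fin r) (Fin r) ℝ) := by
    ext k k'
    have h := congrFun (congrFun hVtV (e k)) (e k')
    simp only [Matrix.mul_apply, Matrix.transpose_apply, Matrix.one_apply] at h ⊢
    simp only [hUdef, Matrix.submatrix_apply, id_eq]
    rw [h]
    simp [he.eq_iff]
  have key : Sigh⁻¹ * Sig * Sigh⁻¹ = 1 := by
    rw [← hSighsq, ← Matrix.mul_assoc, Matrix.nonsing_inv_mul _ hdet, Matrix.one_mul,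
      Matrix.mul_nonsing_inv _ hdet]
  have hRSR : ((Sigh⁻¹ * V).submatrix id e)ᵀ * Sig * ((Sigh⁻¹ * V).submatrix id e) = 1 := by
    rw [hRsub, Matrix.transpose_mul, Matrix.transpose_nonsing_inv, hSighT]
    have hassoc : Uᵀ * Sigh⁻¹ * Sig * (Sigh⁻¹ * U) = Uᵀ * (Sigh⁻¹ * Sig * Sigh⁻¹) * U := by
      simp only [Matrix.mul_assoc]
    rw [hassoc, key, Matrix.mul_one, hUtU]
  have hSigR : Sig * ((Sigh⁻¹ * V).submatrix id e) = Sigh * U := by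
    rw [hRsub, ← hSighsq, Matrix.mul_assoc, ← Matrix.mul_assoc Sigh Sigh⁻¹ U,
      Matrix.mul_nonsing_inv _ hdet, Matrix.one_mul]
  have hRSig : ((Sigh⁻¹ * V).submatrix id e)ᵀ * Sig = Uᵀ * Sigh := by
    have h1 : ((Sigh⁻¹ * V).submatrix id e)ᵀ * Sig
        = (Sig * ((Sigh⁻¹ * V).submatrix id e))ᵀ := by
      rw [Matrix.transpose_mul, hSigT]
    rw [h1, hSigR, Matrix.transpose_mul, hSighT]
  refine ⟨hRSR, ?_⟩
  intro f
  have hM : Sig - Sig * ((Sigh⁻¹ * V).submatrix id e) *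
      ((((Sigh⁻¹ * V).submatrix id e))ᵀ * Sig * ((Sigh⁻¹ * V).submatrix id e))⁻¹ *
      (((Sigh⁻¹ * V).submatrix id e))ᵀ * Sig
      = Sigh * Sighᵀ - (Sigh * U) * (Sigh * U)ᵀ := by
    rw [hRSR, inv_one, Matrix.mul_one,
      Matrix.mul_assoc (Sig * ((Sigh⁻¹ * V).submatrix id e))
        ((Sigh⁻¹ * V).submatrix id e)ᵀ Sig,
      hSigR, hRSig]
    congr 1
    · rw [hSighT, hSighsq]
    · rw [Matrix.transpose_mul, hSighT]
  rw [hM, Matrix.sub_mulVec, dotProduct_sub, quad_eq Sigh f, quad_eq (Sigh * U) f]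
  congr 1
  · exact Finset.sum_congr rfl (fun i _ => by rw [hSighT])
  · refine Finset.sum_congr rfl (fun k _ => ?_)
    congr 1
    rw [Matrix.transpose_mul, hSighT, ← Matrix.mulVec_mulVec]
    simp [hUdef, Matrix.mulVec, dotProduct, Matrix.transpose_apply,
      Matrix.submatrix_apply]

/-- Suppose `ℓ* ∈ {r+1,…,d}` satisfies
`(ℓ*−r)/λ_{ℓ*} ≤ Σ_{i=1}^{ℓ*} 1/λ_i` and (`ℓ* = d` or
`Σ_{i=1}^{ℓ*} 1/λ_i ≤ (ℓ*−r)/λ_{ℓ*+1}`), where `lam : ℕ → ℝ` lists the eigenvalues of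
`Σ^{1/2} S Σ^{1/2}` in nonincreasing order (0-based, `λ_i = lam (i−1)`) with orthonormal
eigenbasis the columns of the orthogonal matrix `V`. Then there are `m ≤ ℓ* + 1` size-`r`
subsets of `{1,…,ℓ*}` (encoded by injective maps `e j : Fin r → Fin d` with values `< ℓ*`)
and weights `p_j ≥ 0` summing to `1` such that the representations `R_j` with columns
`Σ^{-1/2} v_i`, `i ∈ I_j`, have `R_jᵀ Σ R_j` invertible and for every `f` with
`fᵀ S⁻¹ f ≤ 1`, `Σ_j p_j · regret(R_j, f) ≤ (ℓ*−r)/Σ_{i=1}^{ℓ*} 1/λ_i`. -/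
theorem stmt12 (d r : ℕ) (hr : 0 < r) (hrd : r < d)
    (Sig S : Matrix (Fin d) (Fin d) ℝ) (hSig : Sig.PosDef) (hS : S.PosDef)
    (Sigh : Matrix (Fin d) (Fin d) ℝ) (hSigh : Sigh.PosDef) (hSighsq : Sigh * Sigh = Sig)
    (lam : ℕ → ℝ) (hmono : ∀ i j : ℕ, i ≤ j → j < d → lam j ≤ lam i)
    (V : Matrix (Fin d) (Fin d) ℝ) (hV : V * Vᵀ = 1)
    (hdiag : Sigh * S * Sigh = V * Matrix.diagonal (fun i : Fin d => lam i.val) * Vᵀ)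
    (lstar : ℕ) (hl1 : r < lstar) (hl2 : lstar ≤ d)
    (hcond1 : ((lstar : ℝ) - r) / lam (lstar - 1) ≤ ∑ i ∈ Finset.range lstar, 1 / lam i)
    (hcond2 : lstar = d ∨
      ∑ i ∈ Finset.range lstar, 1 / lam i ≤ ((lstar : ℝ) - r) / lam lstar) :
    ∃ (m : ℕ), m ≤ lstar + 1 ∧
    ∃ (e : Fin m → Fin r → Fin d) (p : Fin m → ℝ),
      (∀ j, Function.Injective (e j)) ∧
      (∀ j i, (e j i).val < lstar) ∧
      (∀ j, 0 ≤ p j) ∧ (∑ j, p j = 1) ∧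
      (let R : Fin m → Matrix (Fin d) (Fin r) ℝ :=
        fun j => (Sigh⁻¹ * V).submatrix id (e j)
       (∀ j, IsUnit ((R j)ᵀ * Sig * R j).det) ∧
       ∀ f : Fin d → ℝ, f ⬝ᵥ (S⁻¹ *ᵥ f) ≤ 1 →
        ∑ j, p j *
            (f ⬝ᵥ ((Sig - Sig * R j * ((R j)ᵀ * Sig * R j)⁻¹ * (R j)ᵀ * Sig) *ᵥ f))
          ≤ ((lstar : ℝ) - r) / ∑ i ∈ Finset.range lstar, 1 / lam i) := by
  -- basic invertibility and symmetry facts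
  have hdetSigh : IsUnit Sigh.det := isUnit_iff_ne_zero.mpr (ne_of_gt hSigh.det_pos)
  have hSighinv : Sigh * Sigh⁻¹ = 1 := Matrix.mul_nonsing_inv _ hdetSigh
  have hSighinv' : Sigh⁻¹ * Sigh = 1 := Matrix.nonsing_inv_mul _ hdetSigh
  have hSighT : Sighᵀ = Sigh := by
    have h := hSigh.isHermitian
    rwa [Matrix.IsHermitian, Matrix.conjTranspose_eq_transpose_of_trivial] at h
  have hSigT : Sigᵀ = Sig := by
    rw [← hSighsq, Matrix.transpose_mul, hSighT]
  have hVtV : Vᵀ * V = 1 := mul_eq_one_comm.mp hV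
  -- positivity of the eigenvalues
  have hdiag2 : Matrix.diagonal (fun i : Fin d => lam i.val)
      = Vᵀ * (Sigh * S * Sigh) * V := by
    rw [hdiag]
    have h : Vᵀ * (V * Matrix.diagonal (fun i : Fin d => lam i.val) * Vᵀ) * V
        = (Vᵀ * V) * Matrix.diagonal (fun i : Fin d => lam i.val) * (Vᵀ * V) := by
      simp only [Matrix.mul_assoc]
    rw [h, hVtV, Matrix.one_mul, Matrix.mul_one]
  have hlam : ∀ i : Fin d, 0 < lam i.val := by
    intro i
    have hentry := congrFun (congrFun hdiag2 i) i
    rw [Matrix.diagonal_apply_eq] at hentry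
    have hform1 : (Vᵀ * (Sigh * S * Sigh) * V) i i
        = (fun l => V l i) ⬝ᵥ ((Sigh * S * Sigh) *ᵥ (fun l => V l i)) := by
      rw [Matrix.mul_assoc]
      simp only [Matrix.mul_apply, Matrix.mulVec, dotProduct,
        Matrix.transpose_apply]
    have hform2 : (fun l => V l i) ⬝ᵥ ((Sigh * S * Sigh) *ᵥ (fun l => V l i))
        = (Sigh *ᵥ (fun l => V l i)) ⬝ᵥ (S *ᵥ (Sigh *ᵥ (fun l => V l i))) := by
      rw [← Matrix.mulVec_mulVec, ← Matrix.mulVec_mulVec, dot_shift, hSighT]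
    have hvne : Sigh *ᵥ (fun l => V l i) ≠ 0 := by
      intro hzero
      have hv0 : (fun l => V l i) = (0 : Fin d → ℝ) := by
        have h1 : Sigh⁻¹ *ᵥ (Sigh *ᵥ (fun l => V l i)) = (fun l => V l i) := by
          rw [Matrix.mulVec_mulVec, hSighinv', Matrix.one_mulVec]
        rw [hzero, Matrix.mulVec_zero] at h1
        exact h1.symm
      have h1 := congrFun (congrFun hVtV i) i
      simp only [Matrix.mul_apply, Matrix.transpose_apply, Matrix.one_apply_eq] at h1
      rw [Finset.sum_eq_zero (fun l _ => by rw [congrFun hv0 l]; simp)] at h1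
      exact one_ne_zero h1.symm
    have hpos := hS.dotProduct_mulVec_pos hvne
    rw [star_trivial] at hpos
    rw [hentry, hform1, hform2]
    exact hpos
  have hlamnat : ∀ i : ℕ, i < d → 0 < lam i := fun i hi => hlam ⟨i, hi⟩
  -- the weights
  have hSlpos : 0 < ∑ i ∈ Finset.range lstar, 1 / lam i :=
    Finset.sum_pos (fun i hi => div_pos one_pos
      (hlamnat i (lt_of_lt_of_le (Finset.mem_range.mp hi) hl2)))
      ⟨0, Finset.mem_range.mpr (by omega)⟩
  obtain ⟨T, hTdef⟩ : ∃ T : ℝ,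
      T = ((lstar : ℝ) - r) / ∑ i ∈ Finset.range lstar, 1 / lam i := ⟨_, rfl⟩
  have hlr : 0 < (lstar : ℝ) - r := by
    have h : (r : ℝ) < lstar := by exact_mod_cast hl1
    linarith
  have hTpos : 0 < T := hTdef ▸ div_pos hlr hSlpos
  have hTle : ∀ i : Fin lstar, T ≤ lam i.val := by
    intro i
    have hl1d : lstar - 1 < d := by omega
    have h2 : T ≤ lam (lstar - 1) := by
      rw [hTdef, div_le_iff₀ hSlpos, mul_comm]
      exact (div_le_iff₀ (hlamnat _ hl1d)).mp hcond1
    exact le_trans h2 (hmono i.val (lstar - 1) (by omega) hl1d)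
  obtain ⟨q, hqdef⟩ : ∃ q : Fin lstar → ℝ, q = fun i => 1 - T / lam i.val := ⟨_, rfl⟩
  have hq : ∀ i, q i = 1 - T / lam i.val := fun i => by rw [hqdef]
  have hq0 : ∀ i, 0 ≤ q i := by
    intro i
    rw [hq i]
    have hpos := hlamnat i.val (lt_of_lt_of_le i.isLt hl2)
    have h := (div_le_one hpos).mpr (hTle i)
    linarith
  have hq1 : ∀ i, q i ≤ 1 := by
    intro i
    rw [hq i]
    have hpos := hlamnat i.val (lt_of_lt_of_le i.isLt hl2)
    have h := le_of_lt (div_pos hTpos hpos)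
    linarith
  have hqsum : ∑ i, q i = (r : ℝ) := by
    calc ∑ i, q i = ∑ i : Fin lstar, (1 - T / lam i.val) :=
          Finset.sum_congr rfl (fun i _ => hq i)
      _ = (lstar : ℝ) - ∑ i : Fin lstar, T / lam i.val := by
          rw [Finset.sum_sub_distrib]
          simp
      _ = (lstar : ℝ) - T * ∑ i ∈ Finset.range lstar, 1 / lam i := by
          congr 1
          rw [Finset.mul_sum, ← Fin.sum_univ_eq_sum_range (fun i => T * (1 / lam i)) lstar]
          exact Finset.sum_congr rfl (fun i _ => by rw [mul_one_div])
      _ = (r : ℝ) := by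
          rw [hTdef, div_mul_cancel₀ _ (ne_of_gt hSlpos)]
          ring
  -- apply the decomposition lemma
  obtain ⟨m, hm, I, p, hIcard, hp0, hpsum, hmar⟩ :=
    decomp lstar lstar r hr (le_of_lt hl1) q hq0 hq1 hqsum
      (le_trans (Finset.card_filter_le _ _) (by simp))
  obtain ⟨e, hedef⟩ : ∃ e : Fin m → Fin r → Fin d,
      e = fun j k => Fin.castLE hl2 (((I j).orderIsoOfFin (hIcard j) k : Fin lstar)) :=
    ⟨_, rfl⟩
  have hinj : ∀ j, Function.Injective (e j) := by
    intro j a b hab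
    rw [hedef] at hab
    simp only at hab
    have h1 := Fin.castLE_injective hl2 hab
    exact ((I j).orderIsoOfFin (hIcard j)).injective (Subtype.coe_injective h1)
  have hbound : ∀ j i, (e j i).val < lstar := by
    intro j i
    rw [hedef]
    exact (((I j).orderIsoOfFin (hIcard j)) i : Fin lstar).isLt
  have hsum_e : ∀ (j : Fin m) (F : Fin d → ℝ), ∑ k, F (e j k)
      = ∑ x ∈ (I j).map (Fin.castLEEmb hl2), F x := by
    intro j F
    rw [Finset.sum_map, ← Finset.sum_coe_sort (I j)
      (fun x => F ((Fin.castLEEmb hl2) x)), hedef]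
    exact Fintype.sum_equiv ((I j).orderIsoOfFin (hIcard j)).toEquiv _ _ (fun k => rfl)
  have hmem : ∀ (j : Fin m) (i : Fin d) (h : i.val < lstar),
      (i ∈ (I j).map (Fin.castLEEmb hl2)) ↔ (⟨i.val, h⟩ : Fin lstar) ∈ I j := by
    intro j i h
    simp only [Finset.mem_map]
    constructor
    · rintro ⟨a, ha, rfl⟩
      exact ha
    · intro h'
      exact ⟨⟨i.val, h⟩, h', rfl⟩
  -- the inverse of S
  have hDD' : Matrix.diagonal (fun i : Fin d => lam i.val) *
      Matrix.diagonal (fun i : Fin d => (lam i.val)⁻¹) = 1 := by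
    rw [Matrix.diagonal_mul_diagonal]
    have h : (fun i : Fin d => lam i.val * (lam i.val)⁻¹) = fun _ => (1 : ℝ) :=
      funext fun i => mul_inv_cancel₀ (ne_of_gt (hlam i))
    rw [h, Matrix.diagonal_one]
  have h5 : (Sigh * S * Sigh) *
      (V * Matrix.diagonal (fun i : Fin d => (lam i.val)⁻¹) * Vᵀ) = 1 := by
    rw [hdiag]
    have hassoc : (V * Matrix.diagonal (fun i : Fin d => lam i.val) * Vᵀ) *
        (V * Matrix.diagonal (fun i : Fin d => (lam i.val)⁻¹) * Vᵀ)
        = V * (Matrix.diagonal (fun i : Fin d => lam i.val) *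
          ((Vᵀ * V) * (Matrix.diagonal (fun i : Fin d => (lam i.val)⁻¹) * Vᵀ))) := by
      simp only [Matrix.mul_assoc]
    rw [hassoc, hVtV, Matrix.one_mul,
      ← Matrix.mul_assoc (Matrix.diagonal (fun i : Fin d => lam i.val))
        (Matrix.diagonal (fun i : Fin d => (lam i.val)⁻¹)) Vᵀ,
      hDD', Matrix.one_mul, hV]
  have h5' : Sigh * (S * (Sigh * (V * Matrix.diagonal (fun i : Fin d => (lam i.val)⁻¹) * Vᵀ)))
      = 1 := by
    rw [← h5]
    simp only [Matrix.mul_assoc]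
  have h7 : S * (Sigh * (V * Matrix.diagonal (fun i : Fin d => (lam i.val)⁻¹) * Vᵀ))
      = Sigh⁻¹ := (Matrix.inv_eq_right_inv h5').symm
  have h6 : S * (Sigh * (V * Matrix.diagonal (fun i : Fin d => (lam i.val)⁻¹) * Vᵀ) * Sigh)
      = 1 := by
    calc S * (Sigh * (V * Matrix.diagonal (fun i : Fin d => (lam i.val)⁻¹) * Vᵀ) * Sigh)
        = (S * (Sigh * (V * Matrix.diagonal (fun i : Fin d => (lam i.val)⁻¹) * Vᵀ))) * Sigh := by
          simp only [Matrix.mul_assoc]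
      _ = Sigh⁻¹ * Sigh := by rw [h7]
      _ = 1 := hSighinv'
  have hSinv : S⁻¹ = Sigh * (V * Matrix.diagonal (fun i : Fin d => (lam i.val)⁻¹) * Vᵀ) * Sigh :=
    Matrix.inv_eq_right_inv h6
  have hconstr : ∀ f : Fin d → ℝ, f ⬝ᵥ (S⁻¹ *ᵥ f)
      = ∑ i, (lam i.val)⁻¹ * ((Vᵀ *ᵥ (Sigh *ᵥ f)) i)^2 := by
    intro f
    have hshape : Sigh * (V * Matrix.diagonal (fun i : Fin d => (lam i.val)⁻¹) * Vᵀ) * Sigh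
        = (Sigh * V) * Matrix.diagonal (fun i : Fin d => (lam i.val)⁻¹) * (Sigh * V)ᵀ := by
      rw [Matrix.transpose_mul, hSighT]
      simp only [Matrix.mul_assoc]
    rw [hSinv, hshape, quad_diag]
    refine Finset.sum_congr rfl (fun i _ => ?_)
    congr 1
    rw [Matrix.transpose_mul, hSighT, ← Matrix.mulVec_mulVec]
  have hortho : ∀ f : Fin d → ℝ, ∑ i, ((Sigh *ᵥ f) i)^2
      = ∑ i, ((Vᵀ *ᵥ (Sigh *ᵥ f)) i)^2 := by
    intro f
    have h := quad_eq V (Sigh *ᵥ f)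
    rw [hV, Matrix.one_mulVec] at h
    rw [← h]
    simp [dotProduct, sq]
  -- assemble
  refine ⟨m, hm, e, p, hinj, hbound, hp0, hpsum, ?_, ?_⟩
  · intro j
    rw [(matrix_regret Sig Sigh V hdetSigh hSighT hSigT hSighsq hV hVtV (e j) (hinj j)).1]
    simp
  · intro f hf
    obtain ⟨c, hcdef⟩ : ∃ c : Fin d → ℝ, c = Vᵀ *ᵥ (Sigh *ᵥ f) := ⟨_, rfl⟩
    have hcon : ∑ i, (lam i.val)⁻¹ * (c i)^2 ≤ 1 := by
      have h := hconstr f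
      rw [← hcdef] at h
      rw [h] at hf
      exact hf
    have hreg : ∀ j, f ⬝ᵥ ((Sig - Sig * ((Sigh⁻¹ * V).submatrix id (e j)) *
          ((((Sigh⁻¹ * V).submatrix id (e j)))ᵀ * Sig * ((Sigh⁻¹ * V).submatrix id (e j)))⁻¹ *
          (((Sigh⁻¹ * V).submatrix id (e j)))ᵀ * Sig) *ᵥ f)
        = ∑ i, ((c i)^2 - (if i ∈ (I j).map (Fin.castLEEmb hl2)
            then (c i)^2 else 0)) := by
      intro j
      rw [(matrix_regret Sig Sigh V hdetSigh hSighT hSigT hSighsq hV hVtV (e j) (hinj j)).2 f,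
        hortho f, ← hcdef, Finset.sum_sub_distrib]
      congr 1
      rw [hsum_e j (fun x => (c x)^2), Finset.sum_ite_mem, Finset.univ_inter]
    calc ∑ j, p j * (f ⬝ᵥ ((Sig - Sig * ((Sigh⁻¹ * V).submatrix id (e j)) *
            ((((Sigh⁻¹ * V).submatrix id (e j)))ᵀ * Sig * ((Sigh⁻¹ * V).submatrix id (e j)))⁻¹ *
            (((Sigh⁻¹ * V).submatrix id (e j)))ᵀ * Sig) *ᵥ f))
        = ∑ j, p j * ∑ i, ((c i)^2 - (if i ∈ (I j).map (Fin.castLEEmb hl2)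
            then (c i)^2 else 0)) :=
          Finset.sum_congr rfl (fun j _ => by rw [hreg j])
      _ = ∑ j, ∑ i, p j * ((c i)^2 - (if i ∈ (I j).map (Fin.castLEEmb hl2)
            then (c i)^2 else 0)) :=
          Finset.sum_congr rfl (fun j _ => Finset.mul_sum _ _ _)
      _ = ∑ i, ∑ j, p j * ((c i)^2 - (if i ∈ (I j).map (Fin.castLEEmb hl2)
            then (c i)^2 else 0)) := Finset.sum_comm
      _ = ∑ i, (1 - ∑ j, p j * (if i ∈ (I j).map (Fin.castLEEmb hl2)
            then (1:ℝ) else 0)) * (c i)^2 := by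
          refine Finset.sum_congr rfl (fun i _ => ?_)
          have h : ∀ j, p j * ((c i)^2 - (if i ∈ (I j).map (Fin.castLEEmb hl2)
              then (c i)^2 else 0))
              = p j * (c i)^2 - (p j * (if i ∈ (I j).map (Fin.castLEEmb hl2)
                then (1:ℝ) else 0)) * (c i)^2 := by
            intro j
            by_cases hmemb : i ∈ (I j).map (Fin.castLEEmb hl2) <;>
              simp [hmemb] <;> ring
          rw [Finset.sum_congr rfl (fun j _ => h j), Finset.sum_sub_distrib,
            ← Finset.sum_mul, ← Finset.sum_mul, hpsum]
          ring
      _ ≤ ∑ i, T * ((lam i.val)⁻¹ * (c i)^2) := by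
          refine Finset.sum_le_sum (fun i _ => ?_)
          by_cases h : i.val < lstar
          · have heq : ∑ j, p j * (if i ∈ (I j).map (Fin.castLEEmb hl2)
                then (1:ℝ) else 0) = q ⟨i.val, h⟩ := by
              rw [← hmar ⟨i.val, h⟩]
              refine Finset.sum_congr rfl (fun j _ => ?_)
              simp only [hmem j i h]
            rw [heq, hq ⟨i.val, h⟩]
            exact le_of_eq (by rw [div_eq_mul_inv]; ring)
          · have hBnot : ∀ j, i ∉ (I j).map (Fin.castLEEmb hl2) := by
              intro j hmemB
              obtain ⟨a, _, ha2⟩ := Finset.mem_map.mp hmemB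
              exact h (by rw [← ha2]; exact a.isLt)
            have hzero : ∑ j, p j * (if i ∈ (I j).map (Fin.castLEEmb hl2)
                then (1:ℝ) else 0) = 0 :=
              Finset.sum_eq_zero (fun j _ => by rw [if_neg (hBnot j), mul_zero])
            rw [hzero, sub_zero, one_mul]
            have hld : lstar < d := lt_of_le_of_lt (le_of_not_gt h) i.isLt
            have h2 : ∑ i ∈ Finset.range lstar, 1 / lam i ≤ ((lstar : ℝ) - r) / lam lstar := by
              rcases hcond2 with h2 | h2
              · exact absurd h2 (Nat.ne_of_lt hld)
              · exact h2
            have hll : 0 < lam lstar := hlamnat lstar hld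
            have hTi : lam i.val ≤ T := by
              have h1 : lam lstar ≤ T := by
                rw [hTdef, le_div_iff₀ hSlpos, mul_comm]
                exact (le_div_iff₀ hll).mp h2
              exact le_trans (hmono lstar i.val (le_of_not_gt h) i.isLt) h1
            have hposi := hlamnat i.val i.isLt
            have h1 : 1 ≤ T * (lam i.val)⁻¹ := by
              rw [← div_eq_mul_inv, le_div_iff₀ hposi, one_mul]
              exact hTi
            calc (c i)^2 = 1 * (c i)^2 := (one_mul _).symm
              _ ≤ (T * (lam i.val)⁻¹) * (c i)^2 :=
                  mul_le_mul_of_nonneg_right h1 (sq_nonneg _)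
              _ = T * ((lam i.val)⁻¹ * (c i)^2) := by ring
      _ = T * ∑ i, (lam i.val)⁻¹ * (c i)^2 := (Finset.mul_sum _ _ _).symm
      _ ≤ T * 1 := mul_le_mul_of_nonneg_left hcon (le_of_lt hTpos)
      _ = ((lstar : ℝ) - r) / ∑ i ∈ Finset.range lstar, 1 / lam i := by
          rw [mul_one, hTdef]
end

section
/- Suppose ℓ* ∈ {r+1, …, d} satisfies (ℓ* − r)/λ_{ℓ*} ≤ Σ_{i=1}^{ℓ*}(1/λ_i) and (ℓ* = d or Σ_{i=1}^{ℓ*}(1/λ_i) ≤ (ℓ* − r)/λ_{ℓ*+1}), where λ_i = λ_i(S^{1/2} Σ S^{1/2}). Let W be an orthogonal matrix whose columns are eigenvectors of S^{1/2} Σ S^{1/2} ordered by nonincreasing eigenvalue, and define the least favorable second-moment matrix M* = (Σ_{i=1}^{ℓ*} 1/λ_i)⁻¹ · W diag(1/λ_1, …, 1/λ_{ℓ*}, 0, …, 0) Wᵀ. Then Tr[M*] = 1, and for every R ∈ ℝ^{d×r} with Rᵀ Σ R invertible, Tr[(S^{1/2} Σ S^{1/2} − S^{1/2} Σ R (Rᵀ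 Σ R)⁻¹ Rᵀ Σ S^{1/2}) M*] ≥ (ℓ* − r)/Σ_{i=1}^{ℓ*}(1/λ_i). -/
open Matrix

lemma aux_trace_nonneg {n : Type*} [Fintype n] [DecidableEq n]
    {M : Matrix n n ℝ} (hM : M.PosSemidef) : 0 ≤ M.trace := by
  refine Finset.sum_nonneg fun i _ => ?_
  have h := hM.dotProduct_mulVec_nonneg (Pi.single i 1)
  simpa [dotProduct, mulVec, Pi.single_apply] using h

lemma aux_conj_posDef {n : Type*} [Fintype n] [DecidableEq n] {A B : Matrix n n ℝ}
    (hA : A.PosDef) (hB : IsUnit B.det) : (Bᵀ * A * B).PosDef := by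
  refine Matrix.PosDef.of_dotProduct_mulVec_pos ?_ fun x hx => ?_
  · have := Matrix.isHermitian_conjTranspose_mul_mul B hA.1
    simpa [conjTranspose_eq_transpose_of_trivial] using this
  · have hBx : B *ᵥ x ≠ 0 := fun h =>
      hx (by simpa [h] using ((Matrix.mulVec_injective_iff_isUnit.mpr
        ((Matrix.isUnit_iff_isUnit_det B).mpr hB)).eq_iff (a := x) (b := 0)).mp (by simp [h]))
    have h := hA.dotProduct_mulVec_pos hBx
    simp only [star_trivial] at h ⊢
    rwa [← Matrix.mulVec_mulVec, ← Matrix.mulVec_mulVec, Matrix.dotProduct_mulVec,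
      Matrix.vecMul_transpose]

/-- Suppose `ℓ* ∈ {r+1,…,d}` satisfies
`(ℓ*−r)/λ_{ℓ*} ≤ Σ_{i=1}^{ℓ*} 1/λ_i` and (`ℓ* = d` or
`Σ_{i=1}^{ℓ*} 1/λ_i ≤ (ℓ*−r)/λ_{ℓ*+1}`), where `lam : ℕ → ℝ` lists the eigenvalues of
`S^{1/2} Σ S^{1/2}` in nonincreasing order (0-based, `λ_i = lam (i−1)`) with eigenvectors
the columns of the orthogonal matrix `W`, and `Sh = S^{1/2}`. With the least favorable
second-moment matrix `M* = (Σ_{i=1}^{ℓ*} 1/λ_i)⁻¹ · W diag(1/λ_1,…,1/λ_{ℓ*},0,…,0) Wᵀ`,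
one has `Tr[M*] = 1`, and for every `R` with `Rᵀ Σ R` invertible,
`Tr[(S^{1/2} Σ S^{1/2} − S^{1/2} Σ R (Rᵀ Σ R)⁻¹ Rᵀ Σ S^{1/2}) M*]
  ≥ (ℓ*−r)/Σ_{i=1}^{ℓ*} 1/λ_i`. -/
theorem stmt13 (d r : ℕ) (hr : 0 < r) (hrd : r < d)
    (Sig S : Matrix (Fin d) (Fin d) ℝ) (hSig : Sig.PosDef) (hS : S.PosDef)
    (Sh : Matrix (Fin d) (Fin d) ℝ) (hSh : Sh.PosDef) (hShsq : Sh * Sh = S)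
    (lam : ℕ → ℝ) (hmono : ∀ i j : ℕ, i ≤ j → j < d → lam j ≤ lam i)
    (W : Matrix (Fin d) (Fin d) ℝ) (hW : W * Wᵀ = 1)
    (hdiag : Sh * Sig * Sh = W * Matrix.diagonal (fun i : Fin d => lam i.val) * Wᵀ)
    (lstar : ℕ) (hl1 : r < lstar) (hl2 : lstar ≤ d)
    (hcond1 : ((lstar : ℝ) - r) / lam (lstar - 1) ≤ ∑ i ∈ Finset.range lstar, 1 / lam i)
    (hcond2 : lstar = d ∨
      ∑ i ∈ Finset.range lstar, 1 / lam i ≤ ((lstar : ℝ) - r) / lam lstar) :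
    let Mstar : Matrix (Fin d) (Fin d) ℝ :=
      (∑ i ∈ Finset.range lstar, 1 / lam i)⁻¹ •
        (W * Matrix.diagonal (fun i : Fin d => if i.val < lstar then 1 / lam i.val else 0)
          * Wᵀ)
    Mstar.trace = 1 ∧
    ∀ R : Matrix (Fin d) (Fin r) ℝ, IsUnit (Rᵀ * Sig * R).det →
      ((lstar : ℝ) - r) / ∑ i ∈ Finset.range lstar, 1 / lam i ≤
        Matrix.trace
          ((Sh * Sig * Sh - Sh * Sig * R * (Rᵀ * Sig * R)⁻¹ * Rᵀ * Sig * Sh) * Mstar) := by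
  intro Mstar
  have hWtW : Wᵀ * W = 1 := mul_eq_one_comm.mp hW
  have hWdet : IsUnit W.det := Matrix.isUnit_det_of_right_inverse hW
  have hShT : Shᵀ = Sh := by
    have := hSh.1.eq
    rwa [conjTranspose_eq_transpose_of_trivial] at this
  have hSigT : Sigᵀ = Sig := by
    have := hSig.1.eq
    rwa [conjTranspose_eq_transpose_of_trivial] at this
  have hShdet : IsUnit Sh.det := hSh.det_pos.ne'.isUnit
  set c : ℝ := ∑ i ∈ Finset.range lstar, 1 / lam i with hcdef
  set D : Matrix (Fin d) (Fin d) ℝ :=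
    Matrix.diagonal (fun i : Fin d => if i.val < lstar then 1 / lam i.val else 0) with hDdef
  have hM : Mstar = (c : ℝ)⁻¹ • (W * D * Wᵀ) := rfl
  -- positivity of eigenvalues
  have hA : (Sh * Sig * Sh).PosDef := by
    have := aux_conj_posDef hSig hShdet
    rwa [hShT] at this
  have hLam : ∀ i : Fin d, 0 < lam i.val := by
    have hconj : ∀ X : Matrix (Fin d) (Fin d) ℝ, Wᵀ * (W * X * Wᵀ) * W = X := by
      intro X
      rw [Matrix.mul_assoc W X, ← Matrix.mul_assoc Wᵀ W, hWtW, one_mul,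
        Matrix.mul_assoc, hWtW, mul_one]
    have hdg : Matrix.diagonal (fun i : Fin d => lam i.val) = Wᵀ * (Sh * Sig * Sh) * W := by
      rw [hdiag]; exact (hconj _).symm
    have hpd : (Matrix.diagonal fun i : Fin d => lam i.val).PosDef := by
      rw [hdg]; exact aux_conj_posDef hA hWdet
    exact Matrix.posDef_diagonal_iff.mp hpd
  have hlam : ∀ i : ℕ, i < d → 0 < lam i := fun i hi => hLam ⟨i, hi⟩
  have hc : 0 < c := by
    refine Finset.sum_pos (fun i hi => ?_) ⟨0, Finset.mem_range.mpr (by omega)⟩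
    have := hlam i (by have := Finset.mem_range.mp hi; omega)
    positivity
  -- trace of D
  have htrD : D.trace = c := by
    rw [hDdef, Matrix.trace_diagonal]
    rw [Fin.sum_univ_eq_sum_range (fun i => if i < lstar then 1 / lam i else 0) d]
    rw [hcdef]
    rw [← Finset.sum_subset (Finset.range_subset_range.mpr hl2)
      (fun x _ hx => if_neg (fun h => hx (Finset.mem_range.mpr h)))]
    exact Finset.sum_congr rfl fun x hx => if_pos (Finset.mem_range.mp hx)
  have htrWDW : (W * D * Wᵀ).trace = c := by
    rw [trace_mul_cycle, hWtW, one_mul, htrD]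
  have hmulW : ∀ X Y : Matrix (Fin d) (Fin d) ℝ,
      (W * X * Wᵀ) * (W * Y * Wᵀ) = W * (X * Y) * Wᵀ := by
    intro X Y
    rw [Matrix.mul_assoc (W * X) Wᵀ (W * Y * Wᵀ), ← Matrix.mul_assoc Wᵀ (W * Y) Wᵀ,
      ← Matrix.mul_assoc Wᵀ W Y, hWtW, one_mul, ← Matrix.mul_assoc (W * X) Y Wᵀ,
      Matrix.mul_assoc W X Y]
  constructor
  · rw [hM, Matrix.trace_smul, htrWDW, smul_eq_mul, inv_mul_cancel₀ hc.ne']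
  · intro R hR
    set A := Sh * Sig * Sh with hAdef
    set U : Matrix (Fin d) (Fin r) ℝ := Sh⁻¹ * R with hUdef
    set G : Matrix (Fin d) (Fin d) ℝ :=
      W * Matrix.diagonal (fun i : Fin d => Real.sqrt (lam i.val)) * Wᵀ with hGdef
    clear_value A U G
    have hGT : Gᵀ = G := by
      rw [hGdef, transpose_mul, transpose_mul, transpose_transpose, diagonal_transpose,
        Matrix.mul_assoc]
    have hGG : G * G = A := by
      rw [hGdef, hmulW, diagonal_mul_diagonal, hdiag]
      have e : (fun i : Fin d => Real.sqrt (lam i.val) * Real.sqrt (lam i.val))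
          = fun i : Fin d => lam i.val := funext fun i => Real.mul_self_sqrt (hLam i).le
      rw [e]
    have hShiSh : Sh⁻¹ * Sh = 1 := Matrix.nonsing_inv_mul Sh hShdet
    have hShShi : Sh * Sh⁻¹ = 1 := Matrix.mul_nonsing_inv Sh hShdet
    have hAU : A * U = Sh * Sig * R := by
      rw [hAdef, hUdef, Matrix.mul_assoc (Sh * Sig) Sh (Sh⁻¹ * R),
        ← Matrix.mul_assoc Sh Sh⁻¹ R, hShShi, Matrix.one_mul]
    have hUT : Uᵀ = Rᵀ * Sh⁻¹ := by
      rw [hUdef, transpose_mul, Matrix.transpose_nonsing_inv, hShT]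
    have hUA : Uᵀ * A = Rᵀ * Sig * Sh := by
      rw [hUT, hAdef, ← Matrix.mul_assoc (Rᵀ * Sh⁻¹) (Sh * Sig) Sh,
        ← Matrix.mul_assoc (Rᵀ * Sh⁻¹) Sh Sig, Matrix.mul_assoc Rᵀ Sh⁻¹ Sh, hShiSh,
        Matrix.mul_one]
    set V := G * U with hVdef
    clear_value V
    have hVT : Vᵀ = Uᵀ * G := by rw [hVdef, transpose_mul, hGT]
    have hVV : Vᵀ * V = Rᵀ * Sig * R := by
      rw [hVT, hVdef, Matrix.mul_assoc Uᵀ G (G * U), ← Matrix.mul_assoc G G U, hGG,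
        ← Matrix.mul_assoc Uᵀ A U, hUA, hUdef, ← Matrix.mul_assoc (Rᵀ * Sig * Sh) Sh⁻¹ R,
        Matrix.mul_assoc (Rᵀ * Sig) Sh Sh⁻¹, hShShi, Matrix.mul_one]
    set B := (Rᵀ * Sig * R)⁻¹ with hBdef
    clear_value B
    have hSymm : (Rᵀ * Sig * R)ᵀ = Rᵀ * Sig * R := by
      rw [transpose_mul, transpose_mul, transpose_transpose, hSigT, ← Matrix.mul_assoc]
    have hBT : Bᵀ = B := by rw [hBdef, Matrix.transpose_nonsing_inv, hSymm]
    have h1B : (Vᵀ * V) * B = 1 := by rw [hVV, hBdef]; exact Matrix.mul_nonsing_inv _ hR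
    set P := V * B * Vᵀ with hPdef
    clear_value P
    have hPT : Pᵀ = P := by
      rw [hPdef, transpose_mul, transpose_mul, transpose_transpose, hBT, ← Matrix.mul_assoc]
    have hcancel : ∀ X : Matrix (Fin r) (Fin d) ℝ, Vᵀ * (V * (B * X)) = X := by
      intro X
      rw [← Matrix.mul_assoc Vᵀ V, ← Matrix.mul_assoc (Vᵀ * V) B, h1B, Matrix.one_mul]
    have hPP : P * P = P := by
      rw [hPdef]
      have e : (V * B * Vᵀ) * (V * B * Vᵀ) = V * (B * (Vᵀ * (V * (B * Vᵀ)))) := by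
        simp only [Matrix.mul_assoc]
      rw [e, hcancel, ← Matrix.mul_assoc]
    have htrP : P.trace = (r : ℝ) := by
      rw [hPdef, trace_mul_cycle, h1B, trace_one, Fintype.card_fin]
    set E : Matrix (Fin d) (Fin d) ℝ :=
      Matrix.diagonal (fun i : Fin d => if i.val < lstar then (1 : ℝ) else 0) with hEdef
    set Q := W * E * Wᵀ with hQdef
    clear_value E Q
    have hGMG : G * (W * D * Wᵀ) * G = Q := by
      rw [hGdef, hDdef, hQdef, hEdef, hmulW, hmulW, diagonal_mul_diagonal,
        diagonal_mul_diagonal]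
      have e : (fun i : Fin d =>
            Real.sqrt (lam i.val) * (if i.val < lstar then 1 / lam i.val else 0)
              * Real.sqrt (lam i.val))
          = fun i : Fin d => if i.val < lstar then (1 : ℝ) else 0 := by
        funext i
        by_cases h : i.val < lstar
        · simp only [if_pos h]
          rw [mul_comm (Real.sqrt (lam i.val)) (1 / lam i.val), mul_assoc,
            Real.mul_self_sqrt (hLam i).le, one_div, inv_mul_cancel₀ (hLam i).ne']
        · simp [h]
      rw [e]
    have htrA : (A * (W * D * Wᵀ)).trace = (lstar : ℝ) := by
      rw [hdiag, hDdef, hmulW, diagonal_mul_diagonal, trace_mul_cycle, hWtW, one_mul,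
        trace_diagonal]
      have e : (fun i : Fin d => lam i.val * (if i.val < lstar then 1 / lam i.val else 0))
          = fun i : Fin d => if i.val < lstar then (1 : ℝ) else 0 := by
        funext i
        by_cases h : i.val < lstar
        · simp only [if_pos h]
          rw [mul_one_div, div_self (hLam i).ne']
        · simp [h]
      rw [e]
      rw [Fin.sum_univ_eq_sum_range (fun i => if i < lstar then (1 : ℝ) else 0) d]
      rw [← Finset.sum_subset (Finset.range_subset_range.mpr hl2)
        (fun x _ hx => if_neg fun h => hx (Finset.mem_range.mpr h))]
      rw [Finset.sum_congr rfl (fun x hx => if_pos (Finset.mem_range.mp hx))]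
      simp
    have hPexpr : Sh * Sig * R * B * Rᵀ * Sig * Sh = G * P * G := by
      have hGV : G * V = Sh * Sig * R := by
        rw [hVdef, ← Matrix.mul_assoc, hGG, hAU]
      have hVG : Vᵀ * G = Rᵀ * Sig * Sh := by
        rw [hVT, Matrix.mul_assoc, hGG, hUA]
      rw [hPdef]
      have e : G * (V * B * Vᵀ) * G = (G * V) * (B * (Vᵀ * G)) := by
        simp only [Matrix.mul_assoc]
      rw [e, hGV, hVG]
      simp only [Matrix.mul_assoc]
    have htrPQeq : ((G * P * G) * (W * D * Wᵀ)).trace = (P * Q).trace := by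
      rw [Matrix.mul_assoc (G * P) G (W * D * Wᵀ), trace_mul_comm,
        ← Matrix.mul_assoc (G * (W * D * Wᵀ)) G P, hGMG, trace_mul_comm Q P]
    have h1Q : ((1 : Matrix (Fin d) (Fin d) ℝ) - Q).PosSemidef := by
      have heq : (1 : Matrix (Fin d) (Fin d) ℝ) - Q
          = W * (Matrix.diagonal
              (fun i : Fin d => if i.val < lstar then (0 : ℝ) else 1)) * Wᵀ := by
        have h1 : (1 : Matrix (Fin d) (Fin d) ℝ) = W * 1 * Wᵀ := by rw [mul_one, hW]
        rw [hQdef, hEdef]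
        nth_rewrite 1 [h1]
        rw [← Matrix.sub_mul, ← Matrix.mul_sub]
        have e : (1 : Matrix (Fin d) (Fin d) ℝ)
            - Matrix.diagonal (fun i : Fin d => if i.val < lstar then (1 : ℝ) else 0)
            = Matrix.diagonal (fun i : Fin d => if i.val < lstar then (0 : ℝ) else 1) := by
          ext i j
          by_cases hij : i = j
          · subst hij
            by_cases h : i.val < lstar <;>
              simp [Matrix.sub_apply, Matrix.one_apply_eq, Matrix.diagonal_apply_eq, h]
          · simp [Matrix.sub_apply, Matrix.one_apply_ne hij, Matrix.diagonal_apply_ne _ hij]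
        rw [e]
      rw [heq]
      have hpsd : (Matrix.diagonal fun i : Fin d =>
          if i.val < lstar then (0 : ℝ) else 1).PosSemidef :=
        Matrix.posSemidef_diagonal_iff.mpr fun i => by
          by_cases h : i.val < lstar <;> simp [h]
      have := hpsd.mul_mul_conjTranspose_same W
      rwa [conjTranspose_eq_transpose_of_trivial] at this
    have hP1QP : (P * (1 - Q) * P).PosSemidef := by
      have := h1Q.mul_mul_conjTranspose_same P
      rwa [conjTranspose_eq_transpose_of_trivial, hPT] at this
    have htrPQP_le : (P * Q * P).trace ≤ (r : ℝ) := by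
      have h0 := aux_trace_nonneg hP1QP
      have e : P * (1 - Q) * P = P * P - P * Q * P := by
        rw [Matrix.mul_sub, mul_one, Matrix.sub_mul]
      rw [e, hPP, trace_sub, htrP] at h0
      linarith
    have htrPQ2 : (P * Q).trace ≤ (r : ℝ) := by
      have e : (P * Q).trace = (P * Q * P).trace := by
        rw [trace_mul_cycle P Q P, hPP]
      rw [e]; exact htrPQP_le
    rw [hM, hPexpr]
    have key : ((A - G * P * G) * ((c : ℝ)⁻¹ • (W * D * Wᵀ))).trace
        = c⁻¹ * ((lstar : ℝ) - (P * Q).trace) := by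
      rw [Matrix.mul_smul, Matrix.trace_smul, Matrix.sub_mul, trace_sub, htrA, htrPQeq,
        smul_eq_mul]
    rw [key, div_eq_inv_mul]
    have hmul := mul_le_mul_of_nonneg_left
      (by linarith : (lstar : ℝ) - r ≤ (lstar : ℝ) - (P * Q).trace) (inv_nonneg.mpr hc.le)
    linarith
end

section
/- The pure minimax regret in the Hilbert space MSE setting equals λ_{r+1}: the infimum over all subspaces W ⊆ H with dim W ≤ r of the supremum over f ∈ F of inf_{w ∈ W} ‖f − w‖² equals λ_{r+1}. Moreover, the subspace W* = span{φ_1, …, φ_r} achieves sup_{f ∈ F} inf_{w ∈ W*} ‖f − w‖² = λ_{r+1}, and the supremum over F is attained at f* = √λ_{r+1} · φ_{r+1}. -/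
open scoped RealInnerProductSpace

lemma aux_inner_span {H : Type*} [NormedAddCommGroup H] [InnerProductSpace ℝ H]
    (x : H) (s : Set H) (hx : ∀ y ∈ s, ⟪x, y⟫ = 0) :
    ∀ w ∈ Submodule.span ℝ s, ⟪x, w⟫ = 0 := by
  intro w hw
  induction hw using Submodule.span_induction with
  | mem y hy => exact hx y hy
  | zero => simp
  | add a b _ _ ha hb => rw [inner_add_right, ha, hb, add_zero]
  | smul c a _ ha => rw [real_inner_smul_right, ha, mul_zero]

lemma aux_hasSum {H : Type*} [NormedAddCommGroup H] [InnerProductSpace ℝ H]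
    [CompleteSpace H] (phi : ℕ → H) (hphi : Orthonormal ℝ phi)
    (htot : (Submodule.span ℝ (Set.range phi)).topologicalClosure = ⊤) (f : H) :
    HasSum (fun j => ⟪f, phi j⟫ ^ 2) (‖f‖ ^ 2) := by
  have h := (HilbertBasis.mk hphi htot.ge).hasSum_inner_mul_inner f f
  rw [HilbertBasis.coe_mk] at h
  simpa [real_inner_comm, sq, real_inner_self_eq_norm_sq] using h

set_option maxHeartbeats 1000000
set_option synthInstance.maxHeartbeats 400000

/-- Hilbert-space MSE setting: `H` a real separable Hilbert space with
orthonormal basis `(φ_j)` (indexed 0-based by `ℕ`), `lam` a nonincreasing positive sequence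
tending to `0`, and `F = {f : Σ_j ⟨f, φ_j⟩²/λ_j ≤ 1}`. The infimum over subspaces `W` of
dimension `≤ r` of `sup_{f ∈ F} inf_{w ∈ W} ‖f − w‖²` equals `λ_{r+1}` (0-based: `lam r`);
the subspace `W* = span{φ_1,…,φ_r}` achieves it, and the supremum over `F` is attained at
`f* = √λ_{r+1} · φ_{r+1}`. -/
theorem stmt16 {H : Type*} [NormedAddCommGroup H] [InnerProductSpace ℝ H]
    [CompleteSpace H]
    (phi : ℕ → H) (hphi : Orthonormal ℝ phi)
    (htot : (Submodule.span ℝ (Set.range phi)).topologicalClosure = ⊤)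
    (lam : ℕ → ℝ) (hpos : ∀ j, 0 < lam j) (hmono : Antitone lam)
    (hlim : Filter.Tendsto lam Filter.atTop (nhds 0))
    (r : ℕ) (hr : 0 < r) :
    let F : Set H := { f | (Summable fun j => ⟪f, phi j⟫ ^ 2 / lam j) ∧
        (∑' j, ⟪f, phi j⟫ ^ 2 / lam j) ≤ 1 }
    let Wstar : Submodule ℝ H := Submodule.span ℝ (phi '' Set.Iio r)
    let fstar : H := Real.sqrt (lam r) • phi r
    (sInf { v : ℝ | ∃ W : Submodule ℝ H, Module.rank ℝ ↥W ≤ (r : Cardinal) ∧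
        v = sSup { u : ℝ | ∃ f ∈ F,
            u = sInf { t : ℝ | ∃ w ∈ W, t = ‖f - w‖ ^ 2 } } }
      = lam r)
    ∧ (sSup { u : ℝ | ∃ f ∈ F,
          u = sInf { t : ℝ | ∃ w ∈ Wstar, t = ‖f - w‖ ^ 2 } } = lam r)
    ∧ fstar ∈ F
    ∧ sInf { t : ℝ | ∃ w ∈ Wstar, t = ‖fstar - w‖ ^ 2 } = lam r := by
  intro F Wstar fstar
  have hFdef : ∀ f : H, f ∈ F ↔ (Summable fun j => ⟪f, phi j⟫ ^ 2 / lam j) ∧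
      (∑' j, ⟪f, phi j⟫ ^ 2 / lam j) ≤ 1 := fun f => Iff.rfl
  have hfstar : fstar = Real.sqrt (lam r) • phi r := rfl
  have hWstar : Wstar = Submodule.span ℝ (phi '' Set.Iio r) := rfl
  have hsq : Real.sqrt (lam r) ^ 2 = lam r := Real.sq_sqrt (hpos r).le
  -- coefficients of fstar
  have hcoef : ∀ j, ⟪fstar, phi j⟫ = if r = j then Real.sqrt (lam r) else 0 := by
    intro j
    rw [hfstar, real_inner_smul_left, orthonormal_iff_ite.mp hphi r j]
    by_cases h : r = j <;> simp [h]
  have hnormfstar : ‖fstar‖ ^ 2 = lam r := by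
    rw [hfstar, norm_smul, mul_pow, Real.norm_eq_abs, sq_abs, hsq, hphi.1 r, one_pow, mul_one]
  -- Part 3: fstar ∈ F
  have hfstarF : fstar ∈ F := by
    rw [hFdef]
    have hzero : ∀ j ∉ ({r} : Finset ℕ), ⟪fstar, phi j⟫ ^ 2 / lam j = 0 := by
      intro j hj
      simp only [Finset.mem_singleton] at hj
      rw [hcoef j, if_neg (fun h => hj h.symm)]
      simp
    refine ⟨summable_of_ne_finset_zero hzero, ?_⟩
    rw [tsum_eq_sum hzero, Finset.sum_singleton, hcoef r, if_pos rfl, hsq,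
      div_self (hpos r).ne']
  -- fstar orthogonal to Wstar
  have horthf : ∀ w ∈ Wstar, ⟪fstar, w⟫ = 0 := by
    rw [hWstar]
    refine aux_inner_span _ _ ?_
    rintro y ⟨j, hj, rfl⟩
    rw [hcoef j, if_neg (Set.mem_Iio.mp hj).ne']
  -- Part 4
  have hpart4 : IsLeast { t : ℝ | ∃ w ∈ Wstar, t = ‖fstar - w‖ ^ 2 } (lam r) := by
    constructor
    · exact ⟨0, Wstar.zero_mem, by rw [sub_zero, hnormfstar]⟩
    · rintro t ⟨w, hw, rfl⟩
      rw [norm_sub_sq_real, horthf w hw, hnormfstar]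
      nlinarith [sq_nonneg ‖w‖]
  -- Part 2 upper bound
  have hub2 : ∀ f ∈ F, sInf { t : ℝ | ∃ w ∈ Wstar, t = ‖f - w‖ ^ 2 } ≤ lam r := by
    intro f hf
    obtain ⟨hsumm, hle⟩ := (hFdef f).mp hf
    set c : ℕ → ℝ := fun j => ⟪f, phi j⟫ with hc
    set s : H := ∑ j ∈ Finset.range r, c j • phi j with hs
    have hsW : s ∈ Wstar := by
      rw [hWstar]
      exact Submodule.sum_mem _ fun j hj => Submodule.smul_mem _ _
        (Submodule.subset_span ⟨j, Finset.mem_range.mp hj, rfl⟩)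
    have hfs : ⟪f, s⟫ = ∑ j ∈ Finset.range r, c j ^ 2 := by
      rw [hs, inner_sum]
      exact Finset.sum_congr rfl fun j _ => by rw [real_inner_smul_right]; ring
    have hss : ‖s‖ ^ 2 = ∑ j ∈ Finset.range r, c j ^ 2 := by
      rw [← real_inner_self_eq_norm_sq, hs, sum_inner]
      refine Finset.sum_congr rfl fun j hj => ?_
      rw [real_inner_smul_left, ← hs, hphi.inner_right_sum c hj]
      ring
    have hparse := aux_hasSum phi hphi htot f
    have hsummc : Summable fun j => c j ^ 2 := hparse.summable
    have hresid : ‖f - s‖ ^ 2 = ∑' j, c (j + r) ^ 2 := by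
      have h1 : ∑ j ∈ Finset.range r, c j ^ 2 + ∑' j, c (j + r) ^ 2 = ∑' j, c j ^ 2 :=
        Summable.sum_add_tsum_nat_add r hsummc
      rw [hparse.tsum_eq] at h1
      rw [norm_sub_sq_real, hfs, hss]
      linarith
    have htail : ∑' j, c (j + r) ^ 2 ≤ lam r := by
      have hs1 : Summable fun j => c (j + r) ^ 2 := (summable_nat_add_iff r).mpr hsummc
      have hs0 : Summable fun j => c (j + r) ^ 2 / lam (j + r) := (summable_nat_add_iff r).mpr hsumm
      have hs2 : Summable fun j => lam r * (c (j + r) ^ 2 / lam (j + r)) := hs0.mul_left _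
      have hterm : ∀ j, c (j + r) ^ 2 ≤ lam r * (c (j + r) ^ 2 / lam (j + r)) := by
        intro j
        have h1 : lam (j + r) ≤ lam r := hmono (Nat.le_add_left r j)
        have h2 : 0 < lam (j + r) := hpos _
        calc c (j + r) ^ 2 = lam (j + r) * (c (j + r) ^ 2 / lam (j + r)) := by field_simp
          _ ≤ lam r * (c (j + r) ^ 2 / lam (j + r)) :=
            mul_le_mul_of_nonneg_right h1 (div_nonneg (sq_nonneg _) h2.le)
      calc ∑' j, c (j + r) ^ 2 ≤ ∑' j, lam r * (c (j + r) ^ 2 / lam (j + r)) :=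
            hs1.tsum_le_tsum hterm hs2
        _ = lam r * ∑' j, c (j + r) ^ 2 / lam (j + r) := tsum_mul_left
        _ ≤ lam r * 1 := by
            refine mul_le_mul_of_nonneg_left ?_ (hpos r).le
            have h5 : ∑ j ∈ Finset.range r, c j ^ 2 / lam j +
                ∑' j, c (j + r) ^ 2 / lam (j + r) = ∑' j, c j ^ 2 / lam j :=
              Summable.sum_add_tsum_nat_add r hsumm
            have h4 : 0 ≤ ∑ j ∈ Finset.range r, c j ^ 2 / lam j :=
              Finset.sum_nonneg fun j _ => div_nonneg (sq_nonneg _) (hpos j).le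
            linarith
        _ = lam r := mul_one _
    have hbdd : BddBelow { t : ℝ | ∃ w ∈ Wstar, t = ‖f - w‖ ^ 2 } :=
      ⟨0, by rintro t ⟨w, _, rfl⟩; positivity⟩
    exact (csInf_le hbdd ⟨s, hsW, rfl⟩).trans (hresid ▸ htail)
  -- Part 2
  have hpart2 : IsGreatest { u : ℝ | ∃ f ∈ F,
      u = sInf { t : ℝ | ∃ w ∈ Wstar, t = ‖f - w‖ ^ 2 } } (lam r) :=
    ⟨⟨fstar, hfstarF, hpart4.csInf_eq.symm⟩, by rintro u ⟨f, hf, rfl⟩; exact hub2 f hf⟩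
  -- generic norm bound on F
  have hnormF : ∀ f ∈ F, ‖f‖ ^ 2 ≤ lam 0 := by
    intro f hf
    obtain ⟨hsumm, hle⟩ := (hFdef f).mp hf
    have hparse := aux_hasSum phi hphi htot f
    have hterm : ∀ j, ⟪f, phi j⟫ ^ 2 ≤ lam 0 * (⟪f, phi j⟫ ^ 2 / lam j) := by
      intro j
      have h1 : lam j ≤ lam 0 := hmono (Nat.zero_le j)
      have h2 : 0 < lam j := hpos _
      calc ⟪f, phi j⟫ ^ 2 = lam j * (⟪f, phi j⟫ ^ 2 / lam j) := by field_simp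
        _ ≤ lam 0 * (⟪f, phi j⟫ ^ 2 / lam j) := mul_le_mul_of_nonneg_right h1 (div_nonneg (sq_nonneg _) h2.le)
    calc ‖f‖ ^ 2 = ∑' j, ⟪f, phi j⟫ ^ 2 := hparse.tsum_eq.symm
      _ ≤ ∑' j, lam 0 * (⟪f, phi j⟫ ^ 2 / lam j) :=
          hparse.summable.tsum_le_tsum hterm (hsumm.mul_left _)
      _ = lam 0 * ∑' j, ⟪f, phi j⟫ ^ 2 / lam j := tsum_mul_left
      _ ≤ lam 0 * 1 := mul_le_mul_of_nonneg_left hle (hpos 0).le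
      _ = lam 0 := mul_one _
  have hbddU : ∀ W : Submodule ℝ H, BddAbove { u : ℝ | ∃ f ∈ F,
      u = sInf { t : ℝ | ∃ w ∈ W, t = ‖f - w‖ ^ 2 } } := by
    intro W
    refine ⟨lam 0, ?_⟩
    rintro u ⟨f, hf, rfl⟩
    have hbdd : BddBelow { t : ℝ | ∃ w ∈ W, t = ‖f - w‖ ^ 2 } :=
      ⟨0, by rintro t ⟨w, _, rfl⟩; positivity⟩
    have h1 : sInf { t : ℝ | ∃ w ∈ W, t = ‖f - w‖ ^ 2 } ≤ ‖f - 0‖ ^ 2 :=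
      csInf_le hbdd ⟨0, W.zero_mem, rfl⟩
    rw [sub_zero] at h1
    exact h1.trans (hnormF f hf)
  -- Part 1 lower bound
  have hlb1 : ∀ W : Submodule ℝ H, Module.rank ℝ W ≤ (r : Cardinal) →
      lam r ≤ sSup { u : ℝ | ∃ f ∈ F,
        u = sInf { t : ℝ | ∃ w ∈ W, t = ‖f - w‖ ^ 2 } } := by
    intro W hW
    haveI : FiniteDimensional ℝ W :=
      Module.rank_lt_aleph0_iff.mp (hW.trans_lt (Cardinal.nat_lt_aleph0 r))
    set b : Fin (r + 1) → H := fun i => phi i with hb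
    have hbli : LinearIndependent ℝ b := hphi.linearIndependent.comp _ Fin.val_injective
    set V : Submodule ℝ H := Submodule.span ℝ (Set.range b) with hV
    have hfinV : Module.finrank ℝ V = r + 1 := by
      rw [finrank_span_eq_card hbli, Fintype.card_fin]
    set T : V →ₗ[ℝ] W := (W.orthogonalProjectionOnto).toLinearMap.comp V.subtype with hT
    have hker : LinearMap.ker T ≠ ⊥ := by
      intro hk
      have hinj := LinearMap.ker_eq_bot.mp hk
      have h1 := LinearMap.finrank_le_finrank_of_injective hinj
      have hWr : Module.finrank ℝ W ≤ r := Module.finrank_le_of_rank_le hW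
      omega
    obtain ⟨g0, hg0k, hg0ne⟩ := (Submodule.ne_bot_iff _).mp hker
    set g : H := (g0 : H) with hg
    have hgne : g ≠ 0 := fun h => hg0ne (Submodule.coe_eq_zero.mp h)
    have hgW : g ∈ Wᗮ := by
      refine Submodule.orthogonalProjectionOnto_eq_zero_iff.mp ?_
      exact LinearMap.mem_ker.mp hg0k
    have hgV : g ∈ V := g0.2
    have hgcoef : ∀ j, r < j → ⟪g, phi j⟫ = 0 := by
      intro j hj
      rw [real_inner_comm]
      refine aux_inner_span (phi j) _ ?_ g hgV
      rintro y ⟨i, rfl⟩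
      rw [hb, orthonormal_iff_ite.mp hphi j i, if_neg]
      have := i.isLt
      omega
    set k : ℝ := Real.sqrt (lam r) / ‖g‖ with hk
    set f : H := k • g with hf
    have hng : ‖g‖ ≠ 0 := norm_ne_zero_iff.mpr hgne
    have hnf : ‖f‖ ^ 2 = lam r := by
      rw [hf, norm_smul, mul_pow, Real.norm_eq_abs, sq_abs, hk, div_pow, hsq]
      field_simp
    have hcf0 : ∀ j, r < j → ⟪f, phi j⟫ = 0 := by
      intro j hj
      rw [hf, real_inner_smul_left, hgcoef j hj, mul_zero]
    have hparse := aux_hasSum phi hphi htot f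
    have hsumfin : ∑ j ∈ Finset.range (r + 1), ⟪f, phi j⟫ ^ 2 = lam r := by
      have h0 : ∀ j ∉ Finset.range (r + 1), ⟪f, phi j⟫ ^ 2 = 0 := by
        intro j hj
        rw [hcf0 j (by simp only [Finset.mem_range] at hj; omega)]
        ring
      rw [← tsum_eq_sum (L := SummationFilter.unconditional ℕ) h0, hparse.tsum_eq, hnf]
    have hzero : ∀ j ∉ Finset.range (r + 1), ⟪f, phi j⟫ ^ 2 / lam j = 0 := by
      intro j hj
      rw [hcf0 j (by simp only [Finset.mem_range] at hj; omega)]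
      simp
    have hfF : f ∈ F := by
      rw [hFdef]
      refine ⟨summable_of_ne_finset_zero hzero, ?_⟩
      rw [tsum_eq_sum hzero]
      have h2 : ∑ j ∈ Finset.range (r + 1), ⟪f, phi j⟫ ^ 2 / lam j ≤
          ∑ j ∈ Finset.range (r + 1), ⟪f, phi j⟫ ^ 2 / lam r := by
        refine Finset.sum_le_sum fun j hj => ?_
        exact div_le_div_of_nonneg_left (sq_nonneg _) (hpos r)
          (hmono (Nat.lt_succ_iff.mp (Finset.mem_range.mp hj)))
      rw [← Finset.sum_div, hsumfin, div_self (hpos r).ne'] at h2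
      exact h2
    have hdist : lam r ≤ sInf { t : ℝ | ∃ w ∈ W, t = ‖f - w‖ ^ 2 } := by
      refine le_csInf ⟨‖f - 0‖ ^ 2, 0, W.zero_mem, rfl⟩ ?_
      rintro t ⟨w, hw, rfl⟩
      have h0 : ⟪f, w⟫ = 0 := by
        rw [hf, real_inner_smul_left, (Submodule.mem_orthogonal' _ _).mp hgW w hw, mul_zero]
      rw [norm_sub_sq_real, h0, hnf]
      nlinarith [sq_nonneg ‖w‖]
    exact hdist.trans (le_csSup (hbddU W) ⟨f, hfF, rfl⟩)
  -- rank of Wstar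
  have hrankW : Module.rank ℝ Wstar ≤ (r : Cardinal) := by
    rw [hWstar]
    classical
    have h3 : phi '' Set.Iio r = ↑((Finset.Iio r).image phi) := by
      rw [Finset.coe_image, Finset.coe_Iio]
    rw [h3]
    refine (rank_span_le _).trans ?_
    refine le_trans (le_of_eq Cardinal.mk_coe_finset) ?_
    exact_mod_cast Finset.card_image_le.trans (le_of_eq (Nat.card_Iio r))
  refine ⟨?_, hpart2.csSup_eq, hfstarF, hpart4.csInf_eq⟩
  refine IsLeast.csInf_eq ⟨⟨Wstar, hrankW, hpart2.csSup_eq.symm⟩, ?_⟩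
  rintro v ⟨W, hW, rfl⟩
  exact hlb1 W hW
end
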